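/- arXiv:1102.0415 — 9 statements merged into one kernel-verified Lean document; each statement's English description precedes it below -/
import Mathlib

section
/- Let X and Y be real Banach spaces, L > 0, F : X ⇒ Y a multifunction and (x̄,ȳ) ∈ Gr F. Then the following are equivalent: (a) F is L-open at (x̄,ȳ); (b) F⁻¹ is L⁻¹-pseudocalm at (ȳ,x̄); (c) F is L⁻¹-metrically hemiregular at (x̄,ȳ). -/
open Metric Set Filter Topology

/-- `F` is `L`-open at `(xb, yb)`: there is `ε > 0` such that
`B(yb, ρL) ⊆ F(B(xb, ρ))` for every `ρ ∈ (0, ε)`. -/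
def IsOpenAtPt {X Y : Type*} [NormedAddCommGroup X] [NormedAddCommGroup Y]
    (F : X → Set Y) (xb : X) (yb : Y) (L : ℝ) : Prop :=
  ∃ ε > (0 : ℝ), ∀ ρ ∈ Set.Ioo (0 : ℝ) ε, ball yb (ρ * L) ⊆ ⋃ x ∈ ball xb ρ, F x

/-- `F` is `L`-pseudocalm at `(xb, yb)`: there is a neighborhood `U` of `xb` such that
`d(yb, F(x)) ≤ L‖x - xb‖` for every `x ∈ U` (with `d(·,∅) = ∞`). -/
def IsPseudocalmAt {X Y : Type*} [NormedAddCommGroup X] [NormedAddCommGroup Y]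
    (F : X → Set Y) (xb : X) (yb : Y) (L : ℝ) : Prop :=
  ∃ U ∈ 𝓝 xb, ∀ x ∈ U, EMetric.infEdist yb (F x) ≤ ENNReal.ofReal (L * ‖x - xb‖)

/-- `F` is `L`-metrically hemiregular at `(xb, yb)`: there is a neighborhood `V` of `yb`
such that `d(xb, F⁻¹(y)) ≤ L‖y - yb‖` for every `y ∈ V`. -/
def IsHemiregularAt {X Y : Type*} [NormedAddCommGroup X] [NormedAddCommGroup Y]
    (F : X → Set Y) (xb : X) (yb : Y) (L : ℝ) : Prop :=
  ∃ V ∈ 𝓝 yb, ∀ y ∈ V, EMetric.infEdist xb {x | y ∈ F x} ≤ ENNReal.ofReal (L * ‖y - yb‖)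

/-- for `L > 0` and `(xb, yb) ∈ Gr F`, the following are equivalent:
`F` is `L`-open at `(xb,yb)`; `F⁻¹` is `L⁻¹`-pseudocalm at `(yb,xb)`;
`F` is `L⁻¹`-metrically hemiregular at `(xb,yb)`. -/
theorem stmt0 {X Y : Type*} [NormedAddCommGroup X] [NormedSpace ℝ X] [CompleteSpace X]
    [NormedAddCommGroup Y] [NormedSpace ℝ Y] [CompleteSpace Y]
    (F : X → Set Y) (xb : X) (yb : Y) (L : ℝ) (hL : 0 < L) (hgr : yb ∈ F xb) :
    (IsOpenAtPt F xb yb L ↔ IsPseudocalmAt (fun y => {x | y ∈ F x}) yb xb L⁻¹) ∧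
    (IsOpenAtPt F xb yb L ↔ IsHemiregularAt F xb yb L⁻¹) := by
  have key : IsOpenAtPt F xb yb L ↔ IsHemiregularAt F xb yb L⁻¹ := by
    constructor
    · rintro ⟨ε, hε, h⟩
      refine ⟨ball yb (ε * L), ball_mem_nhds _ (by positivity), ?_⟩
      intro y hy
      rw [mem_ball, dist_eq_norm] at hy
      set r := ‖y - yb‖ with hr
      have hr0 : 0 ≤ r := norm_nonneg _
      have hlt : L⁻¹ * r < ε := by
        have h1 := mul_lt_mul_of_pos_left hy (inv_pos.mpr hL)
        have h2 : L⁻¹ * (ε * L) = ε := by field_simp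
        linarith
      refine ENNReal.le_of_forall_pos_le_add ?_
      intro δ hδ _
      have hmin : 0 < min (δ : ℝ) ((ε - L⁻¹ * r) / 2) := lt_min hδ (by linarith)
      obtain ⟨ρ, hρ1, hρ2, hρle⟩ :
          ∃ ρ, L⁻¹ * r < ρ ∧ ρ < ε ∧ ρ ≤ L⁻¹ * r + (δ : ℝ) := by
        refine ⟨L⁻¹ * r + min (δ : ℝ) ((ε - L⁻¹ * r) / 2), by linarith, ?_, ?_⟩
        · have := min_le_right (δ : ℝ) ((ε - L⁻¹ * r) / 2); linarith
        · have := min_le_left (δ : ℝ) ((ε - L⁻¹ * r) / 2); linarith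
      have hρ0 : 0 < ρ := lt_of_le_of_lt (by positivity) hρ1
      have hy' : y ∈ ball yb (ρ * L) := by
        rw [mem_ball, dist_eq_norm, ← hr]
        have h3 := mul_lt_mul_of_pos_left hρ1 hL
        have h4 : L * (L⁻¹ * r) = r := by field_simp
        have h5 : L * ρ = ρ * L := mul_comm _ _
        linarith
      obtain ⟨x, hx, hxF⟩ := mem_iUnion₂.mp (h ρ ⟨hρ0, hρ2⟩ hy')
      have hd : EMetric.infEdist xb {x | y ∈ F x} ≤ ENNReal.ofReal ρ := by
        refine le_trans (EMetric.infEdist_le_edist_of_mem hxF) ?_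
        rw [edist_dist]
        exact ENNReal.ofReal_le_ofReal (le_of_lt (by rwa [dist_comm, ← mem_ball]))
      refine le_trans hd ?_
      calc ENNReal.ofReal ρ ≤ ENNReal.ofReal (L⁻¹ * r + (δ : ℝ)) :=
            ENNReal.ofReal_le_ofReal hρle
        _ ≤ ENNReal.ofReal (L⁻¹ * r) + ENNReal.ofReal (δ : ℝ) := ENNReal.ofReal_add_le
        _ = ENNReal.ofReal (L⁻¹ * r) + δ := by rw [ENNReal.ofReal_coe_nnreal]
    · rintro ⟨V, hV, h⟩
      obtain ⟨δ, hδ, hball⟩ := Metric.mem_nhds_iff.mp hV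
      refine ⟨δ / L, by positivity, ?_⟩
      rintro ρ ⟨hρ0, hρε⟩ y hy
      rw [mem_ball, dist_eq_norm] at hy
      have hρLδ : ρ * L < δ := by
        have h1 := mul_lt_mul_of_pos_right hρε hL
        have h2 : δ / L * L = δ := by field_simp
        linarith
      have hyV : y ∈ V := hball (by rw [mem_ball, dist_eq_norm]; linarith)
      have hlt : EMetric.infEdist xb {x | y ∈ F x} < ENNReal.ofReal ρ := by
        refine lt_of_le_of_lt (h y hyV) ?_
        rw [ENNReal.ofReal_lt_ofReal_iff hρ0]
        have h1 := mul_lt_mul_of_pos_left hy (inv_pos.mpr hL)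
        have h2 : L⁻¹ * (ρ * L) = ρ := by field_simp
        linarith
      obtain ⟨x, hxF, hxd⟩ := EMetric.infEdist_lt_iff.mp hlt
      rw [edist_dist, ENNReal.ofReal_lt_ofReal_iff hρ0] at hxd
      exact mem_iUnion₂.mpr ⟨x, by rwa [mem_ball, dist_comm], hxF⟩
  exact ⟨key, key⟩
end

section
/- Let X and Y be real Banach spaces and let F : X ⇒ Y and G : Y ⇒ X be multifunctions such that Gr F and Gr G are locally closed. Suppose Dom(F − G⁻¹) and Dom(G − F⁻¹) are nonempty and let L > 0 and M > 0 satisfy LM > 1. If F is L-open at every point of its graph and G is M-open at every point of its graph, then F − G⁻¹ is (L − M⁻¹)-open at every point of its graph and G − F⁻¹ is (M − L⁻¹)-open at every point of its graph. -/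
open Metric Set Filter Topology

/-- A set is locally closed if every of its points has a neighborhood `W` such that
`S ∩ cl W` is closed. -/
def LocallyClosedSet {α : Type*} [TopologicalSpace α] (S : Set α) : Prop :=
  ∀ a ∈ S, ∃ W ∈ 𝓝 a, IsClosed (S ∩ closure W)

/-- The difference multifunction `F - G⁻¹ : X ⇒ Y`,
`(F - G⁻¹)(x) = {y - z : y ∈ F(x), z ∈ G⁻¹(x)}`. -/
def mdiff {X Y : Type*} [SubtractionMonoid Y] (F : X → Set Y) (G : Y → Set X) :
    X → Set Y :=
  fun x => {w | ∃ y ∈ F x, ∃ z, x ∈ G z ∧ w = y - z}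

private lemma arK (L M : ℝ) (hM : 0 < M) (hLM : 1 < L * M) : 0 < L - M⁻¹ := by
  have hMi : M⁻¹ * M = 1 := inv_mul_cancel₀ hM.ne'
  have h : 0 < M⁻¹ := inv_pos.2 hM
  nlinarith

private lemma ars₀ (c : ℝ) (hc : 1 < c) : 0 < 1 - c⁻¹ := by
  have h0 : (0:ℝ) < c := by linarith
  have h1 : c⁻¹ * c = 1 := inv_mul_cancel₀ h0.ne'
  have h2 : 0 < c⁻¹ := inv_pos.2 h0
  nlinarith

private lemma arsq (c δ : ℝ) (hc : 1 < c) (hδ : 0 ≤ δ) (hδ1 : δ ≤ 1)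
    (h6 : 3*δ ≤ (c-1)/2) : (1+δ)^2 ≤ c := by nlinarith

private lemma arμ (c δ : ℝ) (hc : 1 < c) (hδ : 0 ≤ δ) (hδ1 : δ ≤ 1)
    (h6 : 3*δ ≤ (c-1)/2) : (1 - c⁻¹)/2 ≤ 1 - (1+δ)^2/c := by
  have h0 : (0:ℝ) < c := by linarith
  have h1 : c⁻¹ * c = 1 := inv_mul_cancel₀ h0.ne'
  have h2 : 0 < c⁻¹ := inv_pos.2 h0
  have h3 : (1+δ)^2 ≤ (c+1)/2 := by nlinarith
  have h4 : (1+δ)^2 * c⁻¹ ≤ (c+1)/2 * c⁻¹ := mul_le_mul_of_nonneg_right h3 h2.le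
  rw [div_eq_mul_inv, div_eq_mul_inv]
  nlinarith

private lemma armain (K ρ φ δ Mi : ℝ) (hMi : 0 < Mi) (hρ : 0 < ρ) (hφ : 0 < φ)
    (hδ0 : 0 < δ) (hδ1 : δ ≤ 1) (hnum : δ*(φ + 3*ρ*Mi) ≤ (ρ*K - φ)/2)
    (hφK : φ < ρ*K) : (1+δ)*φ < ρ*(K + Mi - (1+δ)^2*Mi) := by
  have h1 : δ*(2+δ) ≤ 3*δ := by nlinarith
  have h2 : δ*(2+δ)*(ρ*Mi) ≤ 3*δ*(ρ*Mi) :=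
    mul_le_mul_of_nonneg_right h1 (mul_pos hρ hMi).le
  nlinarith

private lemma arsig (c P τ e : ℝ) (hc : 0 < c) (hP : 0 < P) (he : 0 < e)
    (hτ : 0 < τ) (h : τ ≤ c*e/(2*P)) : τ*P/c < e := by
  rw [div_lt_iff₀ hc]
  rw [le_div_iff₀ (by positivity)] at h
  nlinarith

set_option maxHeartbeats 2000000 in
lemma key {X Y : Type*} [NormedAddCommGroup X] [NormedSpace ℝ X] [CompleteSpace X]
    [NormedAddCommGroup Y] [NormedSpace ℝ Y] [CompleteSpace Y]
    (F : X → Set Y) (G : Y → Set X)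
    (hFcl : LocallyClosedSet {p : X × Y | p.2 ∈ F p.1})
    (hGcl : LocallyClosedSet {p : Y × X | p.2 ∈ G p.1})
    (L M : ℝ) (hL : 0 < L) (hM : 0 < M) (hLM : 1 < L * M)
    (hFopen : ∀ x y, y ∈ F x → IsOpenAtPt F x y L)
    (hGopen : ∀ y x, x ∈ G y → IsOpenAtPt G y x M) :
    ∀ x w, w ∈ mdiff F G x → IsOpenAtPt (mdiff F G) x w (L - M⁻¹) := by
  intro xb w hw
  obtain ⟨yb, hyb, zb, hzb, rfl⟩ := hw
  -- local closedness neighborhoods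
  obtain ⟨W₁, hW₁n, hW₁c⟩ := hFcl (xb, yb) hyb
  obtain ⟨W₂, hW₂n, hW₂c⟩ := hGcl (zb, xb) hzb
  obtain ⟨r₁, hr₁, hball₁⟩ := Metric.nhds_basis_closedBall.mem_iff.1 hW₁n
  obtain ⟨r₂, hr₂, hball₂⟩ := Metric.nhds_basis_closedBall.mem_iff.1 hW₂n
  set r : ℝ := min r₁ r₂ with hr_def
  have hrr₁ : r ≤ r₁ := min_le_left _ _
  have hrr₂ : r ≤ r₂ := min_le_right _ _
  have hr : 0 < r := lt_min hr₁ hr₂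
  -- basic constants
  have hLM0 : (0:ℝ) < L * M := mul_pos hL hM
  have hMipos : 0 < M⁻¹ := inv_pos.2 hM
  have hK : 0 < L - M⁻¹ := arK L M hM hLM
  set K : ℝ := L - M⁻¹ with hK_def
  set s₀ : ℝ := 1 - (L*M)⁻¹ with hs₀_def
  have hs₀ : 0 < s₀ := ars₀ _ hLM
  set δ₀ : ℝ := min 1 ((L*M - 1)/6) with hδ₀_def
  have hδ₀ : 0 < δ₀ := lt_min one_pos (by linarith)
  have hδ₀1 : δ₀ ≤ 1 := min_le_left _ _
  set B : ℝ := 2/s₀ with hB_def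
  have hB : 0 < B := by positivity
  set A : ℝ := 4/(L*s₀) with hA_def
  have hA : 0 < A := by positivity
  set ε : ℝ := r/(K*(A+B)+1) with hε_def
  have hεpos : 0 < ε := by positivity
  have hεr : ε < r := by
    rw [hε_def, div_lt_iff₀ (by positivity)]
    have h1 : 0 < K*(A+B) := mul_pos hK (by positivity)
    have h2 : r*1 < r*(K*(A+B)+1) := mul_lt_mul_of_pos_left (by linarith) hr
    linarith
  refine ⟨ε, hεpos, ?_⟩
  rintro ρ ⟨hρ0, hρε⟩ w' hw'
  rw [mem_ball, dist_eq_norm] at hw'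
  have hρr : ρ < r := hρε.trans hεr
  have hbudget : ρ * K * (A + B) < r := by
    have h1 : ρ * (K*(A+B)+1) < r := by
      calc ρ * (K*(A+B)+1) < ε * (K*(A+B)+1) :=
            mul_lt_mul_of_pos_right hρε (by positivity)
        _ = r := by rw [hε_def]; field_simp
    linarith
  set φ₀ : ℝ := ‖w' - (yb - zb)‖ with hφ₀_def
  have hφ₀K : φ₀ < ρ * K := hw'
  by_cases h0 : φ₀ = 0
  · have hw'eq : w' = yb - zb := sub_eq_zero.1 (norm_eq_zero.1 h0)
    exact mem_iUnion₂.2 ⟨xb, mem_ball_self hρ0, yb, hyb, zb, hzb, hw'eq⟩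
  have hφ₀pos : 0 < φ₀ := lt_of_le_of_ne (norm_nonneg _) (Ne.symm h0)
  -- choose δ
  set δ : ℝ := min δ₀ ((ρ*K - φ₀)/(2*(φ₀ + 3*ρ*M⁻¹))) with hδ_def
  have hδpos : 0 < δ := lt_min hδ₀ (div_pos (by linarith) (by positivity))
  have hδδ₀ : δ ≤ δ₀ := min_le_left _ _
  have hδ1 : δ ≤ 1 := hδδ₀.trans hδ₀1
  have hδ6 : 3*δ ≤ (L*M-1)/2 := by
    have h1 : δ ≤ (L*M-1)/6 := hδδ₀.trans (min_le_right _ _)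
    linarith
  set μ : ℝ := 1 - (1+δ)^2/(L*M) with hμ_def
  have hsq : (1+δ)^2 ≤ L*M := arsq _ _ hLM hδpos.le hδ1 hδ6
  have hμs : s₀/2 ≤ μ := arμ _ _ hLM hδpos.le hδ1 hδ6
  have hμpos : 0 < μ := lt_of_lt_of_le (by positivity) hμs
  have hBμpre : s₀ ≤ 2*(1 - (1+δ)^2/(L*M)) := by linarith
  set a : ℝ := (1+δ)/(L*μ) with ha_def
  have hapos : 0 < a := by positivity
  have haφ₀ : a * φ₀ < ρ := by
    have hδnum : δ * (φ₀ + 3*ρ*M⁻¹) ≤ (ρ*K - φ₀)/2 := by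
      have h1 : δ ≤ (ρ*K - φ₀)/(2*(φ₀ + 3*ρ*M⁻¹)) := min_le_right _ _
      rw [le_div_iff₀ (by positivity)] at h1
      linarith
    have hmain : (1+δ) * φ₀ < ρ*(K + M⁻¹ - (1+δ)^2*M⁻¹) :=
      armain K ρ φ₀ δ M⁻¹ hMipos hρ0 hφ₀pos hδpos hδ1 hδnum hφ₀K
    have hLμ : L*μ = K + M⁻¹ - (1+δ)^2*M⁻¹ := by
      rw [hμ_def, hK_def]
      field_simp
      ring
    rw [ha_def, div_mul_eq_mul_div, div_lt_iff₀ (by positivity)]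
    rw [hLμ]
    linarith
  -- the iteration machinery
  set base : X × Y × Y := (xb, yb, zb) with hbase_def
  set φ : X × Y × Y → ℝ := fun p => ‖w' - (p.2.1 - p.2.2)‖ with hφ_def
  have hφ0 : ∀ p, 0 ≤ φ p := fun p => norm_nonneg _
  have hφbase : φ base = φ₀ := rfl
  set lp : X × Y × Y → X × Y × Y → Prop := fun p q =>
    φ q ≤ φ p ∧ ‖q.1 - p.1‖ ≤ a * (φ p - φ q) ∧ ‖q.2.1 - p.2.1‖ ≤ B * (φ p - φ q)
      ∧ ‖q.2.2 - p.2.2‖ ≤ B * (φ p - φ q) with hlp_def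
  have lp_refl : ∀ p, lp p p := by
    intro p
    refine ⟨le_refl _, ?_, ?_, ?_⟩ <;> simp [hlp_def]
  have lp_trans : ∀ p q t, lp p q → lp q t → lp p t := by
    rintro p q t ⟨h1, h2, h3, h4⟩ ⟨g1, g2, g3, g4⟩
    refine ⟨g1.trans h1, ?_, ?_, ?_⟩
    · calc ‖t.1 - p.1‖ = ‖(t.1 - q.1) + (q.1 - p.1)‖ := by rw [sub_add_sub_cancel]
        _ ≤ ‖t.1 - q.1‖ + ‖q.1 - p.1‖ := norm_add_le _ _
        _ ≤ a * (φ q - φ t) + a * (φ p - φ q) := add_le_add g2 h2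
        _ = a * (φ p - φ t) := by ring
    · calc ‖t.2.1 - p.2.1‖ = ‖(t.2.1 - q.2.1) + (q.2.1 - p.2.1)‖ := by rw [sub_add_sub_cancel]
        _ ≤ ‖t.2.1 - q.2.1‖ + ‖q.2.1 - p.2.1‖ := norm_add_le _ _
        _ ≤ B * (φ q - φ t) + B * (φ p - φ q) := add_le_add g3 h3
        _ = B * (φ p - φ t) := by ring
    · calc ‖t.2.2 - p.2.2‖ = ‖(t.2.2 - q.2.2) + (q.2.2 - p.2.2)‖ := by rw [sub_add_sub_cancel]
        _ ≤ ‖t.2.2 - q.2.2‖ + ‖q.2.2 - p.2.2‖ := norm_add_le _ _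
        _ ≤ B * (φ q - φ t) + B * (φ p - φ q) := add_le_add g4 h4
        _ = B * (φ p - φ t) := by ring
  set good : X × Y × Y → Prop := fun p => p.2.1 ∈ F p.1 ∧ p.1 ∈ G p.2.2 with hgood_def
  have hPbase : good base ∧ lp base base := ⟨⟨hyb, hzb⟩, lp_refl base⟩
  -- recursive choice
  have hchoice : ∀ (n : ℕ) (p : {p : X × Y × Y // good p ∧ lp base p}),
      ∃ q : {q : X × Y × Y // good q ∧ lp base q}, lp p.1 q.1 ∧
        ∀ z, good z → lp p.1 z → φ q.1 ≤ φ z + (1/2:ℝ)^n := by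
    intro n p
    have hne : (φ '' {q | good q ∧ lp p.1 q}).Nonempty :=
      ⟨φ p.1, ⟨p.1, ⟨p.2.1, lp_refl _⟩, rfl⟩⟩
    have hbdd : BddBelow (φ '' {q | good q ∧ lp p.1 q}) :=
      ⟨0, by rintro t ⟨q, hq, rfl⟩; exact hφ0 q⟩
    obtain ⟨t, ⟨q, hq, rfl⟩, hlt⟩ :=
      Real.lt_sInf_add_pos hne (by positivity : (0:ℝ) < (1/2:ℝ)^n)
    refine ⟨⟨q, hq.1, lp_trans _ _ _ p.2.2 hq.2⟩, hq.2, ?_⟩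
    intro z hz1 hz2
    have h1 : sInf (φ '' {q | good q ∧ lp p.1 q}) ≤ φ z := csInf_le hbdd ⟨z, ⟨hz1, hz2⟩, rfl⟩
    linarith
  choose f hf1 hf2 using hchoice
  set seq : ℕ → {p : X × Y × Y // good p ∧ lp base p} :=
    fun n => Nat.rec ⟨base, hPbase⟩ f n with hseq_def
  have hseqsucc : ∀ n, seq (n+1) = f n (seq n) := fun n => rfl
  have hseq0 : (seq 0).1 = base := rfl
  have hmono : ∀ n m, n ≤ m → lp (seq n).1 (seq m).1 := by
    intro n m h
    induction m with
    | zero =>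
      obtain rfl := Nat.le_zero.1 h
      exact lp_refl _
    | succ m ih =>
      rcases Nat.eq_or_lt_of_le h with he | hlt
      · subst he; exact lp_refl _
      · exact lp_trans _ _ _ (ih (Nat.lt_succ_iff.1 hlt)) (hf1 m (seq m))
  set φn : ℕ → ℝ := fun n => φ (seq n).1 with hφn_def
  have hφn_anti : Antitone φn := by
    apply antitone_nat_of_succ_le
    intro n
    exact (hf1 n (seq n)).1
  have hφn0 : ∀ n, 0 ≤ φn n := fun n => hφ0 _
  have hbddrange : BddBelow (Set.range φn) := ⟨0, by rintro t ⟨n, rfl⟩; exact hφn0 n⟩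
  set l : ℝ := ⨅ n, φn n with hl_def
  have hφnconv : Tendsto φn atTop (𝓝 l) := tendsto_atTop_ciInf hφn_anti hbddrange
  have hl0 : 0 ≤ l := ge_of_tendsto hφnconv (Eventually.of_forall hφn0)
  have hlle : ∀ n, l ≤ φn n := fun n => ciInf_le hbddrange n
  -- Cauchy
  have hkeydist : ∀ i j, i ≤ j → dist (seq i).1 (seq j).1 ≤ (max a B) * (φn i - φn j) := by
    intro i j hij
    obtain ⟨h1, h2, h3, h4⟩ := hmono i j hij
    have hnn : 0 ≤ φn i - φn j := by
      have := (hmono i j hij).1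
      simp only [hφn_def]
      linarith
    rw [Prod.dist_eq, Prod.dist_eq]
    apply max_le
    · rw [dist_eq_norm, norm_sub_rev]
      calc ‖(seq j).1.1 - (seq i).1.1‖ ≤ a * (φn i - φn j) := h2
        _ ≤ (max a B) * (φn i - φn j) := mul_le_mul_of_nonneg_right (le_max_left _ _) hnn
    apply max_le
    · rw [dist_eq_norm, norm_sub_rev]
      calc ‖(seq j).1.2.1 - (seq i).1.2.1‖ ≤ B * (φn i - φn j) := h3
        _ ≤ (max a B) * (φn i - φn j) := mul_le_mul_of_nonneg_right (le_max_right _ _) hnn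
    · rw [dist_eq_norm, norm_sub_rev]
      calc ‖(seq j).1.2.2 - (seq i).1.2.2‖ ≤ B * (φn i - φn j) := h4
        _ ≤ (max a B) * (φn i - φn j) := mul_le_mul_of_nonneg_right (le_max_right _ _) hnn
  have hcauchy : CauchySeq (fun n => (seq n).1) := by
    apply cauchySeq_of_le_tendsto_0 (fun n => (max a B) * (φn n - l))
    · intro n m N hn hm
      have hCm : 0 ≤ max a B := le_trans hapos.le (le_max_left _ _)
      rcases le_total n m with h | h
      · calc dist (seq n).1 (seq m).1 ≤ (max a B) * (φn n - φn m) := hkeydist n m h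
          _ ≤ (max a B) * (φn N - l) := by
              apply mul_le_mul_of_nonneg_left _ hCm
              have := hφn_anti hn
              have := hlle m
              linarith
      · rw [dist_comm]
        calc dist (seq m).1 (seq n).1 ≤ (max a B) * (φn m - φn n) := hkeydist m n h
          _ ≤ (max a B) * (φn N - l) := by
              apply mul_le_mul_of_nonneg_left _ hCm
              have := hφn_anti hm
              have := hlle n
              linarith
    · have h1 : Tendsto (fun n => φn n - l) atTop (𝓝 (l - l)) :=
        hφnconv.sub tendsto_const_nhds
      have h2 := h1.const_mul (max a B)
      simpa using h2
  obtain ⟨pst, hpst⟩ := cauchySeq_tendsto_of_complete hcauchy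
  have hu : Tendsto (fun n => (seq n).1.1) atTop (𝓝 pst.1) :=
    (continuous_fst.tendsto pst).comp hpst
  have hv : Tendsto (fun n => (seq n).1.2.1) atTop (𝓝 pst.2.1) :=
    ((continuous_fst.comp continuous_snd).tendsto pst).comp hpst
  have hsc : Tendsto (fun n => (seq n).1.2.2) atTop (𝓝 pst.2.2) :=
    ((continuous_snd.comp continuous_snd).tendsto pst).comp hpst
  have hφcont : Continuous φ := by
    rw [hφ_def]
    exact (continuous_const.sub ((continuous_fst.comp continuous_snd).sub
      (continuous_snd.comp continuous_snd))).norm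
  have hφpst : φ pst = l :=
    tendsto_nhds_unique ((hφcont.tendsto pst).comp hpst) hφnconv
  -- budget bounds
  have hbud_u : ∀ n, ‖(seq n).1.1 - xb‖ ≤ a * φ₀ := by
    intro n
    obtain ⟨h1, h2, h3, h4⟩ := (seq n).2.2
    calc ‖(seq n).1.1 - xb‖ ≤ a * (φ₀ - φn n) := h2
      _ ≤ a * φ₀ := mul_le_mul_of_nonneg_left (by linarith [hφn0 n]) hapos.le
  have hbud_v : ∀ n, ‖(seq n).1.2.1 - yb‖ ≤ B * φ₀ := by
    intro n
    obtain ⟨h1, h2, h3, h4⟩ := (seq n).2.2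
    calc ‖(seq n).1.2.1 - yb‖ ≤ B * (φ₀ - φn n) := h3
      _ ≤ B * φ₀ := mul_le_mul_of_nonneg_left (by linarith [hφn0 n]) hB.le
  have hbud_s : ∀ n, ‖(seq n).1.2.2 - zb‖ ≤ B * φ₀ := by
    intro n
    obtain ⟨h1, h2, h3, h4⟩ := (seq n).2.2
    calc ‖(seq n).1.2.2 - zb‖ ≤ B * (φ₀ - φn n) := h4
      _ ≤ B * φ₀ := mul_le_mul_of_nonneg_left (by linarith [hφn0 n]) hB.le
  have haφ₀r : a * φ₀ ≤ r := by linarith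
  have hBφ₀r : B * φ₀ ≤ r := by
    have h1 : B * φ₀ ≤ B * (ρ*K) := mul_le_mul_of_nonneg_left hφ₀K.le hB.le
    have h2 : B * (ρ*K) ≤ ρ*K*(A+B) := by
      have h3 : (0:ℝ) ≤ ρ*K*A := by positivity
      linarith
    linarith
  -- limit is in the graphs
  have hgoodpst : good pst := by
    constructor
    · have hmem : ∀ n, ((seq n).1.1, (seq n).1.2.1) ∈ {p : X × Y | p.2 ∈ F p.1} ∩ closure W₁ := by
        intro n
        refine ⟨(seq n).2.1.1, subset_closure (hball₁ ?_)⟩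
        rw [← closedBall_prod_same]
        refine ⟨?_, ?_⟩
        · rw [mem_closedBall, dist_eq_norm]
          exact le_trans (hbud_u n) (le_trans haφ₀r hrr₁)
        · rw [mem_closedBall, dist_eq_norm]
          exact le_trans (hbud_v n) (le_trans hBφ₀r hrr₁)
      exact (hW₁c.mem_of_tendsto (hu.prodMk_nhds hv) (Eventually.of_forall hmem)).1
    · have hmem : ∀ n, ((seq n).1.2.2, (seq n).1.1) ∈ {p : Y × X | p.2 ∈ G p.1} ∩ closure W₂ := by
        intro n
        refine ⟨(seq n).2.1.2, subset_closure (hball₂ ?_)⟩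
        rw [← closedBall_prod_same]
        refine ⟨?_, ?_⟩
        · rw [mem_closedBall, dist_eq_norm]
          exact le_trans (hbud_s n) (le_trans hBφ₀r hrr₂)
        · rw [mem_closedBall, dist_eq_norm]
          exact le_trans (hbud_u n) (le_trans haφ₀r hrr₂)
      exact (hW₂c.mem_of_tendsto (hsc.prodMk_nhds hu) (Eventually.of_forall hmem)).1
  -- pst dominates all seq n
  have hlppst : ∀ n, lp (seq n).1 pst := by
    intro n
    refine ⟨by rw [hφpst]; exact hlle n, ?_, ?_, ?_⟩
    · rw [hφpst]
      have ht : Tendsto (fun m => ‖(seq m).1.1 - (seq n).1.1‖) atTop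
          (𝓝 ‖pst.1 - (seq n).1.1‖) := ((hu.sub tendsto_const_nhds).norm)
      apply le_of_tendsto ht
      filter_upwards [eventually_ge_atTop n] with m hm
      calc ‖(seq m).1.1 - (seq n).1.1‖ ≤ a * (φn n - φn m) := (hmono n m hm).2.1
        _ ≤ a * (φn n - l) := mul_le_mul_of_nonneg_left (by linarith [hlle m]) hapos.le
    · rw [hφpst]
      have ht : Tendsto (fun m => ‖(seq m).1.2.1 - (seq n).1.2.1‖) atTop
          (𝓝 ‖pst.2.1 - (seq n).1.2.1‖) := ((hv.sub tendsto_const_nhds).norm)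
      apply le_of_tendsto ht
      filter_upwards [eventually_ge_atTop n] with m hm
      calc ‖(seq m).1.2.1 - (seq n).1.2.1‖ ≤ B * (φn n - φn m) := (hmono n m hm).2.2.1
        _ ≤ B * (φn n - l) := mul_le_mul_of_nonneg_left (by linarith [hlle m]) hB.le
    · rw [hφpst]
      have ht : Tendsto (fun m => ‖(seq m).1.2.2 - (seq n).1.2.2‖) atTop
          (𝓝 ‖pst.2.2 - (seq n).1.2.2‖) := ((hsc.sub tendsto_const_nhds).norm)
      apply le_of_tendsto ht
      filter_upwards [eventually_ge_atTop n] with m hm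
      calc ‖(seq m).1.2.2 - (seq n).1.2.2‖ ≤ B * (φn n - φn m) := (hmono n m hm).2.2.2
        _ ≤ B * (φn n - l) := mul_le_mul_of_nonneg_left (by linarith [hlle m]) hB.le
  -- the limit value is zero
  have hleq : l = 0 := by
    by_contra hne
    have hlpos : 0 < l := lt_of_le_of_ne hl0 (Ne.symm hne)
    obtain ⟨ε₁, hε₁, hF1⟩ := hFopen pst.1 pst.2.1 hgoodpst.1
    obtain ⟨ε₂, hε₂, hG1⟩ := hGopen pst.2.2 pst.1 hgoodpst.2
    set τ : ℝ := min l (min (L*ε₁/(2*(1+δ))) (L*M*ε₂/(2*(1+δ)^2))) with hτ_def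
    have hτpos : 0 < τ := lt_min hlpos (lt_min (by positivity) (by positivity))
    have hτl : τ ≤ l := min_le_left _ _
    set σ : ℝ := τ*(1+δ)/L with hσ_def
    have hσpos : 0 < σ := by positivity
    have hσε₁ : σ < ε₁ :=
      arsig L (1+δ) τ ε₁ hL (by positivity) hε₁ hτpos
        ((min_le_right _ _).trans (min_le_left _ _))
    set σ' : ℝ := τ*(1+δ)^2/(L*M) with hσ'_def
    have hσ'pos : 0 < σ' := by positivity
    have hσ'ε₂ : σ' < ε₂ :=
      arsig (L*M) ((1+δ)^2) τ ε₂ hLM0 (by positivity) hε₂ hτpos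
        ((min_le_right _ _).trans (min_le_right _ _))
    set h : Y := w' - (pst.2.1 - pst.2.2) with hh_def
    have hhnorm : ‖h‖ = l := hφpst
    set vt : Y := pst.2.1 + (τ/l) • h with hvt_def
    have hvtdist : ‖vt - pst.2.1‖ = τ := by
      rw [hvt_def, add_sub_cancel_left, norm_smul, hhnorm, Real.norm_eq_abs,
        abs_of_pos (div_pos hτpos hlpos), div_mul_cancel₀ _ hlpos.ne']
    have hvtball : vt ∈ ball pst.2.1 (σ*L) := by
      rw [mem_ball, dist_eq_norm, hvtdist, hσ_def, div_mul_cancel₀ _ hL.ne']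
      have h5 := mul_lt_mul_of_pos_left (show (1:ℝ) < 1+δ by linarith) hτpos
      linarith
    obtain ⟨u, huball, hvtF⟩ := mem_iUnion₂.1 (hF1 σ ⟨hσpos, hσε₁⟩ hvtball)
    have huball' : u ∈ ball pst.1 (σ'*M) := by
      rw [mem_ball] at huball ⊢
      have he : σ'*M = σ*(1+δ) := by
        rw [hσ'_def, hσ_def]
        field_simp
      rw [he]
      have h5 := mul_lt_mul_of_pos_left (show (1:ℝ) < 1+δ by linarith) hσpos
      linarith
    obtain ⟨s, hsball, huG⟩ := mem_iUnion₂.1 (hG1 σ' ⟨hσ'pos, hσ'ε₂⟩ huball')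
    set pnew : X × Y × Y := (u, vt, s) with hpnew_def
    have hsdist : ‖s - pst.2.2‖ < σ' := by
      rw [← dist_eq_norm]
      exact mem_ball.1 hsball
    have hudist : ‖u - pst.1‖ < σ := by
      rw [← dist_eq_norm]
      exact mem_ball.1 huball
    have hφnew : φ pnew < l - τ*μ := by
      have e1 : w' - (vt - s) = (1 - τ/l) • h + (s - pst.2.2) := by
        rw [hvt_def, hh_def, sub_smul, one_smul]
        abel
      have h1 : ‖(1 - τ/l) • h‖ = (1 - τ/l) * l := by
        rw [norm_smul, hhnorm, Real.norm_eq_abs, abs_of_nonneg]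
        rw [sub_nonneg, div_le_one hlpos]
        exact hτl
      have h2 : (1 - τ/l) * l = l - τ := by field_simp
      have h3 : l - τ + σ' = l - τ*μ := by
        rw [hσ'_def, hμ_def]
        field_simp
        ring
      calc φ pnew = ‖(1 - τ/l) • h + (s - pst.2.2)‖ := by rw [hφ_def]; simp only; rw [e1]
        _ ≤ ‖(1 - τ/l) • h‖ + ‖s - pst.2.2‖ := norm_add_le _ _
        _ < (l - τ) + σ' := by rw [h1, h2]; linarith
        _ = l - τ*μ := h3
    have hτμpos : 0 < τ*μ := mul_pos hτpos hμpos
    have hlpstep : lp pst pnew := by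
      have hD : τ*μ ≤ φ pst - φ pnew := by rw [hφpst]; linarith
      refine ⟨by rw [hφpst]; linarith, ?_, ?_, ?_⟩
      · have hσa : σ = a*(τ*μ) := by
          rw [hσ_def, ha_def]
          field_simp
        calc ‖pnew.1 - pst.1‖ ≤ a*(τ*μ) := by rw [← hσa]; exact hudist.le
          _ ≤ a*(φ pst - φ pnew) := mul_le_mul_of_nonneg_left hD hapos.le
      · have hBμ : 1 ≤ B*μ := by
          rw [hB_def, div_mul_eq_mul_div, le_div_iff₀ hs₀, one_mul]
          exact hBμpre
        have : ‖pnew.2.1 - pst.2.1‖ = τ := hvtdist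
        calc ‖pnew.2.1 - pst.2.1‖ = τ := hvtdist
          _ ≤ B*(τ*μ) := by
              have h4 := mul_le_mul_of_nonneg_right hBμ hτpos.le
              linarith
          _ ≤ B*(φ pst - φ pnew) := mul_le_mul_of_nonneg_left hD hB.le
      · have hστ : σ' ≤ τ := by
          rw [hσ'_def, div_le_iff₀ hLM0]
          exact mul_le_mul_of_nonneg_left hsq hτpos.le
        have hBμ : 1 ≤ B*μ := by
          rw [hB_def, div_mul_eq_mul_div, le_div_iff₀ hs₀, one_mul]
          exact hBμpre
        calc ‖pnew.2.2 - pst.2.2‖ ≤ τ := le_trans hsdist.le hστ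
          _ ≤ B*(τ*μ) := by
              have h4 := mul_le_mul_of_nonneg_right hBμ hτpos.le
              linarith
          _ ≤ B*(φ pst - φ pnew) := mul_le_mul_of_nonneg_left hD hB.le
    have hgoodnew : good pnew := ⟨hvtF, huG⟩
    have hstepn : ∀ n, φn (n+1) ≤ φ pnew + (1/2:ℝ)^n := by
      intro n
      exact hf2 n (seq n) pnew hgoodnew (lp_trans _ _ _ (hlppst n) hlpstep)
    have hlim : l ≤ φ pnew := by
      have h1 : Tendsto (fun n => φn (n+1)) atTop (𝓝 l) :=
        hφnconv.comp (tendsto_add_atTop_nat 1)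
      have h2 : Tendsto (fun n : ℕ => φ pnew + (1/2:ℝ)^n) atTop (𝓝 (φ pnew + 0)) :=
        tendsto_const_nhds.add
          (tendsto_pow_atTop_nhds_zero_of_lt_one (by norm_num) (by norm_num))
      have h3 := le_of_tendsto_of_tendsto' h1 h2 hstepn
      simpa using h3
    linarith
  -- conclusion
  have hw'eq : w' = pst.2.1 - pst.2.2 := by
    have h1 : φ pst = 0 := by rw [hφpst, hleq]
    exact sub_eq_zero.1 (norm_eq_zero.1 h1)
  have hballx : pst.1 ∈ ball xb ρ := by
    have h2 := (hlppst 0).2.1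
    rw [hφpst, hleq] at h2
    rw [mem_ball, dist_eq_norm]
    calc ‖pst.1 - xb‖ ≤ a * (φn 0 - 0) := h2
      _ = a * φ₀ := by
          have h9 : φn 0 = φ₀ := rfl
          rw [h9]
          ring
      _ < ρ := haφ₀
  exact mem_iUnion₂.2 ⟨pst.1, hballx, pst.2.1, hgoodpst.1, pst.2.2, hgoodpst.2, hw'eq⟩

/-- Ursescu's openness stability theorem. -/
theorem stmt1 {X Y : Type*} [NormedAddCommGroup X] [NormedSpace ℝ X] [CompleteSpace X]
    [NormedAddCommGroup Y] [NormedSpace ℝ Y] [CompleteSpace Y]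
    (F : X → Set Y) (G : Y → Set X)
    (hFcl : LocallyClosedSet {p : X × Y | p.2 ∈ F p.1})
    (hGcl : LocallyClosedSet {p : Y × X | p.2 ∈ G p.1})
    (hdom1 : ∃ x, (mdiff F G x).Nonempty)
    (hdom2 : ∃ y, (mdiff G F y).Nonempty)
    (L M : ℝ) (hL : 0 < L) (hM : 0 < M) (hLM : 1 < L * M)
    (hFopen : ∀ x y, y ∈ F x → IsOpenAtPt F x y L)
    (hGopen : ∀ y x, x ∈ G y → IsOpenAtPt G y x M) :
    (∀ x w, w ∈ mdiff F G x → IsOpenAtPt (mdiff F G) x w (L - M⁻¹)) ∧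
    (∀ y v, v ∈ mdiff G F y → IsOpenAtPt (mdiff G F) y v (M - L⁻¹)) := by
  constructor
  · exact key F G hFcl hGcl L M hL hM hLM hFopen hGopen
  · exact key G F hGcl hFcl M L hM hL (by rw [mul_comm]; exact hLM) hGopen hFopen
end

section
/- Let X and Y be real Banach spaces, F : X ⇒ Y and G₁,…,Gₙ : Y ⇒ X be multifunctions such that Gr F and each Gr Gᵢ are locally closed. Suppose Dom(F − G₁⁻¹ − … − Gₙ⁻¹) is nonempty and let L > 0 and M₁,…,Mₙ > 0 satisfy L > M₁⁻¹ + … + Mₙ⁻¹. Let (x,y) ∈ Gr F and (zᵢ,x) ∈ Gr Gᵢ for every i. If F is L-open at every point of its graph lying in some neighborhood of (x,y), and each Gᵢ is Mᵢ-open at every point of its graph lying in some neighborhood of (zᵢ,x), then F − G₁⁻¹ − … − Gₙ⁻¹ is (L − M₁⁻¹ − … − Mₙ⁻¹)-open at (x, y − z₁ − … − zₙ). -/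
open Metric Set Filter Topology

/-- The multifunction `F - G₁⁻¹ - ⋯ - Gₙ⁻¹ : X ⇒ Y`, given by
`x ↦ {y - z₁ - ⋯ - zₙ : y ∈ F(x), zᵢ ∈ Gᵢ⁻¹(x)}`. -/
def mdiffN {X Y : Type*} [AddCommGroup Y] (F : X → Set Y) {n : ℕ}
    (G : Fin n → Y → Set X) : X → Set Y :=
  fun x => {w | ∃ y ∈ F x, ∃ z : Fin n → Y, (∀ i, x ∈ G i (z i)) ∧ w = y - ∑ i, z i}

lemma myEkeland {α : Type*} [MetricSpace α] [CompleteSpace α] {C : Set α}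
    (hC : IsClosed C) (d : α → α → ℝ)
    (hd0 : ∀ a b, 0 ≤ d a b) (hdself : ∀ a, d a a = 0)
    (hdsymm : ∀ a b, d a b = d b a)
    (hdtri : ∀ a b c, d a c ≤ d a b + d b c)
    (hdcont : ∀ b, Continuous fun a => d a b)
    (K : ℝ) (hK : 0 < K) (hdK : ∀ a b, dist a b ≤ K * d a b)
    (φ : α → ℝ) (hφ : Continuous φ) (hφ0 : ∀ a, 0 ≤ φ a)
    (σ₀ : α) (hσ₀ : σ₀ ∈ C) (l : ℝ) (hl : 0 < l) :
    ∃ b ∈ C, φ b + l * d b σ₀ ≤ φ σ₀ ∧ ∀ a ∈ C, φ b ≤ φ a + l * d a b := by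
  classical
  set T : α → Set α := fun σ => {a | a ∈ C ∧ φ a + l * d a σ ≤ φ σ} with hT
  have hmem : ∀ σ ∈ C, σ ∈ T σ := by
    intro σ hσ
    exact ⟨hσ, by simp [hdself]⟩
  have hTsub : ∀ σ, T σ ⊆ C := fun σ a ha => ha.1
  have hclosed : ∀ σ, IsClosed (T σ) := by
    intro σ
    have : T σ = C ∩ {a | φ a + l * d a σ ≤ φ σ} := rfl
    rw [this]
    exact hC.inter (isClosed_le (hφ.add (continuous_const.mul (hdcont σ))) continuous_const)
  have hmono : ∀ a b, a ∈ T b → T a ⊆ T b := by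
    intro a b hab c hc
    refine ⟨hc.1, ?_⟩
    have h1 := hc.2
    have h2 := hab.2
    have h3 := hdtri c a b
    nlinarith [hl]
  have hbdd : ∀ σ, BddBelow (φ '' T σ) := by
    intro σ
    exact ⟨0, by rintro r ⟨a, _, rfl⟩; exact hφ0 a⟩
  have hstep : ∀ (k : ℕ) (σ : {a // a ∈ C}), ∃ σ' : {a // a ∈ C},
      σ'.1 ∈ T σ.1 ∧ φ σ'.1 ≤ sInf (φ '' T σ.1) + (1/2) ^ k := by
    intro k σ
    have hne : (φ '' T σ.1).Nonempty := ⟨φ σ.1, mem_image_of_mem _ (hmem σ.1 σ.2)⟩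
    obtain ⟨r, hr, hrlt⟩ := Real.lt_sInf_add_pos hne (ε := (1/2)^k) (by positivity)
    obtain ⟨a, ha, rfl⟩ := hr
    exact ⟨⟨a, ha.1⟩, ha, hrlt.le⟩
  choose g hg1 hg2 using hstep
  let u : ℕ → {a // a ∈ C} := fun k => Nat.rec ⟨σ₀, hσ₀⟩ (fun k prev => g k prev) k
  have huS : ∀ k, u (k+1) = g k (u k) := fun k => rfl
  have hA : ∀ k, (u (k+1)).1 ∈ T (u k).1 := fun k => hg1 k (u k)
  have hB : ∀ k, φ (u (k+1)).1 ≤ sInf (φ '' T (u k).1) + (1/2) ^ k := fun k => hg2 k (u k)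
  have hchain : ∀ k j, k ≤ j → (u j).1 ∈ T (u k).1 := by
    intro k j h
    induction j, h using Nat.le_induction with
    | base => exact hmem _ (u k).2
    | succ j hj ih => exact hmono _ _ ih (hA j)
  have hdiam : ∀ k, ∀ a ∈ T ((u (k+1)).1), l * d a (u (k+1)).1 ≤ (1/2) ^ k := by
    intro k a ha
    have ha' : a ∈ T (u k).1 := hmono _ _ (hA k) ha
    have h1 : sInf (φ '' T (u k).1) ≤ φ a := csInf_le (hbdd _) (mem_image_of_mem _ ha')
    have h2 := ha.2
    have h3 := hB k
    linarith
  have hbound : ∀ m : ℕ, dist ((u m).1) ((u (m+1)).1) ≤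
      (max (K * φ σ₀ / l) (2 * K / l)) * (1/2) ^ m := by
    intro m
    match m with
    | 0 =>
      have h1 : φ (u 1).1 + l * d (u 1).1 (u 0).1 ≤ φ (u 0).1 := (hA 0).2
      have h2 : l * d (u 1).1 (u 0).1 ≤ φ σ₀ := by
        have h5 := hφ0 (u 1).1
        have hne : φ (u 0).1 = φ σ₀ := rfl
        linarith [hne ▸ h1]
      have h3 : dist (u 0).1 (u 1).1 ≤ K * d (u 1).1 (u 0).1 := by
        rw [dist_comm]; exact hdK _ _
      have h4 : K * d (u 1).1 (u 0).1 ≤ K * φ σ₀ / l := by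
        rw [le_div_iff₀ hl]
        nlinarith [mul_le_mul_of_nonneg_left h2 (le_of_lt hK)]
      calc dist ((u 0).1) ((u 1).1) ≤ K * φ σ₀ / l := h3.trans h4
        _ ≤ max (K * φ σ₀ / l) (2 * K / l) * 1 := by
            rw [mul_one]; exact le_max_left _ _
        _ = _ := by norm_num
    | (m'+1) =>
      have hmem2 : (u (m'+2)).1 ∈ T ((u (m'+1)).1) := hchain (m'+1) (m'+2) (by omega)
      have h1 : l * d (u (m'+2)).1 (u (m'+1)).1 ≤ (1/2) ^ m' := hdiam m' _ hmem2
      have h2 : dist ((u (m'+1)).1) ((u (m'+2)).1) ≤ K * ((1/2) ^ m' / l) := by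
        rw [dist_comm]
        refine (hdK _ _).trans ?_
        have hd' : d (u (m'+2)).1 (u (m'+1)).1 ≤ (1/2)^m' / l := by
          rw [le_div_iff₀ hl]; linarith
        nlinarith
      refine h2.trans ?_
      have : K * ((1/2) ^ m' / l) = (2 * K / l) * (1/2) ^ (m'+1) := by ring
      rw [this]
      exact mul_le_mul_of_nonneg_right (le_max_right _ _) (by positivity)
  have hcauchy : CauchySeq (fun k => (u k).1) :=
    cauchySeq_of_le_geometric (1/2) _ (by norm_num) hbound
  obtain ⟨b, hb⟩ := cauchySeq_tendsto_of_complete hcauchy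
  have hbC : b ∈ C := hC.mem_of_tendsto hb (Eventually.of_forall fun k => (u k).2)
  have hbT : ∀ k, b ∈ T (u k).1 := by
    intro k
    refine (hclosed (u k).1).mem_of_tendsto hb ?_
    filter_upwards [eventually_ge_atTop k] with j hj
    exact hchain k j hj
  have hφlim : Tendsto (fun k => φ (u k).1) atTop (𝓝 (φ b)) :=
    ((hφ.tendsto b).comp hb)
  refine ⟨b, hbC, ?_, ?_⟩
  · exact (hbT 0).2
  · intro a ha
    by_contra hcon
    push_neg at hcon
    have haT : ∀ k, a ∈ T (u k).1 := by
      intro k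
      refine ⟨ha, ?_⟩
      have h1 := hdtri a b (u k).1
      have h2 := (hbT k).2
      nlinarith
    have hinf : ∀ k, φ (u (k+1)).1 - (1/2)^k ≤ φ a := by
      intro k
      have := csInf_le (hbdd _) (mem_image_of_mem φ (haT k))
      linarith [hB k]
    have hlim2 : Tendsto (fun k => φ (u (k+1)).1 - (1/2 : ℝ)^k) atTop (𝓝 (φ b - 0)) := by
      exact (hφlim.comp (tendsto_add_atTop_nat 1)).sub
        (tendsto_pow_atTop_nhds_zero_of_lt_one (by norm_num) (by norm_num))
    have hba : φ b ≤ φ a := by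
      have := le_of_tendsto hlim2 (Eventually.of_forall hinf)
      simpa using this
    nlinarith [hd0 a b, hl]

lemma fin_pos_min {n : ℕ} (f : Fin n → ℝ) (hf : ∀ i, 0 < f i) :
    ∃ c > 0, ∀ i, c ≤ f i := by
  classical
  set s : Finset ℝ := insert 1 (Finset.image f Finset.univ) with hs
  have hne : s.Nonempty := ⟨1, Finset.mem_insert_self _ _⟩
  refine ⟨s.min' hne, ?_, ?_⟩
  · have h := s.min'_mem hne
    simp only [hs, Finset.mem_insert, Finset.mem_image] at h
    rcases h with h | ⟨i, _, hi⟩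
    · rw [h]; norm_num
    · rw [← hi]; exact hf i
  · intro i
    exact s.min'_le _ (Finset.mem_insert_of_mem (Finset.mem_image_of_mem f (Finset.mem_univ i)))

set_option maxHeartbeats 1000000 in
/-- openness stability for a difference with several multifunctions. -/
theorem stmt2 {X Y : Type*} [NormedAddCommGroup X] [NormedSpace ℝ X] [CompleteSpace X]
    [NormedAddCommGroup Y] [NormedSpace ℝ Y] [CompleteSpace Y]
    (F : X → Set Y) {n : ℕ} (G : Fin n → Y → Set X)
    (hFcl : LocallyClosedSet {p : X × Y | p.2 ∈ F p.1})
    (hGcl : ∀ i, LocallyClosedSet {p : Y × X | p.2 ∈ G i p.1})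
    (hdom : ∃ x, (mdiffN F G x).Nonempty)
    (L : ℝ) (M : Fin n → ℝ) (hL : 0 < L) (hM : ∀ i, 0 < M i)
    (hsum : ∑ i, (M i)⁻¹ < L)
    (x : X) (y : Y) (z : Fin n → Y) (hxy : y ∈ F x) (hz : ∀ i, x ∈ G i (z i))
    (hFopen : ∃ N ∈ 𝓝 (x, y), ∀ p ∈ {q : X × Y | q.2 ∈ F q.1} ∩ N,
      IsOpenAtPt F p.1 p.2 L)
    (hGopen : ∀ i, ∃ N ∈ 𝓝 (z i, x), ∀ p ∈ {q : Y × X | q.2 ∈ G i q.1} ∩ N,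
      IsOpenAtPt (G i) p.1 p.2 (M i)) :
    IsOpenAtPt (mdiffN F G) x (y - ∑ i, z i) (L - ∑ i, (M i)⁻¹) := by
  classical
  set Sm := ∑ i, (M i)⁻¹ with hSm
  have hSm0 : 0 ≤ Sm := Finset.sum_nonneg fun i _ => (inv_nonneg.2 (hM i).le)
  have hSmi : ∀ i, (M i)⁻¹ ≤ Sm := fun i =>
    Finset.single_le_sum (fun j _ => inv_nonneg.2 (hM j).le) (Finset.mem_univ i)
  have hc : 0 < L - Sm := sub_pos.2 hsum
  -- neighborhoods for F
  obtain ⟨WF, hWF, hWFcl⟩ := hFcl (x, y) hxy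
  obtain ⟨NF, hNF, hNFop⟩ := hFopen
  obtain ⟨r1, hr1pos, hr1sub⟩ := Metric.nhds_basis_closedBall.mem_iff.1 hWF
  obtain ⟨r2, hr2pos, hr2sub⟩ := Metric.nhds_basis_closedBall.mem_iff.1 hNF
  set rF := min r1 r2 with hrF
  have hrFpos : 0 < rF := lt_min hr1pos hr2pos
  have hclF : IsClosed {p : X × Y | p.2 ∈ F p.1 ∧ p ∈ closedBall (x, y) rF} := by
    have heq : {p : X × Y | p.2 ∈ F p.1 ∧ p ∈ closedBall (x, y) rF}
        = ({p : X × Y | p.2 ∈ F p.1} ∩ closure WF) ∩ closedBall (x, y) rF := by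
      ext p
      constructor
      · rintro ⟨h1, h2⟩
        exact ⟨⟨h1, subset_closure (hr1sub
          (closedBall_subset_closedBall (min_le_left _ _) h2))⟩, h2⟩
      · rintro ⟨⟨h1, _⟩, h2⟩; exact ⟨h1, h2⟩
    rw [heq]
    exact hWFcl.inter Metric.isClosed_closedBall
  have hopF : ∀ x' y', y' ∈ F x' → (x', y') ∈ closedBall (x, y) rF → IsOpenAtPt F x' y' L := by
    intro x' y' h1 h2
    exact hNFop (x', y') ⟨h1, hr2sub (closedBall_subset_closedBall (min_le_right _ _) h2)⟩
  -- neighborhoods for the G i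
  have hGdata : ∀ i, ∃ r > 0,
      IsClosed {p : Y × X | p.2 ∈ G i p.1 ∧ p ∈ closedBall (z i, x) r} ∧
      (∀ z' x', x' ∈ G i z' → (z', x') ∈ closedBall (z i, x) r →
        IsOpenAtPt (G i) z' x' (M i)) := by
    intro i
    obtain ⟨WG, hWG, hWGcl⟩ := hGcl i (z i, x) (hz i)
    obtain ⟨NG, hNG, hNGop⟩ := hGopen i
    obtain ⟨s1, hs1pos, hs1sub⟩ := Metric.nhds_basis_closedBall.mem_iff.1 hWG
    obtain ⟨s2, hs2pos, hs2sub⟩ := Metric.nhds_basis_closedBall.mem_iff.1 hNG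
    refine ⟨min s1 s2, lt_min hs1pos hs2pos, ?_, ?_⟩
    · have heq : {p : Y × X | p.2 ∈ G i p.1 ∧ p ∈ closedBall (z i, x) (min s1 s2)}
          = ({p : Y × X | p.2 ∈ G i p.1} ∩ closure WG) ∩ closedBall (z i, x) (min s1 s2) := by
        ext p
        constructor
        · rintro ⟨h1, h2⟩
          exact ⟨⟨h1, subset_closure (hs1sub
            (closedBall_subset_closedBall (min_le_left _ _) h2))⟩, h2⟩
        · rintro ⟨⟨h1, _⟩, h2⟩; exact ⟨h1, h2⟩
      rw [heq]
      exact hWGcl.inter Metric.isClosed_closedBall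
    · intro z' x' h1 h2
      exact hNGop (z', x') ⟨h1, hs2sub (closedBall_subset_closedBall (min_le_right _ _) h2)⟩
  choose rG hrGpos hclG hopG using hGdata
  -- the scaling constant β and the uniform ε
  set β := (max 1 L)⁻¹ with hβ
  have hβpos : 0 < β := inv_pos.2 (lt_of_lt_of_le one_pos (le_max_left _ _))
  have hβ1 : β ≤ 1 := inv_le_one_of_one_le₀ (le_max_left _ _)
  have hβL : β * L ≤ 1 := by
    rw [hβ, inv_mul_le_iff₀ (lt_of_lt_of_le one_pos (le_max_left 1 L))]
    simpa using le_max_right 1 L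
  obtain ⟨c₂, hc₂pos, hc₂⟩ := fin_pos_min (fun i => min (rG i * M i) (rG i))
    (fun i => lt_min (mul_pos (hrGpos i) (hM i)) (hrGpos i))
  set ε := min (rF * β) c₂ with hε
  have hεpos : 0 < ε := lt_min (mul_pos hrFpos hβpos) hc₂pos
  refine ⟨ε, hεpos, ?_⟩
  intro ρ hρ w hw
  obtain ⟨hρ0, hρε⟩ := hρ
  have hερG : ∀ i, ε ≤ rG i := fun i => (min_le_right _ _).trans ((hc₂ i).trans (min_le_right _ _))
  have hερGM : ∀ i, ε ≤ rG i * M i := fun i =>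
    (min_le_right _ _).trans ((hc₂ i).trans (min_le_left _ _))
  have hεrF : ε ≤ rF := (min_le_left _ _).trans (mul_le_of_le_one_right hrFpos.le hβ1)
  have hεrFβ : ε ≤ rF * β := min_le_left _ _
  -- numbers
  rw [mem_ball, dist_eq_norm] at hw
  set e₀ := ‖w - (y - ∑ i, z i)‖ with he₀
  have he₀0 : 0 ≤ e₀ := norm_nonneg _
  set lam := (e₀ / ρ + (L - Sm)) / 2 with hlam
  have hdiv : e₀ / ρ < L - Sm := (div_lt_iff₀ hρ0).2 (by linarith)
  have hdiv0 : 0 ≤ e₀ / ρ := div_nonneg he₀0 hρ0.le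
  have hlampos : 0 < lam := by rw [hlam]; linarith
  have hlamlt : lam < L - Sm := by rw [hlam]; linarith
  have he₀lam : e₀ < lam * ρ := by
    have h2 : lam * ρ = (e₀ + (L - Sm) * ρ) / 2 := by
      rw [hlam]; field_simp
    rw [h2]; linarith [hw, mul_comm ρ (L - Sm)]
  set tL := (lam + Sm + L) / 2 with htL
  have htL1 : lam + Sm < tL := by rw [htL]; linarith
  have htL2 : tL < L := by rw [htL]; linarith
  have htL0 : 0 < tL := by rw [htL]; linarith
  set R := (e₀ / lam + ρ) / 2 with hR
  have hR0 : e₀ / lam < ρ := (div_lt_iff₀ hlampos).2 (by linarith [he₀lam])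
  have hR1 : e₀ / lam < R := by rw [hR]; linarith
  have hR2 : R < ρ := by rw [hR]; linarith
  have hRnn : 0 ≤ R := by
    have := div_nonneg he₀0 hlampos.le
    rw [hR]; linarith
  -- the state space with its scaled metric
  set Φ : X × Y × (Fin n → Y) → X × Y × (Fin n → Y) :=
    fun σ => (σ.1, β • σ.2.1, fun i => M i • σ.2.2 i) with hΦ
  have hΦcont : Continuous Φ := by
    apply Continuous.prodMk continuous_fst
    apply Continuous.prodMk ((continuous_fst.comp continuous_snd).const_smul β)
    exact continuous_pi fun i => ((continuous_apply i).comp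
      (continuous_snd.comp continuous_snd)).const_smul (M i)
  set d : (X × Y × (Fin n → Y)) → (X × Y × (Fin n → Y)) → ℝ :=
    fun σ τ => dist (Φ σ) (Φ τ) with hd
  have hdeq : ∀ σ τ, d σ τ = max (dist σ.1 τ.1) (max (β * dist σ.2.1 τ.2.1)
      (dist (fun i => M i • σ.2.2 i) (fun i => M i • τ.2.2 i))) := by
    intro σ τ
    simp [hd, hΦ, Prod.dist_eq, dist_smul₀, Real.norm_eq_abs, abs_of_pos hβpos]
  have hdx : ∀ σ τ, dist σ.1 τ.1 ≤ d σ τ := by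
    intro σ τ; rw [hdeq]; exact le_max_left _ _
  have hdy : ∀ σ τ, β * dist σ.2.1 τ.2.1 ≤ d σ τ := by
    intro σ τ; rw [hdeq]; exact le_trans (le_max_left _ _) (le_max_right _ _)
  have hdz : ∀ σ τ i, M i * dist (σ.2.2 i) (τ.2.2 i) ≤ d σ τ := by
    intro σ τ i
    have h1 : M i * dist (σ.2.2 i) (τ.2.2 i) = dist (M i • σ.2.2 i) (M i • τ.2.2 i) := by
      rw [dist_smul₀, Real.norm_eq_abs, abs_of_pos (hM i)]
    rw [h1, hdeq]
    refine le_trans ?_ (le_trans (le_max_right _ _) (le_max_right _ _))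
    exact dist_le_pi_dist (fun j => M j • σ.2.2 j) (fun j => M j • τ.2.2 j) i
  have hdle : ∀ σ τ r, 0 ≤ r → dist σ.1 τ.1 ≤ r → β * dist σ.2.1 τ.2.1 ≤ r →
      (∀ i, M i * dist (σ.2.2 i) (τ.2.2 i) ≤ r) → d σ τ ≤ r := by
    intro σ τ r hr h1 h2 h3
    rw [hdeq]
    refine max_le h1 (max_le h2 ((dist_pi_le_iff hr).2 fun i => ?_))
    rw [dist_smul₀, Real.norm_eq_abs, abs_of_pos (hM i)]
    exact h3 i
  -- the functional φ
  set φ : (X × Y × (Fin n → Y)) → ℝ := fun σ => ‖w - σ.2.1 + ∑ i, σ.2.2 i‖ with hφdef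
  have hφcont : Continuous φ := by
    apply Continuous.norm
    exact (continuous_const.sub (continuous_fst.comp continuous_snd)).add
      (continuous_finset_sum _ fun i _ => (continuous_apply i).comp
        (continuous_snd.comp continuous_snd))
  have hφ0 : ∀ σ, 0 ≤ φ σ := fun σ => norm_nonneg _
  set σ₀ : X × Y × (Fin n → Y) := (x, y, z) with hσ₀def
  have hφσ₀ : φ σ₀ = e₀ := by
    simp only [hφdef, he₀, hσ₀def]
    congr 1
    abel
  set Cs : Set (X × Y × (Fin n → Y)) :=
    {σ | σ.2.1 ∈ F σ.1 ∧ (∀ i, σ.1 ∈ G i (σ.2.2 i)) ∧ d σ σ₀ ≤ R} with hCs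
  -- component bounds for members of Cs
  have hcomp : ∀ σ ∈ Cs, (σ.1, σ.2.1) ∈ closedBall (x, y) rF ∧
      ∀ i, (σ.2.2 i, σ.1) ∈ closedBall (z i, x) (rG i) := by
    intro σ hσ
    have hdb : d σ σ₀ ≤ R := hσ.2.2
    have hx' : dist σ.1 x ≤ R := le_trans (hdx σ σ₀) hdb
    have hy' : dist σ.2.1 y ≤ R / β := by
      rw [le_div_iff₀ hβpos]
      calc dist σ.2.1 y * β = β * dist σ.2.1 y := mul_comm _ _
        _ ≤ d σ σ₀ := hdy σ σ₀
        _ ≤ R := hdb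
    have hz' : ∀ i, dist (σ.2.2 i) (z i) ≤ R / M i := by
      intro i
      rw [le_div_iff₀ (hM i)]
      calc dist (σ.2.2 i) (z i) * M i = M i * dist (σ.2.2 i) (z i) := mul_comm _ _
        _ ≤ d σ σ₀ := hdz σ σ₀ i
        _ ≤ R := hdb
    have hRε : R ≤ ε := (hR2.trans hρε).le
    constructor
    · rw [mem_closedBall, Prod.dist_eq]
      refine max_le (hx'.trans ?_) (hy'.trans ?_)
      · exact hRε.trans hεrF
      · calc R / β ≤ ε / β := by gcongr
          _ ≤ rF := by rw [div_le_iff₀ hβpos]; exact hεrFβ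
    · intro i
      rw [mem_closedBall, Prod.dist_eq]
      refine max_le ((hz' i).trans ?_) (hx'.trans ?_)
      · calc R / M i ≤ ε / M i := by gcongr; exact (hM i).le
          _ ≤ rG i := by rw [div_le_iff₀ (hM i)]; exact hερGM i
      · exact hRε.trans (hερG i)
  -- closedness of Cs
  have hCsclosed : IsClosed Cs := by
    have heq : Cs = {σ : X × Y × (Fin n → Y) | d σ σ₀ ≤ R} ∩
        ((fun σ : X × Y × (Fin n → Y) => (σ.1, σ.2.1)) ⁻¹'
          {p : X × Y | p.2 ∈ F p.1 ∧ p ∈ closedBall (x, y) rF}) ∩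
        ⋂ i, ((fun σ : X × Y × (Fin n → Y) => (σ.2.2 i, σ.1)) ⁻¹'
          {p : Y × X | p.2 ∈ G i p.1 ∧ p ∈ closedBall (z i, x) (rG i)}) := by
      ext σ
      constructor
      · intro hσ
        refine ⟨⟨hσ.2.2, hσ.1, (hcomp σ hσ).1⟩, ?_⟩
        exact mem_iInter.2 fun i => ⟨hσ.2.1 i, (hcomp σ hσ).2 i⟩
      · rintro ⟨⟨h1, h2⟩, h3⟩
        exact ⟨h2.1, fun i => (mem_iInter.1 h3 i).1, h1⟩
    rw [heq]
    refine IsClosed.inter (IsClosed.inter ?_ ?_) ?_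
    · exact isClosed_le (Continuous.dist (hΦcont) continuous_const) continuous_const
    · exact hclF.preimage (continuous_fst.prodMk (continuous_fst.comp continuous_snd))
    · exact isClosed_iInter fun i => (hclG i).preimage
        (((continuous_apply i).comp (continuous_snd.comp continuous_snd)).prodMk continuous_fst)
  have hσ₀C : σ₀ ∈ Cs := by
    refine ⟨hxy, hz, ?_⟩
    have : d σ₀ σ₀ = 0 := dist_self _
    rw [this]; exact hRnn
  -- apply the Ekeland-type lemma
  obtain ⟨σh, hσhC, hσh1, hσh2⟩ := myEkeland hCsclosed d
    (fun a b => dist_nonneg) (fun a => dist_self _) (fun a b => dist_comm _ _)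
    (fun a b c => dist_triangle _ _ _)
    (fun b => Continuous.dist hΦcont continuous_const)
    (max 1 (max β⁻¹ (Sm + 1)))
    (lt_of_lt_of_le one_pos (le_max_left _ _))
    (by
      intro a b
      have hd0' : 0 ≤ d a b := dist_nonneg
      have hKx : dist a.1 b.1 ≤ max 1 (max β⁻¹ (Sm + 1)) * d a b := by
        calc dist a.1 b.1 ≤ d a b := hdx a b
          _ = 1 * d a b := (one_mul _).symm
          _ ≤ _ := mul_le_mul_of_nonneg_right (le_max_left _ _) hd0'
      have hKy : dist a.2.1 b.2.1 ≤ max 1 (max β⁻¹ (Sm + 1)) * d a b := by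
        have h1 : dist a.2.1 b.2.1 ≤ β⁻¹ * d a b := by
          rw [← mul_le_mul_iff_right₀ hβpos, ← mul_assoc, mul_inv_cancel₀ hβpos.ne', one_mul]
          exact hdy a b
        refine h1.trans ?_
        exact mul_le_mul_of_nonneg_right
          (le_trans (le_max_left _ _) (le_max_right _ _)) hd0'
      have hKz : dist a.2.2 b.2.2 ≤ max 1 (max β⁻¹ (Sm + 1)) * d a b := by
        refine (dist_pi_le_iff (by positivity)).2 fun i => ?_
        have h1 : dist (a.2.2 i) (b.2.2 i) ≤ (M i)⁻¹ * d a b := by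
          rw [← mul_le_mul_iff_right₀ (hM i), ← mul_assoc, mul_inv_cancel₀ (hM i).ne', one_mul]
          exact hdz a b i
        refine h1.trans ?_
        have h2 : (M i)⁻¹ ≤ max 1 (max β⁻¹ (Sm + 1)) :=
          le_trans (hSmi i) (le_trans (by linarith) (le_trans (le_max_right _ _) (le_max_right _ _)))
        exact mul_le_mul_of_nonneg_right h2 hd0'
      rw [Prod.dist_eq, Prod.dist_eq]
      exact max_le hKx (max_le hKy hKz))
    φ hφcont hφ0 σ₀ hσ₀C lam hlampos
  rw [hφσ₀] at hσh1
  -- the Ekeland point is a critical point: φ σh = 0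
  have hdσh : d σh σ₀ ≤ e₀ / lam := by
    rw [le_div_iff₀ hlampos]
    linarith [hφ0 σh, hσh1, mul_comm (d σh σ₀) lam]
  have heezero : φ σh = 0 := by
    by_contra hne
    have hee : 0 < φ σh := (hφ0 σh).lt_of_ne (Ne.symm hne)
    have hFg : σh.2.1 ∈ F σh.1 := hσhC.1
    obtain ⟨εF, hεFpos, hFo⟩ := hopF σh.1 σh.2.1 hFg (hcomp σh hσhC).1
    have hGopt : ∀ i, ∃ εg > (0:ℝ), ∀ s ∈ Set.Ioo (0:ℝ) εg,
        ball σh.1 (s * M i) ⊆ ⋃ z' ∈ ball (σh.2.2 i) s, G i z' :=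
      fun i => hopG i (σh.2.2 i) σh.1 (hσhC.2.1 i) ((hcomp σh hσhC).2 i)
    choose εG hεGpos hGo using hGopt
    obtain ⟨cG, hcGpos, hcG⟩ := fin_pos_min (fun i => M i * εG i)
      (fun i => mul_pos (hM i) (hεGpos i))
    have hgap : 0 < R - d σh σ₀ := by
      have := hdσh.trans_lt hR1
      linarith
    set ρ' := min (min (εF / 2) (cG / 2)) (min (φ σh / (2 * tL)) ((R - d σh σ₀) / 2)) with hρ'
    have hρ'0 : 0 < ρ' := by
      refine lt_min (lt_min (by linarith) (by linarith)) (lt_min (by positivity) (by linarith))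
    have hρ'εF : ρ' < εF := by
      have : ρ' ≤ εF / 2 := le_trans (min_le_left _ _) (min_le_left _ _)
      linarith
    have hρ'cG : ∀ i, ρ' < M i * εG i := by
      intro i
      have h1 : ρ' ≤ cG / 2 := le_trans (min_le_left _ _) (min_le_right _ _)
      have := hcG i
      linarith
    have hρ'tL : tL * ρ' ≤ φ σh := by
      have h1 : ρ' ≤ φ σh / (2 * tL) := le_trans (min_le_right _ _) (min_le_left _ _)
      rw [le_div_iff₀ (by positivity)] at h1
      have h2 : ρ' * (2 * tL) = 2 * (tL * ρ') := by ring
      have h3 : 0 ≤ tL * ρ' := mul_nonneg htL0.le hρ'0.le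
      linarith
    have hρ'R : ρ' + d σh σ₀ ≤ R := by
      have h1 : ρ' ≤ (R - d σh σ₀) / 2 := le_trans (min_le_right _ _) (min_le_right _ _)
      linarith
    set ee := φ σh with heedef
    set t := tL * ρ' / ee with ht
    have ht0 : 0 < t := by positivity
    have ht1 : t ≤ 1 := by rw [ht, div_le_one hee]; exact hρ'tL
    set v := w - σh.2.1 + ∑ i, σh.2.2 i with hv
    have hvnorm : ‖v‖ = ee := rfl
    set ynew := σh.2.1 + t • v with hynew
    have hyn : ynew ∈ ball σh.2.1 (ρ' * L) := by
      rw [mem_ball, dist_eq_norm, hynew]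
      have h1 : σh.2.1 + t • v - σh.2.1 = t • v := by abel
      rw [h1, norm_smul, Real.norm_eq_abs, abs_of_pos ht0, hvnorm, ht,
        div_mul_cancel₀ _ hee.ne']
      have h2 : tL * ρ' < L * ρ' := mul_lt_mul_of_pos_right htL2 hρ'0
      linarith [mul_comm L ρ']
    have hxex := hFo ρ' ⟨hρ'0, hρ'εF⟩ hyn
    simp only [mem_iUnion, exists_prop] at hxex
    obtain ⟨xnew, hxnewb, hFynew⟩ := hxex
    have hznewex : ∀ i, ∃ z', dist z' (σh.2.2 i) < ρ' / M i ∧ xnew ∈ G i z' := by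
      intro i
      have hsi : ρ' / M i ∈ Set.Ioo (0:ℝ) (εG i) := by
        constructor
        · exact div_pos hρ'0 (hM i)
        · rw [div_lt_iff₀ (hM i)]
          linarith [hρ'cG i, mul_comm (M i) (εG i)]
      have hxb : xnew ∈ ball σh.1 ((ρ' / M i) * M i) := by
        rw [div_mul_cancel₀ _ (hM i).ne']
        exact hxnewb
      have := hGo i (ρ' / M i) hsi hxb
      simp only [mem_iUnion, exists_prop, mem_ball] at this
      obtain ⟨z', h1, h2⟩ := this
      exact ⟨z', h1, h2⟩
    choose znew hznb hGz using hznewex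
    set σn : X × Y × (Fin n → Y) := (xnew, ynew, znew) with hσn
    have hdn : d σn σh ≤ ρ' := by
      refine hdle σn σh ρ' hρ'0.le ?_ ?_ ?_
      · exact (mem_ball.1 hxnewb).le
      · have h1 : dist σn.2.1 σh.2.1 = tL * ρ' := by
          show dist ynew σh.2.1 = tL * ρ'
          rw [dist_eq_norm, hynew]
          have h2 : σh.2.1 + t • v - σh.2.1 = t • v := by abel
          rw [h2, norm_smul, Real.norm_eq_abs, abs_of_pos ht0, hvnorm, ht,
            div_mul_cancel₀ _ hee.ne']
        rw [h1]
        calc β * (tL * ρ') ≤ β * (L * ρ') :=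
              mul_le_mul_of_nonneg_left (mul_le_mul_of_nonneg_right htL2.le hρ'0.le) hβpos.le
          _ = (β * L) * ρ' := by ring
          _ ≤ 1 * ρ' := mul_le_mul_of_nonneg_right hβL hρ'0.le
          _ = ρ' := one_mul _
      · intro i
        have h1 : dist (σn.2.2 i) (σh.2.2 i) < ρ' / M i := hznb i
        rw [← mul_le_mul_iff_right₀ (inv_pos.2 (hM i)), ← mul_assoc, inv_mul_cancel₀ (hM i).ne',
          one_mul]
        calc dist (σn.2.2 i) (σh.2.2 i) ≤ ρ' / M i := h1.le
          _ = (M i)⁻¹ * ρ' := by rw [div_eq_mul_inv]; ring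
    have hσnC : σn ∈ Cs := by
      refine ⟨hFynew, hGz, ?_⟩
      calc d σn σ₀ ≤ d σn σh + d σh σ₀ := dist_triangle _ _ _
        _ ≤ ρ' + d σh σ₀ := by linarith
        _ ≤ R := hρ'R
    have hφn : φ σn ≤ ee - tL * ρ' + Sm * ρ' := by
      have heq1 : w - σn.2.1 + ∑ i, σn.2.2 i
          = (1 - t) • v + ∑ i, (znew i - σh.2.2 i) := by
        show w - ynew + ∑ i, znew i = (1 - t) • v + ∑ i, (znew i - σh.2.2 i)
        rw [hynew, hv, sub_smul, one_smul, Finset.sum_sub_distrib]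
        abel
      have h2 : φ σn ≤ ‖(1 - t) • v‖ + ‖∑ i, (znew i - σh.2.2 i)‖ := by
        rw [hφdef]
        show ‖w - σn.2.1 + ∑ i, σn.2.2 i‖ ≤ _
        rw [heq1]
        exact norm_add_le _ _
      have h3 : ‖(1 - t) • v‖ = (1 - t) * ee := by
        rw [norm_smul, Real.norm_eq_abs, abs_of_nonneg (by linarith), hvnorm]
      have h4 : ‖∑ i, (znew i - σh.2.2 i)‖ ≤ ∑ i, ρ' / M i := by
        refine (norm_sum_le _ _).trans ?_
        refine Finset.sum_le_sum fun i _ => ?_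
        rw [← dist_eq_norm]
        exact (hznb i).le
      have h5 : ∑ i, ρ' / M i = Sm * ρ' := by
        rw [hSm, Finset.sum_mul]
        exact Finset.sum_congr rfl fun i _ => by rw [div_eq_mul_inv, mul_comm]
      have h6 : t * ee = tL * ρ' := by
        rw [ht, div_mul_cancel₀ _ hee.ne']
      have h7 : (1 - t) * ee = ee - t * ee := by ring
      linarith [h2, h3, h4, h5, h6, h7]
    have hcontra := hσh2 σn hσnC
    have hd2 : lam * d σn σh ≤ lam * ρ' := mul_le_mul_of_nonneg_left hdn hlampos.le
    have h8 : (lam + Sm) * ρ' < tL * ρ' := mul_lt_mul_of_pos_right htL1 hρ'0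
    have h9 : (lam + Sm) * ρ' = lam * ρ' + Sm * ρ' := by ring
    linarith [hcontra, hφn, hd2, h8, h9, heedef]
  -- conclusion
  have hweq : w = σh.2.1 - ∑ i, σh.2.2 i := by
    have h1 : w - σh.2.1 + ∑ i, σh.2.2 i = 0 := by
      have := heezero
      rw [hφdef] at this
      exact norm_eq_zero.1 this
    have h1' : (w + ∑ i, σh.2.2 i) - σh.2.1 = 0 := by rw [← h1]; abel
    exact eq_sub_iff_add_eq.2 (sub_eq_zero.1 h1')
  have hxball : σh.1 ∈ ball x ρ := by
    rw [mem_ball]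
    calc dist σh.1 x ≤ d σh σ₀ := hdx σh σ₀
      _ ≤ e₀ / lam := hdσh
      _ < ρ := hR0
  exact mem_biUnion hxball ⟨σh.2.1, hσhC.1, σh.2.2, hσhC.2.1, hweq⟩
end

section
/- Let X and Y be real Banach spaces, f : X → Y a function, G : Y ⇒ X a multifunction, L, M > 0 and (x̄,ȳ,z̄) ∈ X × Y × Y with ȳ = f(x̄) and (z̄,x̄) ∈ Gr G. Assume: (i) f is Lipschitz continuous on a neighborhood of x̄; (ii) Gr G is locally closed around (z̄,x̄), i.e. there is a neighborhood W of (z̄,x̄) such that Gr G ∩ cl W is closed; (iii) f (viewed as the multifunction x ⇒ {f(x)}) is L-open around (x̄,ȳ); (iv) G is M-open around (z̄,x̄); (v) LM > 1. Then f − G⁻¹ is (L − M⁻¹)-open around (x̄, ȳ − z̄). -/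
open Metric Set Filter Topology

/-- `H` is `L`-open around `(xb, yb)`: there are `ε > 0` and neighborhoods `U` of `xb`,
`V` of `yb` such that `B(y, ρL) ⊆ H(B(x, ρ))` for every `ρ ∈ (0,ε)` and every
`(x, y) ∈ Gr H ∩ (U × V)`. -/
def IsOpenAround {X Y : Type*} [NormedAddCommGroup X] [NormedAddCommGroup Y]
    (H : X → Set Y) (xb : X) (yb : Y) (L : ℝ) : Prop :=
  ∃ ε > (0 : ℝ), ∃ U ∈ 𝓝 xb, ∃ V ∈ 𝓝 yb, ∀ ρ ∈ Set.Ioo (0 : ℝ) ε, ∀ x ∈ U,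
    ∀ y ∈ H x ∩ V, ball y (ρ * L) ⊆ ⋃ x' ∈ ball x ρ, H x'

/-- The multifunction `f - G⁻¹ : X ⇒ Y`, `(f - G⁻¹)(x) = {f(x) - z : z ∈ G⁻¹(x)}`. -/
def fdiff {X Y : Type*} [SubtractionMonoid Y] (f : X → Y) (G : Y → Set X) :
    X → Set Y :=
  fun x => {w | ∃ z, x ∈ G z ∧ w = f x - z}

set_option maxHeartbeats 1000000 in
/-- openness of `f - G⁻¹` around the reference point. -/
theorem stmt4 {X Y : Type*} [NormedAddCommGroup X] [NormedSpace ℝ X] [CompleteSpace X]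
    [NormedAddCommGroup Y] [NormedSpace ℝ Y] [CompleteSpace Y]
    (f : X → Y) (G : Y → Set X) (L M : ℝ) (hL : 0 < L) (hM : 0 < M)
    (xb : X) (yb zb : Y) (hyb : yb = f xb) (hG : xb ∈ G zb)
    (hlip : ∃ l > (0 : ℝ), ∃ U ∈ 𝓝 xb, ∀ x ∈ U, ∀ x' ∈ U,
      ‖f x - f x'‖ ≤ l * ‖x - x'‖)
    (hGcl : ∃ W ∈ 𝓝 (zb, xb), IsClosed ({p : Y × X | p.2 ∈ G p.1} ∩ closure W))
    (hfopen : IsOpenAround (fun x => {f x}) xb yb L)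
    (hGopen : IsOpenAround G zb xb M)
    (hLM : 1 < L * M) :
    IsOpenAround (fdiff f G) xb (yb - zb) (L - M⁻¹) := by
  classical
  obtain ⟨l, hl, Ul, hUl, hlipU⟩ := hlip
  obtain ⟨W, hW, hWcl⟩ := hGcl
  obtain ⟨εf, hεf, Uf, hUf, Vf, hVf, hfb⟩ := hfopen
  obtain ⟨εG, hεG, UG, hUG, VG, hVG, hGb⟩ := hGopen
  -- one radius around xb fitting into Uf ∩ VG ∩ Ul
  obtain ⟨b1, hb1pos, hb1⟩ :=
    Metric.mem_nhds_iff.mp (inter_mem hUf (inter_mem hVG hUl))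
  obtain ⟨b2, hb2pos, hb2⟩ := Metric.mem_nhds_iff.mp hUG
  obtain ⟨b3, hb3pos, hb3⟩ := Metric.mem_nhds_iff.mp hVf
  obtain ⟨b4, hb4pos, hb4⟩ := Metric.mem_nhds_iff.mp hW
  set m : ℝ := min (min b1 b2) (min b4 (b3 / l)) with hm_def
  have hmpos : 0 < m := lt_min (lt_min hb1pos hb2pos) (lt_min hb4pos (div_pos hb3pos hl))
  set r : ℝ := (1 / 2) * m with hr_def
  have hr : 0 < r := by rw [hr_def]; linarith only [hmpos]
  have hmb1 : m ≤ b1 := le_trans (min_le_left _ _) (min_le_left _ _)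
  have hmb2 : m ≤ b2 := le_trans (min_le_left _ _) (min_le_right _ _)
  have hmb4 : m ≤ b4 := le_trans (min_le_right _ _) (min_le_left _ _)
  have hmb3 : m ≤ b3 / l := le_trans (min_le_right _ _) (min_le_right _ _)
  have hrb1 : r < b1 := by rw [hr_def]; linarith only [hmpos, hmb1]
  have hrb2 : r < b2 := by rw [hr_def]; linarith only [hmpos, hmb2]
  have hrb4 : r < b4 := by rw [hr_def]; linarith only [hmpos, hmb4]
  have hrb3 : l * r < b3 := by
    have h1 : r < b3 / l := by rw [hr_def]; linarith only [hmpos, hmb3]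
    have h2 := (lt_div_iff₀ hl).mp h1
    linarith only [h2]
  -- the parameters
  set u : ℝ := min (r / 2) (r / (4 * l)) with hu_def
  have hupos : 0 < u :=
    lt_min (by linarith only [hr]) (div_pos hr (by linarith only [hl]))
  have hur : u ≤ r / 2 := min_le_left _ _
  have hul : l * u ≤ r / 4 := by
    have h1 : u ≤ r / (4 * l) := min_le_right _ _
    have h2 : l * u ≤ l * (r / (4 * l)) := mul_le_mul_of_nonneg_left h1 hl.le
    have h3 : l * (r / (4 * l)) = r / 4 := by field_simp
    linarith only [h2, h3.le]
  have hvpos : 0 < r / 4 := by linarith only [hr]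
  set ε : ℝ := min (min εf (εG * M)) (min (r / 2) (r * M / 2)) with hε_def
  have hεpos : 0 < ε :=
    lt_min (lt_min hεf (mul_pos hεG hM))
      (lt_min (by linarith only [hr]) (by have := mul_pos hr hM; linarith only [this]))
  have hεεf : ε ≤ εf := le_trans (min_le_left _ _) (min_le_left _ _)
  have hεεG : ε ≤ εG * M := le_trans (min_le_left _ _) (min_le_right _ _)
  have hεr : ε ≤ r / 2 := le_trans (min_le_right _ _) (min_le_left _ _)
  have hεrM : ε ≤ r * M / 2 := le_trans (min_le_right _ _) (min_le_right _ _)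
  refine ⟨ε, hεpos, ball xb u, ball_mem_nhds _ hupos, ball (yb - zb) (r / 4),
    ball_mem_nhds _ hvpos, ?_⟩
  rintro ρ ⟨hρ0, hρε⟩ x hx wv ⟨⟨z, hxGz, hwv⟩, hwvV⟩ w' hw'
  -- constants for the iteration
  obtain ⟨q, hq_def⟩ : ∃ t : ℝ, t = (L * M)⁻¹ := ⟨_, rfl⟩
  have hq0 : 0 < q := by rw [hq_def]; exact inv_pos.mpr (mul_pos hL hM)
  have hq1 : q < 1 := by
    rw [hq_def]
    exact inv_lt_one_of_one_lt₀ hLM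
  have hLq : L * q = M⁻¹ := by
    rw [hq_def, mul_inv, ← mul_assoc, mul_inv_cancel₀ hL.ne', one_mul]
  obtain ⟨δ₀, hδ₀_def⟩ : ∃ t : ℝ, t = ‖w' - wv‖ := ⟨_, rfl⟩
  have hδ₀nn : 0 ≤ δ₀ := hδ₀_def ▸ norm_nonneg _
  have hδ₀ : δ₀ < ρ * L * (1 - q) := by
    have h1 : dist w' wv < ρ * (L - M⁻¹) := mem_ball.mp hw'
    rw [dist_eq_norm] at h1
    have h2 : ρ * (L - M⁻¹) = ρ * L * (1 - q) := by rw [← hLq]; ring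
    rw [hδ₀_def]; linarith only [h2 ▸ h1]
  have hρL : 0 < ρ * L := mul_pos hρ0 hL
  have hden : 0 < ρ * L * q + δ₀ := by
    have h1 := mul_pos hρL hq0
    linarith only [h1, hδ₀nn]
  obtain ⟨T, hT_def⟩ : ∃ t : ℝ, t = ρ * L / (ρ * L * q + δ₀) := ⟨_, rfl⟩
  have hT1 : 1 < T := by
    rw [hT_def, lt_div_iff₀ hden]; linarith only [hδ₀]
  obtain ⟨θ, hθ_def⟩ : ∃ t : ℝ, t = (1 + T) / 2 := ⟨_, rfl⟩
  have hθ1 : 1 < θ := by rw [hθ_def]; linarith only [hT1]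
  have hθ0 : 0 < θ := by linarith only [hθ1]
  have hθT : θ < T := by rw [hθ_def]; linarith only [hT1]
  have hkey : θ * (ρ * L * q + δ₀) < ρ * L := by
    have h := hθT
    rw [hT_def] at h
    exact (lt_div_iff₀ hden).mp h
  have hθq1 : θ * q < 1 := by
    have h2 : θ * q * (ρ * L) < 1 * (ρ * L) := by
      have h3 : 0 ≤ θ * δ₀ := mul_nonneg hθ0.le hδ₀nn
      linarith only [hkey, h3]
    exact lt_of_mul_lt_mul_right h2 hρL.le
  have hθq0 : 0 < θ * q := mul_pos hθ0 hq0
  have h1θq : 0 < 1 - θ * q := by linarith only [hθq1]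
  obtain ⟨S, hS_def⟩ : ∃ t : ℝ, t = θ * δ₀ / (L * (1 - θ * q)) := ⟨_, rfl⟩
  have hS0 : 0 ≤ S := by
    rw [hS_def]
    exact div_nonneg (mul_nonneg hθ0.le hδ₀nn) (mul_nonneg hL.le h1θq.le)
  have hSρ : S < ρ := by
    rw [hS_def, div_lt_iff₀ (mul_pos hL h1θq)]
    have h3 : 0 ≤ θ * δ₀ := mul_nonneg hθ0.le hδ₀nn
    linarith only [hkey]
  have hSM0 : 0 ≤ S / M := div_nonneg hS0 hM.le
  have hidX : θ * δ₀ / L = S * (1 - θ * q) := by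
    rw [hS_def, div_mul_eq_mul_div, div_eq_div_iff hL.ne' (mul_pos hL h1θq).ne']
    ring
  have hidZ : θ * q * δ₀ = S / M * (1 - θ * q) := by
    have h30 : θ * δ₀ = S * (1 - θ * q) * L := (div_eq_iff hL.ne').mp hidX
    calc θ * q * δ₀ = (θ * δ₀) * q := by ring
      _ = S * (1 - θ * q) * L * q := by rw [h30]
      _ = S * (1 - θ * q) * (L * q) := by rw [mul_assoc]
      _ = S * (1 - θ * q) * M⁻¹ := by rw [hLq]
      _ = S / M * (1 - θ * q) := by rw [div_eq_mul_inv]; ring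
  -- basic position facts
  have hxxb : ‖x - xb‖ < u := by
    have := mem_ball.mp hx; rwa [dist_eq_norm] at this
  have hposX : ∀ p : X, ‖p - x‖ ≤ S → ‖p - xb‖ < r := by
    intro p hp
    have tri : ‖p - xb‖ ≤ ‖p - x‖ + ‖x - xb‖ := by
      simpa [dist_eq_norm] using dist_triangle p x xb
    have hh := hρε.le.trans hεr
    linarith only [tri, hp, hxxb, hur, hSρ, hh]
  have hxUl : x ∈ Ul := by
    refine (hb1 ?_).2.2
    rw [mem_ball, dist_eq_norm]
    linarith only [hxxb, hur, hrb1, hr]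
  have hxbUl : xb ∈ Ul := (hb1 (mem_ball_self hb1pos)).2.2
  have hzzb : ‖z - zb‖ ≤ r / 2 := by
    have hlf : ‖f x - f xb‖ ≤ l * ‖x - xb‖ := hlipU x hxUl xb hxbUl
    have hz : z - zb = (f x - f xb) + ((yb - zb) - wv) := by
      have h1 : z = f x - wv := by rw [hwv]; abel
      rw [h1, hyb]; abel
    have hwv2 : ‖(yb - zb) - wv‖ < r / 4 := by
      have h5 := mem_ball.mp hwvV
      rw [dist_eq_norm] at h5
      rw [show (yb - zb) - wv = -(wv - (yb - zb)) by abel, norm_neg]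
      exact h5
    have htri : ‖z - zb‖ ≤ ‖f x - f xb‖ + ‖(yb - zb) - wv‖ := by
      rw [hz]; exact norm_add_le _ _
    have hlu : l * ‖x - xb‖ ≤ l * u := mul_le_mul_of_nonneg_left hxxb.le hl.le
    linarith only [htri, hlf, hlu, hul, hwv2]
  have hρM : ρ / M < r / 2 := by
    rw [div_lt_iff₀ hM]
    have h6 : ρ < r * M / 2 := lt_of_lt_of_le hρε hεrM
    linarith only [h6]
  have hposZ : ∀ p : Y, ‖p - z‖ ≤ S / M → ‖p - zb‖ < r := by
    intro p hp
    have tri : ‖p - zb‖ ≤ ‖p - z‖ + ‖z - zb‖ := by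
      simpa [dist_eq_norm] using dist_triangle p z zb
    have hSM : S / M < ρ / M := (div_lt_div_iff_of_pos_right hM).mpr hSρ
    linarith only [tri, hp, hzzb, hSM, hρM]
  -- the invariant for the iterative construction
  set Inv : ℕ → X × Y → Prop := fun n p =>
    p.1 ∈ G p.2 ∧ ‖w' + p.2 - f p.1‖ ≤ (θ * q) ^ n * δ₀ ∧
      ‖p.1 - x‖ ≤ S * (1 - (θ * q) ^ n) ∧ ‖p.2 - z‖ ≤ S / M * (1 - (θ * q) ^ n)
    with hInv_def
  have hstep : ∀ n : ℕ, ∀ p : X × Y, Inv n p → ∃ p' : X × Y, Inv (n + 1) p' ∧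
      ‖p'.1 - p.1‖ ≤ θ * δ₀ / L * (θ * q) ^ n ∧
      ‖p'.2 - p.2‖ ≤ θ * q * δ₀ * (θ * q) ^ n := by
    rintro n ⟨x1, z1⟩ ⟨hG1, hδ1, hX1, hZ1⟩
    simp only at hG1 hδ1 hX1 hZ1
    have hpn0 : (0:ℝ) ≤ (θ * q) ^ n := pow_nonneg hθq0.le n
    have hpn1 : (θ * q) ^ n ≤ 1 := pow_le_one₀ hθq0.le hθq1.le
    have hpsucc : (θ * q) ^ (n + 1) = θ * q * (θ * q) ^ n := by ring
    have hpdec : θ * q * (θ * q) ^ n ≤ (θ * q) ^ n := by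
      have := mul_le_mul_of_nonneg_right hθq1.le hpn0
      linarith only [this]
    rcases eq_or_lt_of_le (norm_nonneg (w' + z1 - f x1)) with h0 | hpos
    · -- already solved at this stage; stay put
      refine ⟨(x1, z1), ⟨hG1, ?_, ?_, ?_⟩, ?_, ?_⟩
      · simp only
        rw [← h0]
        exact mul_nonneg (pow_nonneg hθq0.le _) hδ₀nn
      · simp only
        refine hX1.trans ?_
        rw [hpsucc]
        have := mul_le_mul_of_nonneg_left hpdec hS0
        linarith only [this]
      · simp only
        refine hZ1.trans ?_
        rw [hpsucc]
        have := mul_le_mul_of_nonneg_left hpdec hSM0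
        linarith only [this]
      · simp only [sub_self, norm_zero]
        exact mul_nonneg (div_nonneg (mul_nonneg hθ0.le hδ₀nn) hL.le) hpn0
      · simp only [sub_self, norm_zero]
        exact mul_nonneg (mul_nonneg hθq0.le hδ₀nn) hpn0
    · obtain ⟨δ, hδ_def⟩ : ∃ t : ℝ, t = ‖w' + z1 - f x1‖ := ⟨_, rfl⟩
      have hδpos : 0 < δ := hδ_def ▸ hpos
      have hδ1' : δ ≤ (θ * q) ^ n * δ₀ := hδ_def ▸ hδ1
      obtain ⟨ρ1, hρ1_def⟩ : ∃ t : ℝ, t = θ * δ / L := ⟨_, rfl⟩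
      have hρ1pos : 0 < ρ1 := by
        rw [hρ1_def]; exact div_pos (mul_pos hθ0 hδpos) hL
      have hρ1le : ρ1 ≤ θ * δ₀ / L * (θ * q) ^ n := by
        have h7 : θ * δ ≤ θ * ((θ * q) ^ n * δ₀) :=
          mul_le_mul_of_nonneg_left hδ1' hθ0.le
        calc ρ1 = θ * δ / L := hρ1_def
          _ ≤ θ * ((θ * q) ^ n * δ₀) / L := by
              exact div_le_div_of_nonneg_right h7 hL.le
          _ = θ * δ₀ / L * (θ * q) ^ n := by ring
      have hρ1S : ρ1 ≤ S := by
        have e1 : (1 - θ * q) * (θ * q) ^ n ≤ 1 * (θ * q) ^ n :=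
          mul_le_mul_of_nonneg_right (by linarith only [hθq0]) hpn0
        have e2 : S * ((1 - θ * q) * (θ * q) ^ n) ≤ S * 1 :=
          mul_le_mul_of_nonneg_left (by linarith only [e1, hpn1]) hS0
        have h9 := hρ1le
        rw [hidX] at h9
        linarith only [h9, e2]
      have hρ1ρ : ρ1 < ρ := lt_of_le_of_lt hρ1S hSρ
      have hρ1εf : ρ1 < εf := lt_of_lt_of_le (hρ1ρ.trans hρε) hεεf
      -- positions of x1 and z1
      have hx1S : ‖x1 - x‖ ≤ S := hX1.trans (by
        have := mul_nonneg hS0 hpn0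
        linarith only [this])
      have hz1S : ‖z1 - z‖ ≤ S / M := hZ1.trans (by
        have := mul_nonneg hSM0 hpn0
        linarith only [this])
      have hx1xb : ‖x1 - xb‖ < r := hposX x1 hx1S
      have hz1zb : ‖z1 - zb‖ < r := hposZ z1 hz1S
      have hx1b1 : x1 ∈ ball xb b1 := by
        rw [mem_ball, dist_eq_norm]; linarith only [hx1xb, hrb1]
      have hx1Uf : x1 ∈ Uf := (hb1 hx1b1).1
      have hx1VG : x1 ∈ VG := (hb1 hx1b1).2.1
      have hx1Ul : x1 ∈ Ul := (hb1 hx1b1).2.2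
      have hfx1Vf : f x1 ∈ Vf := by
        apply hb3
        rw [mem_ball, dist_eq_norm, hyb]
        have h10 := hlipU x1 hx1Ul xb hxbUl
        have h11 : l * ‖x1 - xb‖ ≤ l * r := mul_le_mul_of_nonneg_left hx1xb.le hl.le
        linarith only [h10, h11, hrb3]
      have hsub := hfb ρ1 ⟨hρ1pos, hρ1εf⟩ x1 hx1Uf (f x1) ⟨rfl, hfx1Vf⟩
      have hmem : w' + z1 ∈ ball (f x1) (ρ1 * L) := by
        rw [mem_ball, dist_eq_norm]
        have h12 : ρ1 * L = θ * δ := by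
          rw [hρ1_def]; exact div_mul_cancel₀ _ hL.ne'
        rw [h12, ← hδ_def]
        have h13 := mul_lt_mul_of_pos_right hθ1 hδpos
        linarith only [h13]
      obtain ⟨x2, hx2ball, hx2f⟩ := by
        have h14 := hsub hmem
        simpa only [mem_iUnion, mem_singleton_iff, exists_prop] using h14
      have hfx2 : f x2 = w' + z1 := hx2f.symm
      -- now use openness of G to adjust z
      obtain ⟨ρ2, hρ2_def⟩ : ∃ t : ℝ, t = ρ1 / M := ⟨_, rfl⟩
      have hρ2pos : 0 < ρ2 := by rw [hρ2_def]; exact div_pos hρ1pos hM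
      have hρ2εG : ρ2 < εG := by
        rw [hρ2_def, div_lt_iff₀ hM]
        linarith only [hρ1ρ, hρε, hεεG]
      have hz1UG : z1 ∈ UG := by
        apply hb2
        rw [mem_ball, dist_eq_norm]; linarith only [hz1zb, hrb2]
      have hsubG := hGb ρ2 ⟨hρ2pos, hρ2εG⟩ z1 hz1UG x1 ⟨hG1, hx1VG⟩
      have hx2mem : x2 ∈ ball x1 (ρ2 * M) := by
        have h15 : ρ2 * M = ρ1 := by
          rw [hρ2_def]; exact div_mul_cancel₀ _ hM.ne'
        rw [h15]; exact hx2ball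
      obtain ⟨z2, hz2ball, hz2G⟩ := by
        have h16 := hsubG hx2mem
        simpa only [mem_iUnion, exists_prop] using h16
      have hx2x1 : ‖x2 - x1‖ < ρ1 := by
        have := mem_ball.mp hx2ball; rwa [dist_eq_norm] at this
      have hz2z1 : ‖z2 - z1‖ < ρ2 := by
        have := mem_ball.mp hz2ball; rwa [dist_eq_norm] at this
      have hρ2q : ρ2 = θ * q * δ := by
        rw [hρ2_def, hρ1_def, hq_def, div_div]; ring
      rw [hρ2q] at hz2z1
      have h1 : θ * q * δ ≤ θ * q * ((θ * q) ^ n * δ₀) :=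
        mul_le_mul_of_nonneg_left hδ1' hθq0.le
      refine ⟨(x2, z2), ⟨hz2G, ?_, ?_, ?_⟩, ?_, ?_⟩
      · simp only
        have heq : w' + z2 - f x2 = z2 - z1 := by rw [hfx2]; abel
        rw [heq, hpsucc]
        linarith only [hz2z1, h1]
      · simp only
        have tri : ‖x2 - x‖ ≤ ‖x2 - x1‖ + ‖x1 - x‖ := by
          simpa [dist_eq_norm] using dist_triangle x2 x1 x
        have h9 := hρ1le
        rw [hidX] at h9
        rw [hpsucc]
        linarith only [tri, h9, hx2x1, hX1]
      · simp only
        have tri : ‖z2 - z‖ ≤ ‖z2 - z1‖ + ‖z1 - z‖ := by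
          simpa [dist_eq_norm] using dist_triangle z2 z1 z
        have h5 : θ * q * ((θ * q) ^ n * δ₀) = S / M * (1 - θ * q) * (θ * q) ^ n := by
          linear_combination ((θ * q) ^ n) * hidZ
        rw [hpsucc]
        linarith only [tri, hz2z1, h1, h5, hZ1]
      · simp only
        linarith only [hx2x1, hρ1le]
      · simp only
        linarith only [hz2z1, h1]
  -- build the sequence
  choose! next hnext using hstep
  set s : ℕ → X × Y := fun n =>
    Nat.rec (motive := fun _ => X × Y) (x, z) (fun n p => next n p) n with hs_def
  have hs0 : s 0 = (x, z) := rfl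
  have hssucc : ∀ n, s (n + 1) = next n (s n) := fun n => rfl
  have hInv0 : Inv 0 (x, z) := by
    refine ⟨hxGz, ?_, ?_, ?_⟩
    · simp only [pow_zero, one_mul]
      have h17 : w' + z - f x = w' - wv := by rw [hwv]; abel
      rw [h17]
      exact hδ₀_def.ge
    · simp only [pow_zero, sub_self, norm_zero]
      rw [mul_zero]
    · simp only [pow_zero, sub_self, norm_zero]
      rw [mul_zero]
  have hInvs : ∀ n, Inv n (s n) := by
    intro n
    induction n with
    | zero => exact hInv0
    | succ n ih => exact (hnext n (s n) ih).1
  have hbdX : ∀ n, ‖(s (n + 1)).1 - (s n).1‖ ≤ θ * δ₀ / L * (θ * q) ^ n :=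
    fun n => (hnext n (s n) (hInvs n)).2.1
  have hbdZ : ∀ n, ‖(s (n + 1)).2 - (s n).2‖ ≤ θ * q * δ₀ * (θ * q) ^ n :=
    fun n => (hnext n (s n) (hInvs n)).2.2
  -- Cauchy sequences and limits
  have hcX : CauchySeq (fun n => (s n).1) :=
    cauchySeq_of_le_geometric (θ * q) (θ * δ₀ / L) hθq1 (fun n => by
      rw [dist_eq_norm, norm_sub_rev]; exact hbdX n)
  have hcZ : CauchySeq (fun n => (s n).2) :=
    cauchySeq_of_le_geometric (θ * q) (θ * q * δ₀) hθq1 (fun n => by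
      rw [dist_eq_norm, norm_sub_rev]; exact hbdZ n)
  obtain ⟨xI, hxI⟩ := cauchySeq_tendsto_of_complete hcX
  obtain ⟨zI, hzI⟩ := cauchySeq_tendsto_of_complete hcZ
  have hdist0 : dist x xI ≤ θ * δ₀ / L / (1 - θ * q) := by
    have h18 := dist_le_of_le_geometric_of_tendsto₀ (θ * q) (θ * δ₀ / L) hθq1
      (fun n => by rw [dist_eq_norm, norm_sub_rev]; exact hbdX n) hxI
    simpa [hs0] using h18
  have hSid : θ * δ₀ / L / (1 - θ * q) = S := by rw [hS_def, div_div]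
  have hdistS : dist x xI ≤ S := hSid ▸ hdist0
  have hxIball : xI ∈ ball x ρ := by
    rw [mem_ball, dist_comm]
    exact lt_of_le_of_lt hdistS hSρ
  have hposXn : ∀ n, ‖(s n).1 - xb‖ < r := by
    intro n
    obtain ⟨h1, h2, h3, h4⟩ := hInvs n
    refine hposX _ (h3.trans ?_)
    have := mul_nonneg hS0 (pow_nonneg hθq0.le n)
    linarith only [this]
  -- limit is in the graph of G
  have hmemW : ∀ n, ((s n).2, (s n).1) ∈ {p : Y × X | p.2 ∈ G p.1} ∩ closure W := by
    intro n
    obtain ⟨h1, h2, h3, h4⟩ := hInvs n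
    have hzn : ‖(s n).2 - zb‖ < r := by
      refine hposZ _ (h4.trans ?_)
      have := mul_nonneg hSM0 (pow_nonneg hθq0.le n)
      linarith only [this]
    refine ⟨h1, subset_closure (hb4 ?_)⟩
    rw [mem_ball, Prod.dist_eq]
    apply max_lt
    · rw [dist_eq_norm]; linarith only [hzn, hrb4]
    · rw [dist_eq_norm]; linarith only [hposXn n, hrb4]
  have htendpair : Tendsto (fun n => ((s n).2, (s n).1)) atTop (𝓝 (zI, xI)) :=
    hzI.prodMk_nhds hxI
  have hlimGr := hWcl.mem_of_tendsto htendpair (Eventually.of_forall hmemW)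
  have hxIG : xI ∈ G zI := hlimGr.1
  -- f xI = w' + zI
  have hxIxb : ‖xI - x‖ ≤ S := by
    rw [← dist_eq_norm, dist_comm]; exact hdistS
  have hxIr : ‖xI - xb‖ < r := hposX xI hxIxb
  have hxIUl : xI ∈ Ul := by
    refine (hb1 ?_).2.2
    rw [mem_ball, dist_eq_norm]; linarith only [hxIr, hrb1]
  have hxnUl : ∀ n, (s n).1 ∈ Ul := by
    intro n
    refine (hb1 ?_).2.2
    rw [mem_ball, dist_eq_norm]; linarith only [hposXn n, hrb1]
  have hfc : Tendsto (fun n => f (s n).1) atTop (𝓝 (f xI)) := by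
    rw [tendsto_iff_norm_sub_tendsto_zero]
    apply squeeze_zero_norm (a := fun n => l * ‖(s n).1 - xI‖)
    · intro n
      rw [norm_norm]
      exact hlipU _ (hxnUl n) _ hxIUl
    · have h19 : Tendsto (fun n => ‖(s n).1 - xI‖) atTop (𝓝 0) := by
        rw [← tendsto_iff_norm_sub_tendsto_zero]; exact hxI
      simpa using h19.const_mul l
  have htd1 : Tendsto (fun n => w' + (s n).2 - f (s n).1) atTop
      (𝓝 (w' + zI - f xI)) := (tendsto_const_nhds.add hzI).sub hfc
  have htd0 : Tendsto (fun n => w' + (s n).2 - f (s n).1) atTop (𝓝 0) := by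
    apply squeeze_zero_norm (a := fun n => (θ * q) ^ n * δ₀)
    · intro n; exact (hInvs n).2.1
    · have h20 : Tendsto (fun n : ℕ => (θ * q) ^ n) atTop (𝓝 0) :=
        tendsto_pow_atTop_nhds_zero_of_lt_one hθq0.le hθq1
      simpa using h20.mul_const δ₀
  have hfinal : w' + zI - f xI = 0 := tendsto_nhds_unique htd1 htd0
  have hw'eq : w' = f xI - zI := by
    have h21 : w' + zI = f xI := sub_eq_zero.mp hfinal
    rw [← h21]; abel
  exact mem_iUnion₂.mpr ⟨xI, hxIball, ⟨zI, hxIG, hw'eq⟩⟩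
end

section
/- Let X, P, Y be real Banach spaces, f : X × P → Y a function continuous on a neighborhood of (x̄,p̄), and A : P → Y a surjective continuous linear operator. Let α > 0 and c > α be such that B_Y(0, cρ) ⊆ A(B_P(0,ρ)) for every ρ > 0, and suppose there are neighborhoods U of p̄ and V of x̄ such that ‖f(x,p) − f(x,p′) − A(p − p′)‖ ≤ α‖p − p′‖ for every p,p′ ∈ U and every x ∈ V. Then f is (c − α)-open with respect to p uniformly in x around ((x̄,p̄), f(x̄,p̄)). -/
open Metric Set Filter Topology

set_option maxHeartbeats 1000000

/-- a parametric Graves-type theorem. If `A : P → Y` is a surjective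
continuous linear operator with `B(0, cρ) ⊆ A(B(0,ρ))` for all `ρ > 0`, `0 < α < c`,
and `‖f(x,p) - f(x,p') - A(p - p')‖ ≤ α‖p - p'‖` near the reference point, then `f` is
`(c - α)`-open with respect to `p` uniformly in `x` around `((xb,pb), f(xb,pb))`. -/
theorem stmt5 {X P Y : Type*}
    [NormedAddCommGroup X] [NormedSpace ℝ X] [CompleteSpace X]
    [NormedAddCommGroup P] [NormedSpace ℝ P] [CompleteSpace P]
    [NormedAddCommGroup Y] [NormedSpace ℝ Y] [CompleteSpace Y]
    (f : X × P → Y) (xb : X) (pb : P)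
    (hcont : ∃ N ∈ 𝓝 (xb, pb), ContinuousOn f N)
    (A : P →L[ℝ] Y) (hsurj : Function.Surjective A)
    (α c : ℝ) (hα : 0 < α) (hc : α < c)
    (hA : ∀ ρ > (0 : ℝ), ball (0 : Y) (c * ρ) ⊆ A '' ball (0 : P) ρ)
    (happrox : ∃ U ∈ 𝓝 pb, ∃ V ∈ 𝓝 xb, ∀ p ∈ U, ∀ p' ∈ U, ∀ x ∈ V,
      ‖f (x, p) - f (x, p') - A (p - p')‖ ≤ α * ‖p - p'‖) :
    ∃ ε > (0 : ℝ), ∃ U ∈ 𝓝 xb, ∃ V ∈ 𝓝 pb, ∃ W ∈ 𝓝 (f (xb, pb)),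
      ∀ ρ ∈ Set.Ioo (0 : ℝ) ε, ∀ x ∈ U, ∀ p ∈ V, f (x, p) ∈ W →
        ball (f (x, p)) (ρ * (c - α)) ⊆ (fun q => f (x, q)) '' ball p ρ := by
  obtain ⟨N, hN, hfN⟩ := hcont
  obtain ⟨U0, hU0, V0, hV0, happ⟩ := happrox
  have hc0 : (0:ℝ) < c := hα.trans hc
  have hca : (0:ℝ) < c - α := sub_pos.mpr hc
  obtain ⟨θ, hθdef⟩ : ∃ t : ℝ, t = α / c := ⟨_, rfl⟩
  have hθ0 : 0 < θ := hθdef ▸ div_pos hα hc0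
  have hθ1 : θ < 1 := hθdef ▸ (div_lt_one hc0).mpr hc
  have hcinv : c * c⁻¹ = 1 := mul_inv_cancel₀ hc0.ne'
  have hθc : θ * c = α := hθdef ▸ div_mul_cancel₀ α hc0.ne'
  -- selection lemma
  have hselect : ∀ (v : Y) (r : ℝ), 0 < r → ‖v‖ < c * r → ∃ u : P, A u = v ∧ ‖u‖ < r := by
    intro v r hr hv
    obtain ⟨u, hu, huv⟩ := hA r hr (mem_ball_zero_iff.mpr hv)
    exact ⟨u, huv, mem_ball_zero_iff.mp hu⟩
  obtain ⟨δp, hδp, hδpU⟩ := Metric.mem_nhds_iff.mp hU0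
  obtain ⟨δx, hδx, hδxV⟩ := Metric.mem_nhds_iff.mp hV0
  obtain ⟨δn, hδn, hδnN⟩ := Metric.mem_nhds_iff.mp hN
  obtain ⟨s, hsdef⟩ : ∃ t : ℝ, t = min δp δn / 2 := ⟨_, rfl⟩
  have hs : 0 < s := by rw [hsdef]; positivity
  refine ⟨s, hs, ball xb (min δx δn), ball_mem_nhds _ (lt_min hδx hδn),
    ball pb s, ball_mem_nhds _ hs, univ, univ_mem, ?_⟩
  rintro ρ ⟨hρ0, hρs⟩ x hx p hp - y hy
  rw [mem_ball, dist_eq_norm] at hy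
  have hy' : ‖y - f (x, p)‖ < ρ * (c - α) := hy
  obtain ⟨r0, hr0def⟩ : ∃ t : ℝ, t = (‖y - f (x, p)‖ + ρ * (c - α)) / 2 := ⟨_, rfl⟩
  have hr0pos : 0 < r0 := by rw [hr0def]; positivity
  have hyr0 : ‖y - f (x, p)‖ < r0 := by
    rw [hr0def]; linarith
  have hr0lt : r0 < ρ * (c - α) := by
    rw [hr0def]; linarith
  obtain ⟨ρ', hρ'def⟩ : ∃ t : ℝ, t = r0 / (c - α) := ⟨_, rfl⟩
  have hρ'0 : 0 < ρ' := by rw [hρ'def]; exact div_pos hr0pos hca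
  have hρ'ρ : ρ' < ρ := by
    rw [hρ'def, div_lt_iff₀ hca]; linarith
  -- membership helper
  have hxV0 : x ∈ V0 := hδxV (mem_ball.mpr ((mem_ball.mp hx).trans_le (min_le_left _ _)))
  have hmem : ∀ q : P, dist q p ≤ ρ' → q ∈ U0 ∧ N ∈ 𝓝 (x, q) := by
    intro q hq
    have hqpb : dist q pb < 2 * s := by
      have h1 := dist_triangle q p pb
      have h2 : dist p pb < s := mem_ball.mp hp
      have : dist q p < s := lt_of_le_of_lt hq (hρ'ρ.trans hρs)
      linarith
    have h2s : 2 * s ≤ min δp δn := by rw [hsdef]; linarith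
    have hxq : (x, q) ∈ ball (xb, pb) δn := by
      rw [mem_ball, Prod.dist_eq]
      refine max_lt ?_ ?_
      · exact (mem_ball.mp hx).trans_le (min_le_right _ _)
      · exact hqpb.trans_le (h2s.trans (min_le_right _ _))
    constructor
    · exact hδpU (mem_ball.mpr (hqpb.trans_le (h2s.trans (min_le_left _ _))))
    · exact Filter.mem_of_superset (isOpen_ball.mem_nhds hxq) hδnN
  -- existence of improving steps
  have hexists : ∀ (k : ℕ) (q : P), ‖y - f (x, q)‖ < θ ^ k * r0 →
      ∃ u : P, A u = y - f (x, q) ∧ ‖u‖ < θ ^ k * r0 / c := by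
    intro k q h
    refine hselect _ _ (by positivity) ?_
    calc ‖y - f (x, q)‖ < θ ^ k * r0 := h
    _ = c * (θ ^ k * r0 / c) := by field_simp
  choose u hAu hun using hexists
  -- the iterative sequence
  obtain ⟨g, g0, gs⟩ : ∃ g : ℕ → P, g 0 = p ∧ ∀ k, g (k+1) =
      if h : ‖y - f (x, g k)‖ < θ ^ k * r0 then g k + u k (g k) h else g k :=
    ⟨fun k => Nat.rec p
      (fun k q => if h : ‖y - f (x, q)‖ < θ ^ k * r0 then q + u k q h else q) k,
      rfl, fun _ => rfl⟩
  -- key invariant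
  have key : ∀ k, ‖y - f (x, g k)‖ < θ ^ k * r0 ∧ ‖g k - p‖ ≤ ρ' * (1 - θ ^ k) := by
    intro k
    induction k with
    | zero => exact ⟨by rw [g0]; simpa using hyr0, by rw [g0]; simp⟩
    | succ k ih =>
      obtain ⟨h1, h2⟩ := ih
      have hstep : g (k+1) = g k + u k (g k) h1 := by rw [gs, dif_pos h1]
      have hub : ‖u k (g k) h1‖ < θ ^ k * r0 / c := hun k (g k) h1
      have hdiff : g (k+1) - g k = u k (g k) h1 := by rw [hstep, add_sub_cancel_left]
      have e1 : ρ' * (c - α) = r0 := by rw [hρ'def]; exact div_mul_cancel₀ _ hca.ne'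
      have keyeq : ρ' * (1 - θ ^ k) + θ ^ k * r0 / c = ρ' * (1 - θ ^ (k+1)) := by
        rw [pow_succ]
        linear_combination (-(θ ^ k / c)) * e1 + (ρ' * θ ^ k / c) * hθc + (ρ' * θ ^ k - ρ' * θ * θ ^ k) * hcinv
      have h2' : ‖g (k+1) - p‖ ≤ ρ' * (1 - θ ^ (k+1)) := by
        calc ‖g (k+1) - p‖ = ‖(g k - p) + (g (k+1) - g k)‖ := by congr 1; abel
        _ ≤ ‖g k - p‖ + ‖g (k+1) - g k‖ := norm_add_le _ _
        _ ≤ ρ' * (1 - θ ^ k) + θ ^ k * r0 / c := by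
            rw [hdiff]; exact add_le_add h2 hub.le
        _ = ρ' * (1 - θ ^ (k+1)) := keyeq
      have hθk1 : (0:ℝ) ≤ θ ^ k := (pow_pos hθ0 k).le
      have hmemk : g k ∈ U0 := (hmem (g k) (by
        rw [dist_eq_norm]
        refine h2.trans ?_
        nlinarith)).1
      have hmemk1 : g (k+1) ∈ U0 := (hmem (g (k+1)) (by
        rw [dist_eq_norm]
        refine h2'.trans ?_
        nlinarith [pow_pos hθ0 (k+1)])).1
      have hAdiff : A (g (k+1) - g k) = y - f (x, g k) := by
        rw [hdiff]; exact hAu k (g k) h1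
      have hnormeq : ‖y - f (x, g (k+1))‖ =
          ‖f (x, g (k+1)) - f (x, g k) - A (g (k+1) - g k)‖ := by
        rw [hAdiff, ← norm_neg]
        congr 1
        abel
      have h1' : ‖y - f (x, g (k+1))‖ < θ ^ (k+1) * r0 := by
        rw [hnormeq]
        calc ‖f (x, g (k+1)) - f (x, g k) - A (g (k+1) - g k)‖
            ≤ α * ‖g (k+1) - g k‖ := happ _ hmemk1 _ hmemk x hxV0
        _ < α * (θ ^ k * r0 / c) := by
            rw [hdiff]
            exact (mul_lt_mul_iff_right₀ hα).mpr hub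
        _ = θ ^ (k+1) * r0 := by
            rw [pow_succ]
            linear_combination (-(θ ^ k * r0 / c)) * hθc + (θ * θ ^ k * r0) * hcinv
      exact ⟨h1', h2'⟩
  -- Cauchy and limit
  have hcauchy : CauchySeq g := by
    refine cauchySeq_of_le_geometric θ (r0 / c) hθ1 fun n => ?_
    have h1 := (key n).1
    have hstep : g (n+1) = g n + u n (g n) h1 := by rw [gs, dif_pos h1]
    rw [dist_eq_norm, hstep]
    have : g n - (g n + u n (g n) h1) = -(u n (g n) h1) := by abel
    rw [this, norm_neg]
    calc ‖u n (g n) h1‖ ≤ θ ^ n * r0 / c := (hun n (g n) h1).le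
    _ = r0 / c * θ ^ n := by ring
  obtain ⟨q, hq⟩ := cauchySeq_tendsto_of_complete hcauchy
  have hqp : dist q p ≤ ρ' := by
    have hd : Tendsto (fun k => dist (g k) p) atTop (𝓝 (dist q p)) :=
      (hq.dist tendsto_const_nhds)
    refine le_of_tendsto hd (Eventually.of_forall fun k => ?_)
    rw [dist_eq_norm]
    have := (key k).2
    nlinarith [pow_pos hθ0 k, this]
  -- f (x, g k) → y
  have htendy : Tendsto (fun k => f (x, g k)) atTop (𝓝 y) := by
    rw [tendsto_iff_dist_tendsto_zero]
    have hb : Tendsto (fun k : ℕ => θ ^ k * r0) atTop (𝓝 0) := by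
      have := (tendsto_pow_atTop_nhds_zero_of_lt_one hθ0.le hθ1).mul_const r0
      simpa using this
    refine squeeze_zero (fun k => dist_nonneg) (fun k => ?_) hb
    rw [dist_eq_norm, ← norm_neg]
    have : -(f (x, g k) - y) = y - f (x, g k) := by abel
    rw [this]
    exact (key k).1.le
  -- f (x, g k) → f (x, q)
  have hNq : N ∈ 𝓝 (x, q) := (hmem q hqp).2
  have hcq : ContinuousAt f (x, q) := hfN.continuousAt hNq
  have htendfq : Tendsto (fun k => f (x, g k)) atTop (𝓝 (f (x, q))) := by
    have hgq : Tendsto (fun k => ((x : X), g k)) atTop (𝓝 (x, q)) :=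
      (tendsto_const_nhds.prodMk_nhds hq)
    exact hcq.tendsto.comp hgq
  have hyq : y = f (x, q) := tendsto_nhds_unique htendy htendfq
  exact ⟨q, mem_ball.mpr (hqp.trans_lt hρ'ρ), hyq.symm⟩
end

section
/- Let X, Y, P be real Banach spaces, H : X × P ⇒ Y a multifunction with 0 ∈ H(x̄,p̄), and S : P ⇒ X its implicit multifunction S(p) = {x ∈ X : 0 ∈ H(x,p)}. Suppose H is inner semicontinuous at ((x̄,p̄),0) and H is open with linear rate c > 0 with respect to x uniformly in p around ((x̄,p̄),0). Then there exist r̄, t̄ > 0 such that d(x, S(p)) ≤ c⁻¹ d(0, H(x,p)) for every (x,p) ∈ B(x̄,r̄) × B(p̄,t̄). If, moreover, H is Lipschitz-like with respect to p uniformly in x around ((x̄,p̄),0) with constant l > 0, then there exist neighborhoods V of p̄ and U of x̄ such that d(x, S(p₂)) ≤ c⁻¹ l ‖p₁ − p₂‖ for every p₁,p₂ ∈ V and every x ∈ S(p₁) ∩ U; in particular S is Lipschitz-like around (p̄,x̄) with any constant λ > c⁻¹ l. -/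
open Metric Set Filter Topology Pointwise

/-- Inner semicontinuity of a multifunction `H : α ⇒ Y` at `(a, y)`. -/
def InnerSemicontinuousAt {α Y : Type*} [TopologicalSpace α] [TopologicalSpace Y]
    (H : α → Set Y) (a : α) (y : Y) : Prop :=
  ∀ D : Set Y, IsOpen D → y ∈ D → ∃ U ∈ 𝓝 a, ∀ b ∈ U, (H b ∩ D).Nonempty

/-- `H : X × P ⇒ Y` is `c`-open with respect to `x` uniformly in `p`
around `((xb, pb), yb)`. -/
def OpenWrtXUnifP {X P Y : Type*} [NormedAddCommGroup X] [NormedAddCommGroup P]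
    [NormedAddCommGroup Y] (H : X × P → Set Y) (xb : X) (pb : P) (yb : Y)
    (c : ℝ) : Prop :=
  ∃ ε > (0 : ℝ), ∃ U ∈ 𝓝 xb, ∃ V ∈ 𝓝 pb, ∃ W ∈ 𝓝 yb,
    ∀ ρ ∈ Set.Ioo (0 : ℝ) ε, ∀ p ∈ V, ∀ x ∈ U, ∀ y ∈ H (x, p) ∩ W,
      ball y (ρ * c) ⊆ ⋃ x' ∈ ball x ρ, H (x', p)

/-- `H : X × P ⇒ Y` is Lipschitz-like with respect to `p` uniformly in `x`
around `((xb, pb), yb)` with constant `l`. -/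
def LipschitzLikeWrtPUnifX {X P Y : Type*} [NormedAddCommGroup X]
    [NormedAddCommGroup P] [NormedAddCommGroup Y] (H : X × P → Set Y)
    (xb : X) (pb : P) (yb : Y) (l : ℝ) : Prop :=
  ∃ U ∈ 𝓝 xb, ∃ V ∈ 𝓝 pb, ∃ W ∈ 𝓝 yb, ∀ x ∈ U, ∀ p ∈ V, ∀ q ∈ V,
    H (x, p) ∩ W ⊆ H (x, q) + closedBall (0 : Y) (l * ‖p - q‖)

/-- `S : P ⇒ X` is Lipschitz-like around `(pb, xb)` with constant `lam`. -/
def LipschitzLikeAround {P X : Type*} [NormedAddCommGroup P] [NormedAddCommGroup X]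
    (S : P → Set X) (pb : P) (xb : X) (lam : ℝ) : Prop :=
  ∃ V ∈ 𝓝 pb, ∃ U ∈ 𝓝 xb, ∀ p ∈ V, ∀ q ∈ V,
    S p ∩ U ⊆ S q + closedBall (0 : X) (lam * ‖p - q‖)

/-- implicit multifunction theorem, item (i). -/
theorem stmt6 {X Y P : Type*}
    [NormedAddCommGroup X] [NormedSpace ℝ X] [CompleteSpace X]
    [NormedAddCommGroup Y] [NormedSpace ℝ Y] [CompleteSpace Y]
    [NormedAddCommGroup P] [NormedSpace ℝ P] [CompleteSpace P]
    (H : X × P → Set Y) (xb : X) (pb : P) (h0 : (0 : Y) ∈ H (xb, pb))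
    (S : P → Set X) (hS : ∀ p, S p = {x : X | (0 : Y) ∈ H (x, p)})
    (hisc : InnerSemicontinuousAt H (xb, pb) 0)
    (c : ℝ) (hc : 0 < c) (hopen : OpenWrtXUnifP H xb pb 0 c) :
    (∃ rb > (0 : ℝ), ∃ tb > (0 : ℝ), ∀ x ∈ ball xb rb, ∀ p ∈ ball pb tb,
      EMetric.infEdist x (S p) ≤ ENNReal.ofReal c⁻¹ * EMetric.infEdist 0 (H (x, p))) ∧
    (∀ l : ℝ, 0 < l → LipschitzLikeWrtPUnifX H xb pb 0 l →
      (∃ V ∈ 𝓝 pb, ∃ U ∈ 𝓝 xb, ∀ p₁ ∈ V, ∀ p₂ ∈ V, ∀ x ∈ S p₁ ∩ U,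
        EMetric.infEdist x (S p₂) ≤ ENNReal.ofReal (c⁻¹ * l * ‖p₁ - p₂‖)) ∧
      (∀ lam : ℝ, c⁻¹ * l < lam → LipschitzLikeAround S pb xb lam)) := by
  classical
  -- Unpack openness
  obtain ⟨ε, hε, U, hU, V, hV, W, hW, hop⟩ := hopen
  obtain ⟨w, hw, hwW⟩ := Metric.mem_nhds_iff.mp hW
  set m := min ε (w / c) with hm
  have hm0 : 0 < m := lt_min hε (div_pos hw hc)
  set δ := c * m with hδ
  have hδ0 : 0 < δ := mul_pos hc hm0
  obtain ⟨N, hN, hNd⟩ := hisc (ball 0 δ) isOpen_ball (mem_ball_self hδ0)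
  -- key openness step
  have step : ∀ x ∈ U, ∀ p ∈ V, (H (x, p)).Nonempty → ∀ ρ : ℝ,
      Metric.infDist 0 (H (x, p)) < ρ * c → ρ < m → ∃ x' ∈ ball x ρ, x' ∈ S p := by
    intro x hx p hp hne ρ hρ1 hρ2
    obtain ⟨y, hyH, hyd⟩ := (Metric.infDist_lt_iff hne).mp hρ1
    have hρ0 : 0 < ρ := by
      have h1 : (0:ℝ) ≤ Metric.infDist 0 (H (x, p)) := Metric.infDist_nonneg
      nlinarith
    have hρc : ρ * c < w := by
      have : ρ < w / c := lt_of_lt_of_le hρ2 (min_le_right _ _)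
      calc ρ * c < (w / c) * c := by nlinarith
        _ = w := by field_simp
    have hyW : y ∈ W := by
      apply hwW
      rw [mem_ball, dist_comm]
      exact lt_trans hyd hρc
    have h0b : (0 : Y) ∈ ball y (ρ * c) := by rw [mem_ball]; exact hyd
    have := hop ρ ⟨hρ0, lt_of_lt_of_le hρ2 (min_le_left _ _)⟩ p hp x hx y ⟨hyH, hyW⟩ h0b
    simp only [mem_iUnion, exists_prop] at this
    obtain ⟨x', hx', h0'⟩ := this
    exact ⟨x', hx', by rw [hS]; exact h0'⟩
  -- real-distance key estimate
  have key : ∀ x ∈ U, ∀ p ∈ V, (H (x, p)).Nonempty →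
      Metric.infDist 0 (H (x, p)) < δ →
      Metric.infDist x (S p) ≤ c⁻¹ * Metric.infDist 0 (H (x, p)) ∧ (S p).Nonempty := by
    intro x hx p hp hne hd
    set d := Metric.infDist 0 (H (x, p)) with hdd
    have hd0 : (0:ℝ) ≤ d := Metric.infDist_nonneg
    have hdc : d / c < m := by
      rw [div_lt_iff₀ hc]
      calc d < δ := hd
        _ = m * c := by rw [hδ]; ring
    have hSne : (S p).Nonempty := by
      obtain ⟨x0, _, hx0⟩ := step x hx p hp hne ((d / c + m) / 2)
        (by
          show d < (d / c + m) / 2 * c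
          nlinarith [div_mul_cancel₀ d hc.ne'])
        (by linarith)
      exact ⟨x0, hx0⟩
    refine ⟨?_, hSne⟩
    by_contra hcon
    push_neg at hcon
    have hcd : d / c < Metric.infDist x (S p) := by
      rwa [div_eq_inv_mul]
    set t := (d / c + min (Metric.infDist x (S p)) m) / 2 with ht
    have h1 : d / c < min (Metric.infDist x (S p)) m := lt_min hcd hdc
    have ht1 : d / c < t := by rw [ht]; linarith
    have ht2 : t < min (Metric.infDist x (S p)) m := by rw [ht]; linarith
    obtain ⟨x', hx'b, hx'S⟩ := step x hx p hp hne t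
      (by rw [div_lt_iff₀ hc] at ht1; exact ht1)
      (lt_of_lt_of_le ht2 (min_le_right _ _))
    have : Metric.infDist x (S p) ≤ dist x x' := Metric.infDist_le_dist_of_mem hx'S
    have hlt : dist x x' < t := by rw [mem_ball, dist_comm] at hx'b; exact hx'b
    have := lt_of_le_of_lt this hlt
    have := lt_of_lt_of_le ht2 (min_le_left _ _)
    linarith
  -- main part (i)
  obtain ⟨rN, hrN, hrNsub⟩ := Metric.mem_nhds_iff.mp hN
  obtain ⟨ru, hru, hrusub⟩ := Metric.mem_nhds_iff.mp hU
  obtain ⟨rv, hrv, hrvsub⟩ := Metric.mem_nhds_iff.mp hV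
  have main : ∀ x ∈ ball xb (min rN ru), ∀ p ∈ ball pb (min rN rv),
      EMetric.infEdist x (S p) ≤ ENNReal.ofReal c⁻¹ * EMetric.infEdist 0 (H (x, p)) := by
    intro x hx p hp
    have hxU : x ∈ U := hrusub (by
      rw [mem_ball] at hx ⊢; exact lt_of_lt_of_le hx (min_le_right _ _))
    have hpV : p ∈ V := hrvsub (by
      rw [mem_ball] at hp ⊢; exact lt_of_lt_of_le hp (min_le_right _ _))
    have hxpN : (x, p) ∈ N := by
      apply hrNsub
      rw [mem_ball, Prod.dist_eq]
      rw [mem_ball] at hx hp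
      exact max_lt (lt_of_lt_of_le hx (min_le_left _ _)) (lt_of_lt_of_le hp (min_le_left _ _))
    obtain ⟨y, hyH, hyb⟩ := hNd _ hxpN
    have hne : (H (x, p)).Nonempty := ⟨y, hyH⟩
    have hd : Metric.infDist 0 (H (x, p)) < δ := by
      refine lt_of_le_of_lt (Metric.infDist_le_dist_of_mem hyH) ?_
      rw [mem_ball] at hyb; rwa [dist_comm]
    obtain ⟨hkey, hSne⟩ := key x hxU p hpV hne hd
    obtain ⟨xS, hxS⟩ := hSne
    have hne_top : EMetric.infEdist x (S p) ≠ ⊤ :=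
      (lt_of_le_of_lt (EMetric.infEdist_le_edist_of_mem hxS) (edist_lt_top _ _)).ne
    have hne_top2 : EMetric.infEdist 0 (H (x, p)) ≠ ⊤ :=
      (lt_of_le_of_lt (EMetric.infEdist_le_edist_of_mem hyH) (edist_lt_top _ _)).ne
    have e1 : EMetric.infEdist x (S p) = ENNReal.ofReal (Metric.infDist x (S p)) := by
      rw [Metric.infDist]; exact (ENNReal.ofReal_toReal hne_top).symm
    have e2 : EMetric.infEdist 0 (H (x, p)) = ENNReal.ofReal (Metric.infDist 0 (H (x, p))) := by
      rw [Metric.infDist]; exact (ENNReal.ofReal_toReal hne_top2).symm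
    rw [e1, e2, ← ENNReal.ofReal_mul (by positivity : (0:ℝ) ≤ c⁻¹)]
    exact ENNReal.ofReal_le_ofReal hkey
  refine ⟨⟨min rN ru, lt_min hrN hru, min rN rv, lt_min hrN hrv, main⟩, ?_⟩
  -- part (ii)
  intro l hl hLL
  obtain ⟨U', hU', V', hV', W', hW', hLip⟩ := hLL
  have hW'0 : (0 : Y) ∈ W' := mem_of_mem_nhds hW'
  have claim : ∀ p₁ ∈ ball pb (min rN rv) ∩ V', ∀ p₂ ∈ ball pb (min rN rv) ∩ V',
      ∀ x ∈ S p₁ ∩ (ball xb (min rN ru) ∩ U'),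
      EMetric.infEdist x (S p₂) ≤ ENNReal.ofReal (c⁻¹ * l * ‖p₁ - p₂‖) := by
    intro p₁ hp₁ p₂ hp₂ x hx
    have h0H : (0 : Y) ∈ H (x, p₁) := by
      have := hx.1; rw [hS] at this; exact this
    have hmem : (0 : Y) ∈ H (x, p₂) + closedBall (0 : Y) (l * ‖p₁ - p₂‖) :=
      hLip x hx.2.2 p₁ hp₁.2 p₂ hp₂.2 ⟨h0H, hW'0⟩
    obtain ⟨y, hy, z, hz, hyz⟩ := Set.mem_add.mp hmem
    have hyn : ‖y‖ ≤ l * ‖p₁ - p₂‖ := by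
      have hy2 : y = -z := eq_neg_of_add_eq_zero_left hyz
      rw [hy2, norm_neg]
      exact mem_closedBall_zero_iff.mp hz
    have h2 : EMetric.infEdist 0 (H (x, p₂)) ≤ ENNReal.ofReal (l * ‖p₁ - p₂‖) := by
      calc EMetric.infEdist 0 (H (x, p₂)) ≤ edist 0 y := EMetric.infEdist_le_edist_of_mem hy
        _ = ENNReal.ofReal ‖y‖ := by rw [edist_dist, dist_zero_left]
        _ ≤ ENNReal.ofReal (l * ‖p₁ - p₂‖) := ENNReal.ofReal_le_ofReal hyn
    calc EMetric.infEdist x (S p₂)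
        ≤ ENNReal.ofReal c⁻¹ * EMetric.infEdist 0 (H (x, p₂)) := main x hx.2.1 p₂ hp₂.1
      _ ≤ ENNReal.ofReal c⁻¹ * ENNReal.ofReal (l * ‖p₁ - p₂‖) := mul_le_mul_right h2 _
      _ = ENNReal.ofReal (c⁻¹ * (l * ‖p₁ - p₂‖)) :=
          (ENNReal.ofReal_mul (by positivity : (0:ℝ) ≤ c⁻¹)).symm
      _ = ENNReal.ofReal (c⁻¹ * l * ‖p₁ - p₂‖) := by ring_nf
  have hVmem : ball pb (min rN rv) ∩ V' ∈ 𝓝 pb :=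
    inter_mem (ball_mem_nhds _ (lt_min hrN hrv)) hV'
  have hUmem : ball xb (min rN ru) ∩ U' ∈ 𝓝 xb :=
    inter_mem (ball_mem_nhds _ (lt_min hrN hru)) hU'
  refine ⟨⟨_, hVmem, _, hUmem, claim⟩, ?_⟩
  intro lam hlam
  have hcl : 0 < c⁻¹ * l := mul_pos (by positivity) hl
  have hlam0 : 0 < lam := lt_trans hcl hlam
  refine ⟨_, hVmem, _, hUmem, ?_⟩
  intro p hp q hq x hx
  by_cases hpq : p = q
  · subst hpq
    refine Set.mem_add.mpr ⟨x, hx.1, 0, ?_, by abel⟩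
    simp [mem_closedBall]
  · have hΔ : 0 < ‖p - q‖ := norm_pos_iff.mpr (sub_ne_zero.mpr hpq)
    have h1 := claim p hp q hq x hx
    have h2 : EMetric.infEdist x (S q) < ENNReal.ofReal (lam * ‖p - q‖) := by
      refine lt_of_le_of_lt h1 ?_
      rw [ENNReal.ofReal_lt_ofReal_iff (mul_pos hlam0 hΔ)]
      exact mul_lt_mul_of_pos_right hlam hΔ
    obtain ⟨x', hx'S, hx'd⟩ := EMetric.infEdist_lt_iff.mp h2
    have hd : dist x x' < lam * ‖p - q‖ := by
      rwa [edist_lt_ofReal] at hx'd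
    refine Set.mem_add.mpr ⟨x', hx'S, x - x', ?_, by abel⟩
    rw [mem_closedBall_zero_iff]
    calc ‖x - x'‖ = dist x x' := (dist_eq_norm _ _).symm
      _ ≤ lam * ‖p - q‖ := hd.le
end

section
/- Let X, Y, P be real Banach spaces, H : X × P ⇒ Y a multifunction with 0 ∈ H(x̄,p̄), and S : P ⇒ X its implicit multifunction S(p) = {x ∈ X : 0 ∈ H(x,p)}. Suppose H is inner semicontinuous at ((x̄,p̄),0) and H is open with linear rate c > 0 with respect to p uniformly in x around ((x̄,p̄),0). Then there exist r̄, t̄ > 0 such that d(p, S⁻¹(x)) ≤ c⁻¹ d(0, H(x,p)) for every (x,p) ∈ B(x̄,r̄) × B(p̄,t̄). If, moreover, H is Lipschitz-like with respect to x uniformly in p around ((x̄,p̄),0) with constant l > 0, then there exist neighborhoods U of x̄ and V of p̄ such that d(p, S⁻¹(x₂)) ≤ c⁻¹ l ‖x₁ − x₂‖ for every x₁,x₂ ∈ U and every p ∈ S⁻¹(x₁) ∩ V; in particular S is metrically regular around (p̄,x̄) with any constant λ > c⁻¹ l. -/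
open Metric Set Filter Topology Pointwise

/-- `H : X × P ⇒ Y` is `c`-open with respect to `p` uniformly in `x`
around `((xb, pb), yb)`. -/
def OpenWrtPUnifX {X P Y : Type*} [NormedAddCommGroup X] [NormedAddCommGroup P]
    [NormedAddCommGroup Y] (H : X × P → Set Y) (xb : X) (pb : P) (yb : Y)
    (c : ℝ) : Prop :=
  ∃ ε > (0 : ℝ), ∃ U ∈ 𝓝 xb, ∃ V ∈ 𝓝 pb, ∃ W ∈ 𝓝 yb,
    ∀ ρ ∈ Set.Ioo (0 : ℝ) ε, ∀ x ∈ U, ∀ p ∈ V, ∀ y ∈ H (x, p) ∩ W,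
      ball y (ρ * c) ⊆ ⋃ q ∈ ball p ρ, H (x, q)

/-- `H : X × P ⇒ Y` is Lipschitz-like with respect to `x` uniformly in `p`
around `((xb, pb), yb)` with constant `l`. -/
def LipschitzLikeWrtXUnifP {X P Y : Type*} [NormedAddCommGroup X]
    [NormedAddCommGroup P] [NormedAddCommGroup Y] (H : X × P → Set Y)
    (xb : X) (pb : P) (yb : Y) (l : ℝ) : Prop :=
  ∃ U ∈ 𝓝 xb, ∃ V ∈ 𝓝 pb, ∃ W ∈ 𝓝 yb, ∀ x ∈ U, ∀ u ∈ U, ∀ p ∈ V,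
    H (x, p) ∩ W ⊆ H (u, p) + closedBall (0 : Y) (l * ‖x - u‖)

/-- `S : P ⇒ X` is metrically regular around `(pb, xb)` with constant `lam`. -/
def MetricallyRegularAround {P X : Type*} [NormedAddCommGroup P]
    [NormedAddCommGroup X] (S : P → Set X) (pb : P) (xb : X) (lam : ℝ) : Prop :=
  ∃ V ∈ 𝓝 pb, ∃ U ∈ 𝓝 xb, ∀ p ∈ V, ∀ x ∈ U,
    EMetric.infEdist p {q | x ∈ S q} ≤ ENNReal.ofReal lam * EMetric.infEdist x (S p)

private lemma key_est {X P Y : Type*} [NormedAddCommGroup X] [NormedAddCommGroup P]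
    [NormedAddCommGroup Y] (H : X × P → Set Y)
    (c ε w δ : ℝ) (hc : 0 < c) (hδpos : 0 < δ) (hδw : δ < w) (hδε : 2 * δ ≤ ε * c)
    (U : Set X) (V : Set P) (W : Set Y) (hWw : ball (0 : Y) w ⊆ W)
    (hkey : ∀ ρ ∈ Set.Ioo (0 : ℝ) ε, ∀ x ∈ U, ∀ p ∈ V, ∀ y ∈ H (x, p) ∩ W,
      ball y (ρ * c) ⊆ ⋃ q ∈ ball p ρ, H (x, q))
    (x : X) (p : P) (hx : x ∈ U) (hp : p ∈ V)
    (hnear : ∃ y ∈ H (x, p), ‖y‖ < δ) :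
    EMetric.infEdist p {q | (0 : Y) ∈ H (x, q)} ≤
      ENNReal.ofReal c⁻¹ * EMetric.infEdist 0 (H (x, p)) := by
  obtain ⟨y₀, hy₀H, hy₀⟩ := hnear
  have hεpos : 0 < ε := by nlinarith
  set e := EMetric.infEdist 0 (H (x, p)) with he
  have heδ : e < ENNReal.ofReal δ := by
    calc e ≤ edist 0 y₀ := EMetric.infEdist_le_edist_of_mem hy₀H
      _ = ENNReal.ofReal ‖y₀‖ := by rw [edist_dist, dist_zero_left]
      _ < ENNReal.ofReal δ := (ENNReal.ofReal_lt_ofReal_iff hδpos).2 hy₀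
  have hetop : e ≠ ⊤ := (heδ.trans ENNReal.ofReal_lt_top).ne
  set d := e.toReal with hd
  have hed : e = ENNReal.ofReal d := (ENNReal.ofReal_toReal hetop).symm
  have hd0 : 0 ≤ d := ENNReal.toReal_nonneg
  have hdδ : d < δ := by
    rw [hed] at heδ
    exact (ENNReal.ofReal_lt_ofReal_iff hδpos).1 heδ
  rw [hed, ← ENNReal.ofReal_mul (by positivity)]
  refine ENNReal.le_of_forall_pos_le_add fun ε' hε' _ => ?_
  have hε'R : (0 : ℝ) < (ε' : ℝ) := hε'
  set η := min ((ε' : ℝ) / 2) (ε / 4) with hη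
  have hηpos : 0 < η := lt_min (by positivity) (by positivity)
  set ρ := c⁻¹ * d + η with hρ
  have hρpos : 0 < ρ := by positivity
  have hcd : c⁻¹ * d < ε / 2 := by
    rw [inv_mul_eq_div, div_lt_iff₀ hc]
    nlinarith
  have hρε : ρ < ε := by
    have := min_le_right ((ε' : ℝ) / 2) (ε / 4)
    have : η ≤ ε / 4 := this
    simp only [hρ]
    nlinarith
  have hdρc : d < ρ * c := by
    have h1 : c⁻¹ * d * c = d := by field_simp
    simp only [hρ]
    nlinarith
  have hρc : 0 < ρ * c := by positivity
  have hlt : e < min (ENNReal.ofReal (ρ * c)) (ENNReal.ofReal w) := by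
    refine lt_min ?_ ?_
    · rw [hed]; exact (ENNReal.ofReal_lt_ofReal_iff hρc).2 hdρc
    · exact heδ.trans_le (ENNReal.ofReal_le_ofReal hδw.le)
  obtain ⟨y, hyH, hye⟩ := EMetric.infEdist_lt_iff.1 hlt
  rw [edist_dist, lt_min_iff] at hye
  have hy1 : dist (0 : Y) y < ρ * c := (ENNReal.ofReal_lt_ofReal_iff hρc).1 hye.1
  have hy2 : dist (0 : Y) y < w := (ENNReal.ofReal_lt_ofReal_iff (hδpos.trans hδw)).1 hye.2
  have hyW : y ∈ W := hWw (by rw [mem_ball, dist_comm]; exact hy2)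
  have h0m : (0 : Y) ∈ ball y (ρ * c) := mem_ball.2 hy1
  have := hkey ρ ⟨hρpos, hρε⟩ x hx p hp y ⟨hyH, hyW⟩ h0m
  simp only [mem_iUnion, exists_prop] at this
  obtain ⟨q, hqp, hq0⟩ := this
  calc EMetric.infEdist p {q | (0 : Y) ∈ H (x, q)} ≤ edist p q :=
      EMetric.infEdist_le_edist_of_mem hq0
    _ = ENNReal.ofReal (dist p q) := edist_dist _ _
    _ ≤ ENNReal.ofReal ρ :=
      ENNReal.ofReal_le_ofReal (by rw [dist_comm]; exact (mem_ball.1 hqp).le)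
    _ = ENNReal.ofReal (c⁻¹ * d) + ENNReal.ofReal η := by
      rw [← ENNReal.ofReal_add (by positivity) hηpos.le]
    _ ≤ ENNReal.ofReal (c⁻¹ * d) + ε' := by
      gcongr
      calc ENNReal.ofReal η ≤ ENNReal.ofReal (ε' : ℝ) :=
          ENNReal.ofReal_le_ofReal ((min_le_left _ _).trans (by linarith))
        _ = ε' := ENNReal.ofReal_coe_nnreal

/-- implicit multifunction theorem, item (ii). -/
theorem stmt7 {X Y P : Type*}
    [NormedAddCommGroup X] [NormedSpace ℝ X] [CompleteSpace X]
    [NormedAddCommGroup Y] [NormedSpace ℝ Y] [CompleteSpace Y]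
    [NormedAddCommGroup P] [NormedSpace ℝ P] [CompleteSpace P]
    (H : X × P → Set Y) (xb : X) (pb : P) (h0 : (0 : Y) ∈ H (xb, pb))
    (S : P → Set X) (hS : ∀ p, S p = {x : X | (0 : Y) ∈ H (x, p)})
    (hisc : InnerSemicontinuousAt H (xb, pb) 0)
    (c : ℝ) (hc : 0 < c) (hopen : OpenWrtPUnifX H xb pb 0 c) :
    (∃ rb > (0 : ℝ), ∃ tb > (0 : ℝ), ∀ x ∈ ball xb rb, ∀ p ∈ ball pb tb,
      EMetric.infEdist p {q | x ∈ S q} ≤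
        ENNReal.ofReal c⁻¹ * EMetric.infEdist 0 (H (x, p))) ∧
    (∀ l : ℝ, 0 < l → LipschitzLikeWrtXUnifP H xb pb 0 l →
      (∃ U ∈ 𝓝 xb, ∃ V ∈ 𝓝 pb, ∀ x₁ ∈ U, ∀ x₂ ∈ U, ∀ p ∈ {q | x₁ ∈ S q} ∩ V,
        EMetric.infEdist p {q | x₂ ∈ S q} ≤ ENNReal.ofReal (c⁻¹ * l * ‖x₁ - x₂‖)) ∧
      (∀ lam : ℝ, c⁻¹ * l < lam → MetricallyRegularAround S pb xb lam)) := by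
  obtain ⟨ε, hε, U, hU, V, hV, W, hW, hkey⟩ := hopen
  obtain ⟨w, hw, hWw⟩ := Metric.mem_nhds_iff.1 hW
  set δ := min (w / 2) (ε * c / 2) with hδdef
  have hδpos : 0 < δ := lt_min (by linarith) (by positivity)
  have hδw : δ < w := (min_le_left _ _).trans_lt (by linarith)
  have hδε : 2 * δ ≤ ε * c := by
    have := min_le_right (w / 2) (ε * c / 2); linarith
  obtain ⟨N, hN, hNball⟩ := hisc (ball 0 δ) isOpen_ball (mem_ball_self hδpos)
  obtain ⟨rU, hrU, hUb⟩ := Metric.mem_nhds_iff.1 hU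
  obtain ⟨rV, hrV, hVb⟩ := Metric.mem_nhds_iff.1 hV
  obtain ⟨rN, hrN, hNb⟩ := Metric.mem_nhds_iff.1 hN
  set rb := min rU rN with hrbdef
  set tb := min rV rN with htbdef
  have hrb : 0 < rb := lt_min hrU hrN
  have htb : 0 < tb := lt_min hrV hrN
  have main : ∀ x ∈ ball xb rb, ∀ p ∈ ball pb tb,
      EMetric.infEdist p {q | x ∈ S q} ≤
        ENNReal.ofReal c⁻¹ * EMetric.infEdist 0 (H (x, p)) := by
    intro x hx p hp
    have hxU : x ∈ U := hUb (mem_ball.2 ((mem_ball.1 hx).trans_le (min_le_left _ _)))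
    have hpV : p ∈ V := hVb (mem_ball.2 ((mem_ball.1 hp).trans_le (min_le_left _ _)))
    have hxpN : (x, p) ∈ N := by
      apply hNb
      rw [← ball_prod_same]
      exact ⟨mem_ball.2 ((mem_ball.1 hx).trans_le (min_le_right _ _)),
        mem_ball.2 ((mem_ball.1 hp).trans_le (min_le_right _ _))⟩
    obtain ⟨y, hyH⟩ := hNball _ hxpN
    have hset : {q | x ∈ S q} = {q | (0 : Y) ∈ H (x, q)} := by
      ext q; simp [hS]
    rw [hset]
    exact key_est H c ε w δ hc hδpos hδw hδε U V W hWw hkey x p hxU hpV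
      ⟨y, hyH.1, mem_ball_zero_iff.1 hyH.2⟩
  refine ⟨⟨rb, hrb, tb, htb, main⟩, ?_⟩
  intro l hl hlip
  obtain ⟨U₂, hU₂, V₂, hV₂, W₂, hW₂, hl2⟩ := hlip
  set U' := ball xb rb ∩ U₂ with hU'def
  set V' := ball pb tb ∩ V₂ with hV'def
  have hU' : U' ∈ 𝓝 xb := inter_mem (ball_mem_nhds _ hrb) hU₂
  have hV' : V' ∈ 𝓝 pb := inter_mem (ball_mem_nhds _ htb) hV₂
  have claim : ∀ x₁ ∈ U', ∀ x₂ ∈ U', ∀ p ∈ {q | x₁ ∈ S q} ∩ V',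
      EMetric.infEdist p {q | x₂ ∈ S q} ≤ ENNReal.ofReal (c⁻¹ * l * ‖x₁ - x₂‖) := by
    intro x₁ hx₁ x₂ hx₂ p hp
    have h01 : (0 : Y) ∈ H (x₁, p) := by
      have := hp.1
      rw [Set.mem_setOf_eq, hS] at this
      exact this
    have h0W : (0 : Y) ∈ W₂ := mem_of_mem_nhds hW₂
    have hmem := hl2 x₁ hx₁.2 x₂ hx₂.2 p hp.2.2 ⟨h01, h0W⟩
    rw [Set.mem_add] at hmem
    obtain ⟨a, ha, b, hb, hab⟩ := hmem
    have hanorm : ‖a‖ ≤ l * ‖x₁ - x₂‖ := by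
      have hab' : a = -b := eq_neg_of_add_eq_zero_left hab
      rw [hab', norm_neg]
      exact mem_closedBall_zero_iff.1 hb
    have hinf : EMetric.infEdist 0 (H (x₂, p)) ≤ ENNReal.ofReal (l * ‖x₁ - x₂‖) := by
      calc EMetric.infEdist 0 (H (x₂, p)) ≤ edist 0 a :=
          EMetric.infEdist_le_edist_of_mem ha
        _ = ENNReal.ofReal ‖a‖ := by rw [edist_dist, dist_zero_left]
        _ ≤ ENNReal.ofReal (l * ‖x₁ - x₂‖) := ENNReal.ofReal_le_ofReal hanorm
    calc EMetric.infEdist p {q | x₂ ∈ S q}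
        ≤ ENNReal.ofReal c⁻¹ * EMetric.infEdist 0 (H (x₂, p)) := main x₂ hx₂.1 p hp.2.1
      _ ≤ ENNReal.ofReal c⁻¹ * ENNReal.ofReal (l * ‖x₁ - x₂‖) := by gcongr
      _ = ENNReal.ofReal (c⁻¹ * l * ‖x₁ - x₂‖) := by
          rw [← ENNReal.ofReal_mul (by positivity), mul_assoc]
  refine ⟨⟨U', hU', V', hV', claim⟩, ?_⟩
  intro lam hlam
  have hk : 0 < c⁻¹ * l := by positivity
  have hlam0 : 0 < lam := hk.trans hlam
  obtain ⟨r3, hr3, hr3U⟩ := Metric.mem_nhds_iff.1 hU'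
  obtain ⟨t1, ht1, ht1V⟩ := Metric.mem_nhds_iff.1 hV'
  set r := r3 / 3 with hrdef
  have hr : 0 < r := by positivity
  set δ₂ := c * lam * r / 2 with hδ₂def
  have hδ₂pos : 0 < δ₂ := by positivity
  obtain ⟨N₂, hN₂, hN₂ball⟩ := hisc (ball 0 δ₂) isOpen_ball (mem_ball_self hδ₂pos)
  obtain ⟨rN₂, hrN₂, hN₂b⟩ := Metric.mem_nhds_iff.1 hN₂
  set r'' := min r rN₂ with hr''def
  set t'' := min t1 rN₂ with ht''def
  have hr'' : 0 < r'' := lt_min hr hrN₂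
  have ht'' : 0 < t'' := lt_min ht1 hrN₂
  refine ⟨ball pb t'', ball_mem_nhds _ ht'', ball xb r'', ball_mem_nhds _ hr'', ?_⟩
  intro p hp x hx
  have hpV' : p ∈ V' := ht1V (mem_ball.2 ((mem_ball.1 hp).trans_le (min_le_left _ _)))
  have hxr : dist x xb < r := (mem_ball.1 hx).trans_le (min_le_left _ _)
  have hxU' : x ∈ U' := hr3U (mem_ball.2 (by simp only [hrdef] at hxr ⊢; linarith))
  have hxpN₂ : (x, p) ∈ N₂ := by
    apply hN₂b
    rw [← ball_prod_same]
    exact ⟨mem_ball.2 ((mem_ball.1 hx).trans_le (min_le_right _ _)),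
      mem_ball.2 ((mem_ball.1 hp).trans_le (min_le_right _ _))⟩
  obtain ⟨y₂, hy₂⟩ := hN₂ball _ hxpN₂
  have hbound : EMetric.infEdist 0 (H (x, p)) ≤ ENNReal.ofReal δ₂ := by
    calc EMetric.infEdist 0 (H (x, p)) ≤ edist 0 y₂ :=
        EMetric.infEdist_le_edist_of_mem hy₂.1
      _ = ENNReal.ofReal ‖y₂‖ := by rw [edist_dist, dist_zero_left]
      _ ≤ ENNReal.ofReal δ₂ := ENNReal.ofReal_le_ofReal (mem_ball_zero_iff.1 hy₂.2).le
  by_cases hcase : EMetric.infEdist x (S p) < ENNReal.ofReal r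
  · refine ENNReal.le_of_forall_pos_le_add fun ε' hε' hfin => ?_
    have hε'R : (0 : ℝ) < (ε' : ℝ) := hε'
    set ζ := (ε' : ℝ) / (c⁻¹ * l) with hζdef
    have hζ : 0 < ζ := by positivity
    have hne : EMetric.infEdist x (S p) ≠ ⊤ := (hcase.trans ENNReal.ofReal_lt_top).ne
    have hlt : EMetric.infEdist x (S p) <
        min (ENNReal.ofReal r) (EMetric.infEdist x (S p) + ENNReal.ofReal ζ) := by
      refine lt_min hcase (ENNReal.lt_add_right hne ?_)
      simp [ENNReal.ofReal_pos.2 hζ, ne_of_gt (ENNReal.ofReal_pos.2 hζ)]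
    obtain ⟨x₁, hx₁S, hx₁e⟩ := EMetric.infEdist_lt_iff.1 hlt
    rw [lt_min_iff] at hx₁e
    have hdist : dist x x₁ < r := by
      have h := hx₁e.1
      rw [edist_dist] at h
      exact (ENNReal.ofReal_lt_ofReal_iff hr).1 h
    have hx₁U' : x₁ ∈ U' := by
      apply hr3U
      rw [mem_ball]
      calc dist x₁ xb ≤ dist x₁ x + dist x xb := dist_triangle _ _ _
        _ < r + r := by rw [dist_comm]; exact add_lt_add hdist hxr
        _ ≤ r3 := by simp only [hrdef]; linarith
    have hcl := claim x₁ hx₁U' x hxU' p ⟨hx₁S, hpV'⟩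
    calc EMetric.infEdist p {q | x ∈ S q}
        ≤ ENNReal.ofReal (c⁻¹ * l * ‖x₁ - x‖) := hcl
      _ = ENNReal.ofReal (c⁻¹ * l) * edist x x₁ := by
          rw [edist_dist, ← ENNReal.ofReal_mul hk.le, dist_comm, dist_eq_norm]
      _ ≤ ENNReal.ofReal (c⁻¹ * l) * (EMetric.infEdist x (S p) + ENNReal.ofReal ζ) := by
          gcongr
          exact hx₁e.2.le
      _ = ENNReal.ofReal (c⁻¹ * l) * EMetric.infEdist x (S p) +
          ENNReal.ofReal (c⁻¹ * l) * ENNReal.ofReal ζ := mul_add _ _ _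
      _ ≤ ENNReal.ofReal lam * EMetric.infEdist x (S p) + ε' := by
          have h2 : ENNReal.ofReal (c⁻¹ * l) * ENNReal.ofReal ζ = (ε' : ENNReal) := by
            rw [← ENNReal.ofReal_mul hk.le]
            have h3 : c⁻¹ * l * ζ = (ε' : ℝ) := by rw [hζdef]; field_simp
            rw [h3, ENNReal.ofReal_coe_nnreal]
          rw [h2]
          exact add_le_add (mul_le_mul_left (ENNReal.ofReal_le_ofReal hlam.le) _) le_rfl
  · push_neg at hcase
    calc EMetric.infEdist p {q | x ∈ S q}
        ≤ ENNReal.ofReal c⁻¹ * EMetric.infEdist 0 (H (x, p)) := main x hxU'.1 p hpV'.1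
      _ ≤ ENNReal.ofReal c⁻¹ * ENNReal.ofReal δ₂ := by gcongr
      _ = ENNReal.ofReal (c⁻¹ * δ₂) := (ENNReal.ofReal_mul (by positivity)).symm
      _ ≤ ENNReal.ofReal (lam * r) := by
          apply ENNReal.ofReal_le_ofReal
          have h1 : c⁻¹ * δ₂ = lam * r / 2 := by
            simp only [hδ₂def]; field_simp
          rw [h1]; nlinarith
      _ = ENNReal.ofReal lam * ENNReal.ofReal r := ENNReal.ofReal_mul hlam0.le
      _ ≤ ENNReal.ofReal lam * EMetric.infEdist x (S p) := by gcongr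
end

section
/- Let X, Y, Z, W be real Banach spaces, F : X × Y ⇒ Z a multifunction, g : W → Z a function and (x̄,ȳ,z̄,w̄) ∈ X × Y × Z × W with z̄ := −g(w̄) ∈ F(x̄,ȳ). Define Γ : Y × W ⇒ X by Γ(y,w) = {x ∈ X : 0 ∈ F(x,y) + g(w)}. Assume: (i) F is Lipschitz-like with respect to y uniformly in x around ((x̄,ȳ),z̄) with constant η ≥ 0; (ii) F is metrically regular with respect to x uniformly in y around ((x̄,ȳ),z̄) with constant k > 0; (iii) for every y in a neighborhood of ȳ, the multifunction x ⇒ F(x,y) is inner semicontinuous at (x̄,z̄); (iv) g is Lipschitz continuous on a neighborhood of w̄ with constant λ. Then there exists α > 0 such that for every (y,w),(y′,w′) ∈ D(ȳ,α) × D(w̄,α) and every ε > 0, Γ(y′,w′) ∩ D(x̄,α) ⊆ Γ(y,w) + (k+ε)(η‖y−y′‖ + λ‖w−w′‖)·D_X. In particular, Γ is Lipschitz-like around ((ȳ,w̄),x̄). -/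
open Metric Set Filter Topology Pointwise

/-- Lipschitz-like behavior of the implicit multifunction
`Γ(y,w) = {x : 0 ∈ F(x,y) + g(w)}`. -/
theorem stmt8 {X Y Z W : Type*}
    [NormedAddCommGroup X] [NormedSpace ℝ X] [CompleteSpace X]
    [NormedAddCommGroup Y] [NormedSpace ℝ Y] [CompleteSpace Y]
    [NormedAddCommGroup Z] [NormedSpace ℝ Z] [CompleteSpace Z]
    [NormedAddCommGroup W] [NormedSpace ℝ W] [CompleteSpace W]
    (F : X × Y → Set Z) (g : W → Z) (xb : X) (yb : Y) (zb : Z) (wb : W)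
    (hzb : zb = -g wb) (hzbF : zb ∈ F (xb, yb))
    (Γ : Y × W → Set X)
    (hΓ : ∀ y w, Γ (y, w) = {x : X | ∃ v ∈ F (x, y), v + g w = 0})
    (η : ℝ) (hη : 0 ≤ η)
    -- (i) F is Lipschitz-like w.r.t. y uniformly in x around ((xb,yb),zb), constant η
    (hFlip : ∃ U ∈ 𝓝 xb, ∃ V ∈ 𝓝 yb, ∃ W₀ ∈ 𝓝 zb, ∀ x ∈ U, ∀ y ∈ V, ∀ y' ∈ V,
      F (x, y) ∩ W₀ ⊆ F (x, y') + closedBall (0 : Z) (η * ‖y - y'‖))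
    (k : ℝ) (hk : 0 < k)
    -- (ii) F is metrically regular w.r.t. x uniformly in y around ((xb,yb),zb), constant k
    (hFreg : ∃ U ∈ 𝓝 xb, ∃ V ∈ 𝓝 yb, ∃ W₀ ∈ 𝓝 zb, ∀ x ∈ U, ∀ y ∈ V, ∀ z ∈ W₀,
      EMetric.infEdist x {x' : X | z ∈ F (x', y)} ≤
        ENNReal.ofReal k * EMetric.infEdist z (F (x, y)))
    -- (iii) F(·,y) is inner semicontinuous at (xb, zb) for y near yb
    (hisc : ∃ N ∈ 𝓝 yb, ∀ y ∈ N, ∀ D : Set Z, IsOpen D → zb ∈ D →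
      ∃ U ∈ 𝓝 xb, ∀ x ∈ U, (F (x, y) ∩ D).Nonempty)
    (lam : ℝ) (hlam : 0 ≤ lam)
    -- (iv) g is Lipschitz around wb with constant lam
    (hg : ∃ U ∈ 𝓝 wb, ∀ w ∈ U, ∀ w' ∈ U, ‖g w - g w'‖ ≤ lam * ‖w - w'‖) :
    (∃ α > (0 : ℝ), ∀ y ∈ closedBall yb α, ∀ w ∈ closedBall wb α,
      ∀ y' ∈ closedBall yb α, ∀ w' ∈ closedBall wb α, ∀ ε > (0 : ℝ),
      Γ (y', w') ∩ closedBall xb α ⊆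
        Γ (y, w) + closedBall (0 : X) ((k + ε) * (η * ‖y - y'‖ + lam * ‖w - w'‖))) ∧
    (∃ L > (0 : ℝ), ∃ V ∈ 𝓝 (yb, wb), ∃ U ∈ 𝓝 xb, ∀ q ∈ V, ∀ q' ∈ V,
      Γ q ∩ U ⊆ Γ q' + closedBall (0 : X) (L * (‖q.1 - q'.1‖ + ‖q.2 - q'.2‖))) := by
  classical
  obtain ⟨U₁, hU₁, V₁, hV₁, W₁, hW₁, hlip⟩ := hFlip
  obtain ⟨U₂, hU₂, V₂, hV₂, W₂, hW₂, hreg⟩ := hFreg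
  obtain ⟨Ug, hUg, hgl⟩ := hg
  obtain ⟨δx, hδx, hδxs⟩ := (Metric.nhds_basis_closedBall.mem_iff).1 (inter_mem hU₁ hU₂)
  obtain ⟨δy, hδy, hδys⟩ := (Metric.nhds_basis_closedBall.mem_iff).1 (inter_mem hV₁ hV₂)
  obtain ⟨δz, hδz, hδzs⟩ := (Metric.nhds_basis_closedBall.mem_iff).1 (inter_mem hW₁ hW₂)
  obtain ⟨δw, hδw, hδws⟩ := (Metric.nhds_basis_closedBall.mem_iff).1 hUg
  set α : ℝ := min (min δx δy) (min δw (δz / (lam + 1))) with hαdef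
  have hαpos : 0 < α := by
    refine lt_min (lt_min hδx hδy) (lt_min hδw ?_)
    positivity
  have hαδx : α ≤ δx := le_trans (min_le_left _ _) (min_le_left _ _)
  have hαδy : α ≤ δy := le_trans (min_le_left _ _) (min_le_right _ _)
  have hαδw : α ≤ δw := le_trans (min_le_right _ _) (min_le_left _ _)
  have hαδz : lam * α ≤ δz := by
    have h1 : α ≤ δz / (lam + 1) := le_trans (min_le_right _ _) (min_le_right _ _)
    have h2 : lam * α ≤ lam * (δz / (lam + 1)) := by
      exact mul_le_mul_of_nonneg_left h1 hlam
    have h3 : lam * (δz / (lam + 1)) ≤ δz := by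
      rw [mul_div_assoc'] at *
      rw [div_le_iff₀ (by positivity)]
      nlinarith
    linarith
  -- membership facts for w near wb
  have hwUg : ∀ w ∈ closedBall wb α, w ∈ Ug := fun w hw =>
    hδws (closedBall_subset_closedBall hαδw hw)
  have hwbUg : wb ∈ Ug := hδws (mem_closedBall_self (le_of_lt hδw))
  have hzmem : ∀ w ∈ closedBall wb α, -g w ∈ W₁ ∩ W₂ := by
    intro w hw
    apply hδzs
    rw [mem_closedBall, dist_eq_norm, hzb]
    have heq : -g w - -g wb = g wb - g w := by abel
    rw [heq]
    have h1 : ‖g wb - g w‖ ≤ lam * ‖wb - w‖ := hgl wb hwbUg w (hwUg w hw)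
    have h2 : ‖wb - w‖ ≤ α := by
      rw [mem_closedBall, dist_eq_norm] at hw
      rw [norm_sub_rev]; exact hw
    calc ‖g wb - g w‖ ≤ lam * ‖wb - w‖ := h1
      _ ≤ lam * α := mul_le_mul_of_nonneg_left h2 hlam
      _ ≤ δz := hαδz
  -- the key inclusion
  have key : ∀ y ∈ closedBall yb α, ∀ w ∈ closedBall wb α,
      ∀ y' ∈ closedBall yb α, ∀ w' ∈ closedBall wb α, ∀ ε > (0 : ℝ),
      Γ (y', w') ∩ closedBall xb α ⊆
        Γ (y, w) + closedBall (0 : X) ((k + ε) * (η * ‖y - y'‖ + lam * ‖w - w'‖)) := by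
    intro y hy w hw y' hy' w' hw' ε hε x hx
    obtain ⟨hxΓ, hxb⟩ := hx
    rw [hΓ] at hxΓ
    obtain ⟨v, hvF, hveq⟩ := hxΓ
    have hv : v = -g w' := eq_neg_of_add_eq_zero_left hveq
    have hxU : x ∈ U₁ ∩ U₂ := hδxs (closedBall_subset_closedBall hαδx hxb)
    have hyV : y ∈ V₁ ∩ V₂ := hδys (closedBall_subset_closedBall hαδy hy)
    have hy'V : y' ∈ V₁ ∩ V₂ := hδys (closedBall_subset_closedBall hαδy hy')
    have hvW : v ∈ W₁ ∩ W₂ := hv ▸ hzmem w' hw'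
    have hzW : -g w ∈ W₁ ∩ W₂ := hzmem w hw
    -- Lipschitz-like step
    have hvF2 : v ∈ F (x, y) + closedBall (0 : Z) (η * ‖y' - y‖) :=
      hlip x hxU.1 y' hy'V.1 y hyV.1 ⟨hvF, hvW.1⟩
    obtain ⟨u, hu, c, hc, huc⟩ := hvF2
    rw [mem_closedBall_zero_iff] at hc
    have hgg : ‖g w' - g w‖ ≤ lam * ‖w' - w‖ := hgl w' (hwUg w' hw') w (hwUg w hw)
    set r : ℝ := η * ‖y - y'‖ + lam * ‖w - w'‖ with hrdef
    have hr0 : 0 ≤ r := by positivity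
    have hdzu : ‖-g w - u‖ ≤ r := by
      have h1 : ‖-g w - u‖ ≤ ‖-g w - v‖ + ‖v - u‖ := norm_sub_le_norm_sub_add_norm_sub _ _ _
      have h2 : ‖-g w - v‖ = ‖g w' - g w‖ := by
        have heq : -g w - v = g w' - g w := by rw [hv]; abel
        rw [heq]
      have huc' : u + c = v := huc
      have h3 : ‖v - u‖ = ‖c‖ := by
        have heq : v - u = c := by rw [← huc']; abel
        rw [heq]
      rw [h2, h3] at h1
      have h4 : ‖y' - y‖ = ‖y - y'‖ := norm_sub_rev _ _
      have h5 : ‖w' - w‖ = ‖w - w'‖ := norm_sub_rev _ _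
      rw [h4] at hc
      rw [h5] at hgg
      rw [hrdef]; linarith
    rcases eq_or_lt_of_le hr0 with hr | hr
    · -- degenerate case r = 0
      have hn1 := mul_nonneg hη (norm_nonneg (y - y'))
      have hn2 := mul_nonneg hlam (norm_nonneg (w - w'))
      have hη0 : η * ‖y - y'‖ = 0 := by rw [hrdef] at hr; linarith
      have hl0 : lam * ‖w - w'‖ = 0 := by rw [hrdef] at hr; linarith
      have hzu : -g w = u := by
        have : ‖-g w - u‖ ≤ 0 := by rw [hrdef] at hr; linarith [hdzu]
        have := le_antisymm this (norm_nonneg _)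
        rwa [norm_eq_zero, sub_eq_zero] at this
      have hxΓ' : x ∈ Γ (y, w) := by
        rw [hΓ]
        exact ⟨-g w, hzu ▸ hu, by abel⟩
      refine ⟨x, hxΓ', 0, ?_, add_zero x⟩
      rw [mem_closedBall_zero_iff, norm_zero]
      positivity
    · -- main case r > 0
      have hregx := hreg x hxU.2 y hyV.2 (-g w) hzW.2
      have hinf : EMetric.infEdist (-g w) (F (x, y)) ≤ ENNReal.ofReal r := by
        refine le_trans (EMetric.infEdist_le_edist_of_mem hu) ?_
        rw [edist_dist, dist_eq_norm]
        exact ENNReal.ofReal_le_ofReal hdzu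
      have hlt : EMetric.infEdist x {x' : X | -g w ∈ F (x', y)} <
          ENNReal.ofReal ((k + ε) * r) := by
        refine (hregx.trans (mul_le_mul_right hinf _)).trans_lt ?_
        rw [← ENNReal.ofReal_mul hk.le]
        apply ENNReal.ofReal_lt_ofReal_iff_of_nonneg (by positivity) |>.2
        nlinarith
      obtain ⟨x', hx'S, hdx'⟩ := EMetric.infEdist_lt_iff.1 hlt
      have hdist : ‖x - x'‖ ≤ (k + ε) * r := by
        rw [← dist_eq_norm]
        exact le_of_lt (edist_lt_ofReal.1 hdx')
      have hx'Γ : x' ∈ Γ (y, w) := by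
        rw [hΓ]
        exact ⟨-g w, hx'S, by abel⟩
      exact ⟨x', hx'Γ, x - x', mem_closedBall_zero_iff.2 hdist, add_sub_cancel x' x⟩
  refine ⟨⟨α, hαpos, key⟩, (k + 1) * (η + lam + 1), by positivity,
    closedBall yb α ×ˢ closedBall wb α,
    prod_mem_nhds (closedBall_mem_nhds _ hαpos) (closedBall_mem_nhds _ hαpos),
    closedBall xb α, closedBall_mem_nhds _ hαpos, ?_⟩
  intro q hq q' hq' x hx
  have hx' : x ∈ Γ (q.1, q.2) ∩ closedBall xb α := by
    rwa [Prod.mk.eta]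
  have h := key q'.1 hq'.1 q'.2 hq'.2 q.1 hq.1 q.2 hq.2 1 one_pos hx'
  obtain ⟨a, ha, b, hb, hab⟩ := h
  rw [mem_closedBall_zero_iff] at hb
  have ha' : a ∈ Γ q' := by rwa [Prod.mk.eta] at ha
  refine ⟨a, ha', b, mem_closedBall_zero_iff.2 ?_, hab⟩
  have h1 : ‖q'.1 - q.1‖ = ‖q.1 - q'.1‖ := norm_sub_rev _ _
  have h2 : ‖q'.2 - q.2‖ = ‖q.2 - q'.2‖ := norm_sub_rev _ _
  rw [h1, h2] at hb
  refine hb.trans ?_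
  have n1 := norm_nonneg (q.1 - q'.1)
  have n2 := norm_nonneg (q.2 - q'.2)
  nlinarith [mul_nonneg hη n2, mul_nonneg hlam n1, mul_nonneg hη n1, mul_nonneg hlam n2, hk.le]
end

section
/- Let X, Y, P be real Banach spaces, F : X × P ⇒ Y and G : X ⇒ Y multifunctions and (x̄,p̄,ȳ) ∈ X × P × Y with ȳ ∈ F(x̄,p̄) and −ȳ ∈ G(x̄). Let S : P ⇒ X be defined by S(p) = {x ∈ X : 0 ∈ F(x,p) + G(x)}. Assume: (i) (F,G) is locally sum-stable around (x̄,p̄,ȳ,−ȳ); (ii) for every p in a neighborhood of p̄, the graph of F(·,p) is closed; (iii) Gr G is closed; (iv) F is Lipschitz-like around ((x̄,p̄),ȳ) with constant L > 0 (sum norm on X × P); (v) G is metrically regular around (x̄,−ȳ) with constant m > 0; (vi) G is inner semicontinuous at (x̄,−ȳ); (vii) L·m < 1. Then: (a) there exist τ, t > 0 such that d(x, S(p)) ≤ m(1 − Lm)⁻¹ d(0, F(x,p) + G(x)) for every (x,p) ∈ B(x̄,τ) × B(p̄,t); and (b) there exist neighborhoods V of p̄ and U of x̄ such that d(x, S(p₂))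 ≤ m L (1 − Lm)⁻¹ ‖p₁ − p₂‖ for every p₁,p₂ ∈ V and every x ∈ S(p₁) ∩ U; in particular S is Lipschitz-like around (p̄,x̄) with any constant λ > mL/(1 − Lm). -/
set_option maxHeartbeats 1000000

open Metric Set Filter Topology Pointwise
open scoped NNReal ENNReal

/-- The pair `(F, G)` is locally sum-stable around `(xb, pb, yb, zb)`. -/
def LocSumStableP {X P Y : Type*} [NormedAddCommGroup X] [NormedAddCommGroup P]
    [NormedAddCommGroup Y] (F : X × P → Set Y) (G : X → Set Y)
    (xb : X) (pb : P) (yb zb : Y) : Prop :=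
  ∀ ε > (0 : ℝ), ∃ δ > (0 : ℝ), ∀ x ∈ ball xb δ, ∀ p ∈ ball pb δ,
    ∀ w ∈ (F (x, p) + G x) ∩ ball (yb + zb) δ,
      ∃ y ∈ F (x, p) ∩ ball yb ε, ∃ z ∈ G x ∩ ball zb ε, w = y + z

/-- `F : X × P ⇒ Y` is Lipschitz-like around `((xb, pb), yb)` with constant `L`
(sum norm on `X × P`). -/
def LipschitzLikeAroundP {X P Y : Type*} [NormedAddCommGroup X]
    [NormedAddCommGroup P] [NormedAddCommGroup Y] (F : X × P → Set Y)
    (xb : X) (pb : P) (yb : Y) (L : ℝ) : Prop :=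
  ∃ U ∈ 𝓝 (xb, pb), ∃ W ∈ 𝓝 yb, ∀ q ∈ U, ∀ q' ∈ U,
    F q ∩ W ⊆ F q' + closedBall (0 : Y) (L * (‖q.1 - q'.1‖ + ‖q.2 - q'.2‖))

/-- `G : X ⇒ Y` is metrically regular around `(xb, zb)` with constant `m`. -/
def MetRegAround {X Y : Type*} [NormedAddCommGroup X] [NormedAddCommGroup Y]
    (G : X → Set Y) (xb : X) (zb : Y) (m : ℝ) : Prop :=
  ∃ U ∈ 𝓝 xb, ∃ V ∈ 𝓝 zb, ∀ x ∈ U, ∀ y ∈ V,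
    EMetric.infEdist x {u : X | y ∈ G u} ≤ ENNReal.ofReal m * EMetric.infEdist y (G x)

lemma iterAux {X Y : Type*} [NormedAddCommGroup X] [NormedSpace ℝ X] [CompleteSpace X]
    [NormedAddCommGroup Y] [NormedSpace ℝ Y] [CompleteSpace Y]
    (H : X → Set Y) (G : X → Set Y) (xb : X) (yb : Y) (r : ℝ)
    (hHcl : IsClosed {q : X × Y | q.2 ∈ H q.1})
    (hGcl : IsClosed {q : X × Y | q.2 ∈ G q.1})
    (L m eps : ℝ) (hL : 0 < L) (hm : 0 < m) (heps : 0 < eps)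
    (hs1 : L * m * (1 + eps) < 1)
    (hreg : ∀ x ∈ ball xb r, ∀ y ∈ ball (-yb) r,
      EMetric.infEdist x {u : X | y ∈ G u} ≤ ENNReal.ofReal m * EMetric.infEdist y (G x))
    (hlip : ∀ x ∈ ball xb r, ∀ x' ∈ ball xb r,
      H x ∩ ball yb r ⊆ H x' + Metric.closedBall (0 : Y) (L * ‖x - x'‖))
    (x₀ : X) (y₀ z₀ : Y) (hy₀ : y₀ ∈ H x₀) (hz₀ : z₀ ∈ G x₀)
    (hw : 0 < ‖y₀ + z₀‖)
    (hx₀b : ‖x₀ - xb‖ + m * (1 + eps) * ‖y₀ + z₀‖ / (1 - L * m * (1 + eps)) < r)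
    (hy₀b : ‖y₀ - yb‖ + L * m * (1 + eps) * ‖y₀ + z₀‖ / (1 - L * m * (1 + eps)) < r) :
    ∃ xs : X, (0 : Y) ∈ H xs + G xs ∧
      ‖x₀ - xs‖ ≤ m * (1 + eps) * ‖y₀ + z₀‖ / (1 - L * m * (1 + eps)) := by
  set s : ℝ := L * m * (1 + eps) with hs_def
  set nw : ℝ := ‖y₀ + z₀‖ with hnw_def
  have hs0 : 0 < s := by positivity
  have hs1' : 0 < 1 - s := by linarith
  set Kx : ℝ := m * (1 + eps) * nw / (1 - s) with hKx_def
  set Ky : ℝ := s * nw / (1 - s) with hKy_def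
  have hKx0 : 0 ≤ Kx := by positivity
  have hKy0 : 0 ≤ Ky := by positivity
  have hKxeq : Kx * (1 - s) = m * (1 + eps) * nw := div_mul_cancel₀ _ hs1'.ne'
  have hKyeq : Ky * (1 - s) = s * nw := div_mul_cancel₀ _ hs1'.ne'
  have hsval : s = L * m * (1 + eps) := hs_def
  clear_value s nw Kx Ky
  set Inv : ℕ → X × Y → Prop := fun n a =>
    a.2 ∈ H a.1 ∧ EMetric.infEdist (-a.2) (G a.1) ≤ ENNReal.ofReal (s ^ n * nw) ∧
    ‖a.1 - x₀‖ ≤ Kx * (1 - s ^ n) ∧ ‖a.2 - y₀‖ ≤ Ky * (1 - s ^ n) with hInv_def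
  have base : Inv 0 (x₀, y₀) := by
    refine ⟨hy₀, ?_, by norm_num, by norm_num⟩
    have h1 : EMetric.infEdist (-y₀) (G x₀) ≤ edist (-y₀) z₀ :=
      EMetric.infEdist_le_edist_of_mem hz₀
    have h2 : edist (-y₀) z₀ = ENNReal.ofReal (s ^ 0 * nw) := by
      rw [edist_dist, dist_eq_norm]
      congr 1
      rw [pow_zero, one_mul, hnw_def]
      rw [show -y₀ - z₀ = -(y₀ + z₀) by abel, norm_neg]
    exact h2 ▸ h1
  have step : ∀ n : ℕ, ∀ a : X × Y, Inv n a → ∃ b : X × Y, Inv (n + 1) b ∧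
      ‖b.1 - a.1‖ ≤ m * (1 + eps) * nw * s ^ n ∧ ‖b.2 - a.2‖ ≤ s * nw * s ^ n := by
    intro n ⟨ax, ay⟩ ⟨h1, h2, h3, h4⟩
    simp only at h1 h2 h3 h4
    have hsn0 : 0 < s ^ n := pow_pos hs0 n
    have hsn1 : s ^ n ≤ 1 := pow_le_one₀ hs0.le hs1.le
    have han : 0 < s ^ n * nw := by positivity
    have haxb : ‖ax - xb‖ < r := by
      calc ‖ax - xb‖ ≤ ‖ax - x₀‖ + ‖x₀ - xb‖ := norm_sub_le_norm_sub_add_norm_sub _ _ _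
        _ < r := by nlinarith
    have haxball : ax ∈ ball xb r := by rwa [mem_ball, dist_eq_norm]
    have hayb : ‖ay - yb‖ < r := by
      calc ‖ay - yb‖ ≤ ‖ay - y₀‖ + ‖y₀ - yb‖ := norm_sub_le_norm_sub_add_norm_sub _ _ _
        _ < r := by nlinarith
    have hayball : -ay ∈ ball (-yb) r := by
      rw [mem_ball, dist_eq_norm, show -ay - -yb = -(ay - yb) by abel, norm_neg]
      exact hayb
    have hlt : EMetric.infEdist ax {u : X | -ay ∈ G u} <
        ENNReal.ofReal (m * (1 + eps) * (s ^ n * nw)) := by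
      calc EMetric.infEdist ax {u : X | -ay ∈ G u}
          ≤ ENNReal.ofReal m * EMetric.infEdist (-ay) (G ax) := hreg ax haxball (-ay) hayball
        _ ≤ ENNReal.ofReal m * ENNReal.ofReal (s ^ n * nw) := by gcongr
        _ = ENNReal.ofReal (m * (s ^ n * nw)) := (ENNReal.ofReal_mul hm.le).symm
        _ < ENNReal.ofReal (m * (1 + eps) * (s ^ n * nw)) := by
            rw [ENNReal.ofReal_lt_ofReal_iff (mul_pos (by positivity) han)]
            nlinarith [mul_pos (mul_pos hm heps) han]
    obtain ⟨x', hx'G, hx'd⟩ := EMetric.infEdist_lt_iff.mp hlt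
    have hx'G : -ay ∈ G x' := hx'G
    have hx'dist : ‖x' - ax‖ ≤ m * (1 + eps) * (s ^ n * nw) := by
      have := edist_lt_ofReal.mp hx'd
      rw [dist_comm, dist_eq_norm] at this
      exact this.le
    have hx'x₀ : ‖x' - x₀‖ ≤ Kx * (1 - s ^ (n + 1)) := by
      calc ‖x' - x₀‖ ≤ ‖x' - ax‖ + ‖ax - x₀‖ := norm_sub_le_norm_sub_add_norm_sub _ _ _
        _ ≤ m * (1 + eps) * (s ^ n * nw) + Kx * (1 - s ^ n) := by linarith
        _ = Kx * (1 - s ^ (n + 1)) := by rw [pow_succ]; linear_combination (-(s ^ n)) * hKxeq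
    have hx'ball : x' ∈ ball xb r := by
      rw [mem_ball, dist_eq_norm]
      calc ‖x' - xb‖ ≤ ‖x' - x₀‖ + ‖x₀ - xb‖ := norm_sub_le_norm_sub_add_norm_sub _ _ _
        _ < r := by nlinarith [pow_pos hs0 (n + 1), pow_le_one₀ hs0.le hs1.le (n := n + 1)]
    have hmem : ay ∈ H x' + Metric.closedBall (0 : Y) (L * ‖ax - x'‖) :=
      hlip ax haxball x' hx'ball ⟨h1, by rwa [mem_ball, dist_eq_norm]⟩
    rw [Set.mem_add] at hmem
    obtain ⟨y', hy'H, e, he, hsum⟩ := hmem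
    have hy'ay : ‖y' - ay‖ ≤ s ^ (n + 1) * nw := by
      have h1' : ‖e‖ ≤ L * ‖ax - x'‖ := by rwa [mem_closedBall_zero_iff] at he
      have h2' : y' - ay = -e := by rw [← hsum]; abel
      rw [h2', norm_neg]
      calc ‖e‖ ≤ L * ‖ax - x'‖ := h1'
        _ = L * ‖x' - ax‖ := by rw [norm_sub_rev]
        _ ≤ L * (m * (1 + eps) * (s ^ n * nw)) := mul_le_mul_of_nonneg_left hx'dist hL.le
        _ = s ^ (n + 1) * nw := by rw [pow_succ, hsval]; ring
    refine ⟨(x', y'), ⟨hy'H, ?_, hx'x₀, ?_⟩, ?_, ?_⟩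
    · calc EMetric.infEdist (-y') (G x') ≤ edist (-y') (-ay) :=
            EMetric.infEdist_le_edist_of_mem hx'G
        _ = ENNReal.ofReal ‖y' - ay‖ := by
            rw [edist_dist, dist_eq_norm, show -y' - -ay = -(y' - ay) by abel, norm_neg]
        _ ≤ ENNReal.ofReal (s ^ (n + 1) * nw) := ENNReal.ofReal_le_ofReal hy'ay
    · calc ‖y' - y₀‖ ≤ ‖y' - ay‖ + ‖ay - y₀‖ := norm_sub_le_norm_sub_add_norm_sub _ _ _
        _ ≤ s ^ (n + 1) * nw + Ky * (1 - s ^ n) := by linarith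
        _ = Ky * (1 - s ^ (n + 1)) := by rw [pow_succ]; linear_combination (-(s ^ n)) * hKyeq
    · simpa using hx'dist.trans (le_of_eq (by ring))
    · simpa using hy'ay.trans (le_of_eq (by rw [pow_succ]; ring))
  choose f hfInv hfx hfy using step
  let u : ∀ n : ℕ, {a : X × Y // Inv n a} := fun n =>
    Nat.rec ⟨(x₀, y₀), base⟩ (fun k ih => ⟨f k ih.1 ih.2, hfInv k ih.1 ih.2⟩) n
  have hu0 : (u 0).1 = (x₀, y₀) := rfl
  have husucc : ∀ n, (u (n + 1)).1 = f n (u n).1 (u n).2 := fun n => rfl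
  have huInv : ∀ n, Inv n (u n).1 := fun n => (u n).2
  have hux : ∀ n, ‖(u (n + 1)).1.1 - (u n).1.1‖ ≤ m * (1 + eps) * nw * s ^ n := by
    intro n; rw [husucc n]; exact hfx n (u n).1 (u n).2
  have huy : ∀ n, ‖(u (n + 1)).1.2 - (u n).1.2‖ ≤ s * nw * s ^ n := by
    intro n; rw [husucc n]; exact hfy n (u n).1 (u n).2
  set xs' : ℕ → X := fun n => (u n).1.1 with hxs'_def
  set ys' : ℕ → Y := fun n => (u n).1.2 with hys'_def
  have hxc : CauchySeq xs' := by
    apply cauchySeq_of_le_geometric s (m * (1 + eps) * nw) hs1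
    intro n; rw [dist_eq_norm, norm_sub_rev]; exact hux n
  have hyc : CauchySeq ys' := by
    apply cauchySeq_of_le_geometric s (s * nw) hs1
    intro n; rw [dist_eq_norm, norm_sub_rev]; exact huy n
  obtain ⟨xl, hxl⟩ := cauchySeq_tendsto_of_complete hxc
  obtain ⟨yl, hyl⟩ := cauchySeq_tendsto_of_complete hyc
  -- y limit is in H xl
  have hylH : yl ∈ H xl := by
    have : ∀ n, (xs' n, ys' n) ∈ {q : X × Y | q.2 ∈ H q.1} := fun n => (huInv n).1
    exact hHcl.mem_of_tendsto (hxl.prodMk_nhds hyl) (Eventually.of_forall this)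
  -- -yl ∈ G xl
  have hzlG : -yl ∈ G xl := by
    have hz : ∀ n, ∃ z ∈ G (xs' n), edist (-(ys' n)) z < ENNReal.ofReal (2 * (s ^ n * nw)) := by
      intro n
      apply EMetric.infEdist_lt_iff.mp
      calc EMetric.infEdist (-(ys' n)) (G (xs' n)) ≤ ENNReal.ofReal (s ^ n * nw) :=
            (huInv n).2.1
        _ < ENNReal.ofReal (2 * (s ^ n * nw)) := by
            have h0 : 0 < s ^ n * nw := mul_pos (pow_pos hs0 n) hw
            rw [ENNReal.ofReal_lt_ofReal_iff (by linarith)]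
            linarith
    choose z hzG hzd using hz
    have hzt : Tendsto z atTop (𝓝 (-yl)) := by
      have h1 : Tendsto (fun n => -(ys' n)) atTop (𝓝 (-yl)) := hyl.neg
      have hle : ∀ n, dist (z n) (-(ys' n)) ≤ 2 * (s ^ n * nw) := by
        intro n
        have := edist_lt_ofReal.mp (hzd n)
        rw [dist_comm]
        exact this.le
      have hlim : Tendsto (fun n : ℕ => 2 * (s ^ n * nw)) atTop (𝓝 0) := by
        have : Tendsto (fun n : ℕ => 2 * (s ^ n * nw)) atTop (𝓝 (2 * (0 * nw))) :=
          tendsto_const_nhds.mul ((tendsto_pow_atTop_nhds_zero_of_lt_one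
            hs0.le hs1).mul tendsto_const_nhds)
        simpa using this
      have h2 : Tendsto (fun n => dist (z n) (-(ys' n))) atTop (𝓝 0) :=
        squeeze_zero (fun n => dist_nonneg) hle hlim
      exact h1.congr_dist (by simpa [dist_comm] using h2)
    have : ∀ n, (xs' n, z n) ∈ {q : X × Y | q.2 ∈ G q.1} := fun n => hzG n
    exact hGcl.mem_of_tendsto (hxl.prodMk_nhds hzt) (Eventually.of_forall this)
  refine ⟨xl, ?_, ?_⟩
  · rw [Set.mem_add]
    exact ⟨yl, hylH, -yl, hzlG, add_neg_cancel yl⟩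
  · have := dist_le_of_le_geometric_of_tendsto₀ s (m * (1 + eps) * nw) hs1
      (fun n => by rw [dist_eq_norm, norm_sub_rev]; exact hux n) hxl
    rw [show xs' 0 = x₀ from rfl, dist_eq_norm] at this
    rw [hKx_def] at *
    exact this

/-- Lipschitz-like property of the solution map of the variational
system `0 ∈ F(x,p) + G(x)`. -/
theorem stmt14 {X Y P : Type*}
    [NormedAddCommGroup X] [NormedSpace ℝ X] [CompleteSpace X]
    [NormedAddCommGroup Y] [NormedSpace ℝ Y] [CompleteSpace Y]
    [NormedAddCommGroup P] [NormedSpace ℝ P] [CompleteSpace P]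
    (F : X × P → Set Y) (G : X → Set Y) (xb : X) (pb : P) (yb : Y)
    (hybF : yb ∈ F (xb, pb)) (hybG : -yb ∈ G xb)
    (S : P → Set X) (hS : ∀ p, S p = {x : X | (0 : Y) ∈ F (x, p) + G x})
    -- (i) local sum-stability
    (hsum : LocSumStableP F G xb pb yb (-yb))
    -- (ii) closedness of the graphs of F(·,p) for p near pb
    (hFcl : ∃ N ∈ 𝓝 pb, ∀ p ∈ N, IsClosed {q : X × Y | q.2 ∈ F (q.1, p)})
    -- (iii) closedness of Gr G
    (hGcl : IsClosed {q : X × Y | q.2 ∈ G q.1})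
    (L : ℝ) (hL : 0 < L)
    -- (iv) F is Lipschitz-like around ((xb,pb), yb)
    (hFlip : LipschitzLikeAroundP F xb pb yb L)
    (m : ℝ) (hm : 0 < m)
    -- (v) G is metrically regular around (xb, -yb)
    (hGreg : MetRegAround G xb (-yb) m)
    -- (vi) G is inner semicontinuous at (xb, -yb)
    (hGisc : InnerSemicontinuousAt G xb (-yb))
    -- (vii)
    (hLm : L * m < 1) :
    (∃ τ > (0 : ℝ), ∃ t > (0 : ℝ), ∀ x ∈ ball xb τ, ∀ p ∈ ball pb t,
      EMetric.infEdist x (S p) ≤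
        ENNReal.ofReal (m * (1 - L * m)⁻¹) * EMetric.infEdist 0 (F (x, p) + G x)) ∧
    (∃ V ∈ 𝓝 pb, ∃ U ∈ 𝓝 xb, ∀ p₁ ∈ V, ∀ p₂ ∈ V, ∀ x ∈ S p₁ ∩ U,
      EMetric.infEdist x (S p₂) ≤
        ENNReal.ofReal (m * L * (1 - L * m)⁻¹ * ‖p₁ - p₂‖)) ∧
    (∀ lam : ℝ, m * L / (1 - L * m) < lam → LipschitzLikeAround S pb xb lam) := by
  have hLm' : 0 < L * m := mul_pos hL hm
  have h1Lm : 0 < 1 - L * m := by linarith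
  set kap : ℝ := m * (1 - L * m)⁻¹ with hkap_def
  have hkap_pos : 0 < kap := by rw [hkap_def]; positivity
  have hkapeq : kap * (1 - L * m) = m := by
    rw [hkap_def, mul_assoc, inv_mul_cancel₀ h1Lm.ne', mul_one]
  set eps0 : ℝ := (1 - L * m) / (2 * (L * m)) with heps0_def
  have heps0 : 0 < eps0 := by rw [heps0_def]; positivity
  have hs0eq : L * m * (1 + eps0) = L * m + (1 - L * m) / 2 := by
    rw [heps0_def]; field_simp
  set s0 : ℝ := L * m * (1 + eps0) with hs0_def
  have hs0pos : 0 < s0 := by rw [hs0_def]; positivity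
  have hs0lt : s0 < 1 := by rw [hs0eq]; linarith
  have h1s0 : 0 < 1 - s0 := by linarith
  set B1 : ℝ := m * (1 + eps0) / (1 - s0) with hB1_def
  set B2 : ℝ := s0 / (1 - s0) with hB2_def
  have hB1pos : 0 < B1 := by rw [hB1_def]; positivity
  have hB2pos : 0 < B2 := by rw [hB2_def]; positivity
  obtain ⟨UF, hUF, W, hW, hlipF⟩ := hFlip
  obtain ⟨UG, hUG, VG, hVG, hregG⟩ := hGreg
  obtain ⟨N, hN, hNcl⟩ := hFcl
  obtain ⟨r1, hr1, hr1s⟩ := Metric.mem_nhds_iff.mp hUF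
  obtain ⟨r2, hr2, hr2s⟩ := Metric.mem_nhds_iff.mp hW
  obtain ⟨r3, hr3, hr3s⟩ := Metric.mem_nhds_iff.mp hUG
  obtain ⟨r4, hr4, hr4s⟩ := Metric.mem_nhds_iff.mp hVG
  obtain ⟨r5, hr5, hr5s⟩ := Metric.mem_nhds_iff.mp hN
  set r : ℝ := min r1 (min r2 (min r3 (min r4 r5))) with hr_def
  have hr : 0 < r := lt_min hr1 (lt_min hr2 (lt_min hr3 (lt_min hr4 hr5)))
  have hrr1 : r ≤ r1 := min_le_left _ _
  have hrr2 : r ≤ r2 := le_trans (min_le_right _ _) (min_le_left _ _)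
  have hrr3 : r ≤ r3 :=
    le_trans (min_le_right _ _) (le_trans (min_le_right _ _) (min_le_left _ _))
  have hrr4 : r ≤ r4 := le_trans (min_le_right _ _) (le_trans (min_le_right _ _)
    (le_trans (min_le_right _ _) (min_le_left _ _)))
  have hrr5 : r ≤ r5 := le_trans (min_le_right _ _) (le_trans (min_le_right _ _)
    (le_trans (min_le_right _ _) (min_le_right _ _)))
  have hUF' : ∀ x : X, ∀ p' : P, dist x xb < r → dist p' pb < r → (x, p') ∈ UF := by
    intro x p' h1 h2
    apply hr1s
    rw [mem_ball, Prod.dist_eq]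
    exact max_lt (lt_of_lt_of_le h1 hrr1) (lt_of_lt_of_le h2 hrr1)
  have hW' : ∀ y : Y, dist y yb < r → y ∈ W := fun y h =>
    hr2s (mem_ball.mpr (lt_of_lt_of_le h hrr2))
  have hUG' : ∀ x : X, dist x xb < r → x ∈ UG := fun x h =>
    hr3s (mem_ball.mpr (lt_of_lt_of_le h hrr3))
  have hVG' : ∀ y : Y, dist y (-yb) < r → y ∈ VG := fun y h =>
    hr4s (mem_ball.mpr (lt_of_lt_of_le h hrr4))
  have hN' : ∀ p : P, dist p pb < r → p ∈ N := fun p h =>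
    hr5s (mem_ball.mpr (lt_of_lt_of_le h hrr5))
  obtain ⟨δ0, hδ0, hstab⟩ := hsum (r / 4) (by positivity)
  set beta : ℝ := min (δ0 / 2) (r / (4 * (B1 + B2 + 1))) with hbeta_def
  have hbeta : 0 < beta := lt_min (by positivity) (by positivity)
  have hbeta_δ : beta ≤ δ0 / 2 := min_le_left _ _
  have hbeta_r : beta ≤ r / (4 * (B1 + B2 + 1)) := min_le_right _ _
  have hBbeta : (B1 + B2) * beta ≤ r / 4 := by
    have h2 : (B1 + B2) * beta ≤ (B1 + B2) * (r / (4 * (B1 + B2 + 1))) :=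
      mul_le_mul_of_nonneg_left hbeta_r (by positivity)
    have h3 : (B1 + B2) * (r / (4 * (B1 + B2 + 1))) ≤ r / 4 := by
      rw [mul_div_assoc', div_le_div_iff₀ (by positivity) (by norm_num)]
      linarith only [hr.le]
    linarith
  obtain ⟨U', hU', hU's⟩ := hGisc (ball (-yb) (beta / 4)) isOpen_ball
    (mem_ball_self (by positivity))
  obtain ⟨ρ, hρ, hρs⟩ := Metric.mem_nhds_iff.mp hU'
  set τ : ℝ := min (min (δ0 / 2) (r / 4)) (min (beta / (8 * L)) ρ) with hτ_def
  set t : ℝ := min (min (δ0 / 2) (r / 4)) (beta / (8 * L)) with ht_def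
  have hτ : 0 < τ :=
    lt_min (lt_min (by positivity) (by positivity)) (lt_min (by positivity) hρ)
  have ht : 0 < t := lt_min (lt_min (by positivity) (by positivity)) (by positivity)
  have hτδ : τ ≤ δ0 / 2 := le_trans (min_le_left _ _) (min_le_left _ _)
  have hτr : τ ≤ r / 4 := le_trans (min_le_left _ _) (min_le_right _ _)
  have hτβ : τ ≤ beta / (8 * L) := le_trans (min_le_right _ _) (min_le_left _ _)
  have hτρ : τ ≤ ρ := le_trans (min_le_right _ _) (min_le_right _ _)
  have htδ : t ≤ δ0 / 2 := le_trans (min_le_left _ _) (min_le_left _ _)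
  have htr : t ≤ r / 4 := le_trans (min_le_left _ _) (min_le_right _ _)
  have htβ : t ≤ beta / (8 * L) := min_le_right _ _
  have hLτ : L * τ ≤ beta / 8 := by
    rw [le_div_iff₀ (by positivity : (0:ℝ) < 8 * L)] at hτβ
    linarith only [hτβ]
  have hLt : L * t ≤ beta / 8 := by
    rw [le_div_iff₀ (by positivity : (0:ℝ) < 8 * L)] at htβ
    linarith only [htβ]
  -- small element of F(x,p) + G(x) near 0
  have hsmall : ∀ x : X, dist x xb < τ → ∀ p : P, dist p pb < t →
      ∃ w ∈ F (x, p) + G x, ‖w‖ ≤ beta / 2 := by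
    intro x hx p hp
    obtain ⟨z, hzG, hzb⟩ := hU's x (hρs (mem_ball.mpr (lt_of_lt_of_le hx hτρ)))
    have h1 : yb ∈ F (x, p) + closedBall (0 : Y) (L * (‖xb - x‖ + ‖pb - p‖)) := by
      have h := hlipF (xb, pb) (hUF' xb pb (by simpa using hr) (by simpa using hr)) (x, p)
        (hUF' x p (by linarith) (by linarith)) ⟨hybF, hW' yb (by simpa using hr)⟩
      exact h
    obtain ⟨y, hyF, e, he, hye⟩ := Set.mem_add.mp h1
    refine ⟨y + z, Set.mem_add.mpr ⟨y, hyF, z, hzG, rfl⟩, ?_⟩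
    have h2 : ‖y - yb‖ ≤ beta / 4 := by
      have h2a : y - yb = -e := by rw [← hye]; abel
      rw [h2a, norm_neg]
      have h2b : ‖e‖ ≤ L * (‖xb - x‖ + ‖pb - p‖) := mem_closedBall_zero_iff.mp he
      have h2c : ‖xb - x‖ < τ := by rw [norm_sub_rev, ← dist_eq_norm]; exact hx
      have h2d : ‖pb - p‖ < t := by rw [norm_sub_rev, ← dist_eq_norm]; exact hp
      linarith only [h2b, mul_le_mul_of_nonneg_left (add_le_add h2c.le h2d.le) hL.le,
        hLτ, hLt]
    have h3 : ‖yb + z‖ < beta / 4 := by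
      have h3a := mem_ball.mp hzb
      rw [dist_eq_norm] at h3a
      rw [show yb + z = z - -yb by abel]
      exact h3a
    calc ‖y + z‖ = ‖(y - yb) + (yb + z)‖ := by rw [show (y - yb) + (yb + z) = y + z by abel]
      _ ≤ ‖y - yb‖ + ‖yb + z‖ := norm_add_le _ _
      _ ≤ beta / 2 := by linarith
  -- KEY PART (a)
  have keyA : ∀ x ∈ ball xb τ, ∀ p ∈ ball pb t,
      EMetric.infEdist x (S p) ≤
        ENNReal.ofReal kap * EMetric.infEdist 0 (F (x, p) + G x) := by
    intro x hx p hp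
    have hxτ : dist x xb < τ := mem_ball.mp hx
    have hpt : dist p pb < t := mem_ball.mp hp
    obtain ⟨w0, hw0mem, hw0⟩ := hsmall x hxτ p hpt
    have hBle : EMetric.infEdist 0 (F (x, p) + G x) ≤ ENNReal.ofReal (beta / 2) := by
      refine le_trans (EMetric.infEdist_le_edist_of_mem hw0mem) ?_
      rw [edist_dist, dist_zero_left]
      exact ENNReal.ofReal_le_ofReal hw0
    have hBne : EMetric.infEdist 0 (F (x, p) + G x) ≠ ⊤ :=
      (lt_of_le_of_lt hBle ENNReal.ofReal_lt_top).ne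
    set b : ℝ := (EMetric.infEdist 0 (F (x, p) + G x)).toReal with hb_def
    have hB' : EMetric.infEdist 0 (F (x, p) + G x) = ENNReal.ofReal b :=
      (ENNReal.ofReal_toReal hBne).symm
    have hb0 : 0 ≤ b := ENNReal.toReal_nonneg
    have hbbeta : b ≤ beta / 2 := by
      have h := ENNReal.toReal_mono ENNReal.ofReal_ne_top hBle
      rwa [ENNReal.toReal_ofReal (by positivity)] at h
    have core : ∀ c γ : ℝ, kap < c → b < γ → γ ≤ beta →
        EMetric.infEdist x (S p) ≤ ENNReal.ofReal (c * γ) := by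
      intro c γ hc hγ hγβ
      have hγ0 : 0 < γ := lt_of_le_of_lt hb0 hγ
      have hlt : EMetric.infEdist 0 (F (x, p) + G x) < ENNReal.ofReal γ := by
        rw [hB']; exact (ENNReal.ofReal_lt_ofReal_iff hγ0).mpr hγ
      obtain ⟨w, hwmem, hwd⟩ := EMetric.infEdist_lt_iff.mp hlt
      have hwγ : ‖w‖ < γ := by
        have h := edist_lt_ofReal.mp hwd
        rwa [dist_zero_left] at h
      rcases eq_or_lt_of_le (norm_nonneg w) with hw0' | hwpos
      · have hw0'' : w = 0 := by rw [← norm_eq_zero]; exact hw0'.symm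
        have hxS : x ∈ S p := by rw [hS]; rw [hw0''] at hwmem; exact hwmem
        rw [show EMetric.infEdist x (S p) = 0 from EMetric.infEdist_zero_of_mem hxS]
        exact zero_le
      · have hc0 : 0 < c := lt_trans hkap_pos hc
        have hd0 : 0 < m * (1 + c * L) := by positivity
        have hdc : m * (1 + c * L) < c := by
          linarith only [mul_lt_mul_of_pos_right hc h1Lm, hkapeq]
        set epsr : ℝ := (c / (m * (1 + c * L)) - 1) / 2 with hepsr_def
        have hepsr : 0 < epsr := by
          have h1 : 1 < c / (m * (1 + c * L)) := (one_lt_div hd0).mpr hdc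
          rw [hepsr_def]; linarith
        set eps : ℝ := min eps0 epsr with heps_def
        have heps : 0 < eps := lt_min heps0 hepsr
        have hepsle0 : eps ≤ eps0 := min_le_left _ _
        have hepsler : eps ≤ epsr := min_le_right _ _
        set s : ℝ := L * m * (1 + eps) with hs_def
        have hspos : 0 < s := by rw [hs_def]; positivity
        have hss0 : s ≤ s0 := by
          rw [hs_def, hs0_def]
          linarith only [mul_le_mul_of_nonneg_left hepsle0 hLm'.le]
        have hs1 : s < 1 := lt_of_le_of_lt hss0 hs0lt
        have h1s : 0 < 1 - s := by linarith
        have hkey : m * (1 + eps) < c * (1 - s) := by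
          have e2 : m * (1 + c * L) * (1 + epsr) = (m * (1 + c * L) + c) / 2 := by
            rw [hepsr_def]; field_simp; ring
          have e1 : m * (1 + eps) * (1 + c * L) ≤ m * (1 + c * L) * (1 + epsr) := by
            linarith only [mul_le_mul_of_nonneg_left hepsler hd0.le]
          rw [hs_def]
          linarith only [e1, e2, hdc]
        -- decompose w by sum-stability
        obtain ⟨y0, hy0, z0, hz0, hwyz⟩ := hstab x
          (mem_ball.mpr (by linarith : dist x xb < δ0))
          p (mem_ball.mpr (by linarith : dist p pb < δ0)) w
          ⟨hwmem, by
            simp only [add_neg_cancel, mem_ball, dist_zero_right]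
            linarith⟩
        have hHcl : IsClosed {q : X × Y | q.2 ∈ F (q.1, p)} :=
          hNcl p (hN' p (by linarith))
        have hregr : ∀ u ∈ ball xb r, ∀ v ∈ ball (-yb) r,
            EMetric.infEdist u {a : X | v ∈ G a} ≤
              ENNReal.ofReal m * EMetric.infEdist v (G u) := fun u hu v hv =>
          hregG u (hUG' u (mem_ball.mp hu)) v (hVG' v (mem_ball.mp hv))
        have hlipr : ∀ u ∈ ball xb r, ∀ u' ∈ ball xb r,
            F (u, p) ∩ ball yb r ⊆ F (u', p) + closedBall (0 : Y) (L * ‖u - u'‖) := by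
          intro u hu u' hu' v hv
          have hmem := hlipF (u, p) (hUF' u p (mem_ball.mp hu) (by linarith))
            (u', p) (hUF' u' p (mem_ball.mp hu') (by linarith))
            ⟨hv.1, hW' v (mem_ball.mp hv.2)⟩
          simpa using hmem
        have hnw : ‖y0 + z0‖ < beta := by rw [← hwyz]; linarith
        have hnw0 : 0 < ‖y0 + z0‖ := by rw [← hwyz]; exact hwpos
        have hfrac1 : m * (1 + eps) / (1 - s) ≤ B1 := by
          rw [hB1_def]
          exact div_le_div₀ (by positivity)
            (by linarith only [mul_le_mul_of_nonneg_left hepsle0 hm.le]) h1s0 (by linarith)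
        have hfrac2 : s / (1 - s) ≤ B2 := by
          rw [hB2_def]
          exact div_le_div₀ hs0pos.le hss0 h1s0 (by linarith)
        have hq1 : m * (1 + eps) * ‖y0 + z0‖ / (1 - s) ≤ B1 * beta := by
          have e : m * (1 + eps) * ‖y0 + z0‖ / (1 - s) =
              (m * (1 + eps) / (1 - s)) * ‖y0 + z0‖ := by ring
          rw [e]
          exact mul_le_mul hfrac1 hnw.le (norm_nonneg _) hB1pos.le
        have hq2 : s * ‖y0 + z0‖ / (1 - s) ≤ B2 * beta := by
          have e : s * ‖y0 + z0‖ / (1 - s) = (s / (1 - s)) * ‖y0 + z0‖ := by ring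
          rw [e]
          exact mul_le_mul hfrac2 hnw.le (norm_nonneg _) hB2pos.le
        have hxnorm : ‖x - xb‖ < τ := by rw [← dist_eq_norm]; exact hxτ
        have hynorm : ‖y0 - yb‖ < r / 4 := by
          rw [← dist_eq_norm]; exact mem_ball.mp hy0.2
        have hxb' : ‖x - xb‖ + m * (1 + eps) * ‖y0 + z0‖ / (1 - L * m * (1 + eps)) < r := by
          rw [← hs_def]
          linarith only [hxnorm, hτr, hq1, hBbeta, mul_nonneg hB2pos.le hbeta.le, hr]
        have hyb' : ‖y0 - yb‖ + L * m * (1 + eps) * ‖y0 + z0‖ / (1 - L * m * (1 + eps)) < r := by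
          rw [← hs_def]
          linarith only [hynorm, hq2, hBbeta, mul_nonneg hB1pos.le hbeta.le, hr]
        obtain ⟨xs, hxs0, hxsd⟩ := iterAux (fun u : X => F (u, p)) G xb yb r hHcl hGcl
          L m eps hL hm heps (by rw [← hs_def]; exact hs1) hregr hlipr x y0 z0
          hy0.1 hz0.1 hnw0 hxb' hyb'
        have hxsS : xs ∈ S p := by rw [hS]; exact hxs0
        refine le_trans (EMetric.infEdist_le_edist_of_mem hxsS) ?_
        rw [edist_dist, dist_eq_norm]
        apply ENNReal.ofReal_le_ofReal
        rw [← hs_def] at hxsd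
        have hb1 : m * (1 + eps) * ‖y0 + z0‖ / (1 - s) ≤ c * ‖y0 + z0‖ := by
          rw [div_le_iff₀ h1s]
          calc m * (1 + eps) * ‖y0 + z0‖ ≤ c * (1 - s) * ‖y0 + z0‖ :=
                mul_le_mul_of_nonneg_right hkey.le (norm_nonneg _)
            _ = c * ‖y0 + z0‖ * (1 - s) := by ring
        have hb2 : ‖y0 + z0‖ ≤ γ := by rw [← hwyz]; exact hwγ.le
        linarith only [hxsd, hb1, mul_le_mul_of_nonneg_left hb2 hc0.le]
    -- endgame: pass to the limit in the constant
    rw [hB', ← ENNReal.ofReal_mul hkap_pos.le]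
    apply ENNReal.le_of_forall_pos_le_add
    intro η hη _
    have hηR : 0 < (η : ℝ) := hη
    set ee : ℝ := min 1 ((η : ℝ) / (kap + beta + 1)) with hee_def
    have he0 : 0 < ee := lt_min one_pos (by positivity)
    have he1 : ee ≤ 1 := min_le_left _ _
    have he2 : ee * (kap + beta + 1) ≤ (η : ℝ) := by
      calc ee * (kap + beta + 1) ≤ ((η : ℝ) / (kap + beta + 1)) * (kap + beta + 1) :=
            mul_le_mul_of_nonneg_right (min_le_right _ _) (by positivity)
        _ = (η : ℝ) := div_mul_cancel₀ _ (by positivity)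
    have hcore := core (kap + ee) (min (b + ee) beta) (by linarith)
      (lt_min (by linarith) (by linarith)) (min_le_right _ _)
    refine le_trans hcore ?_
    have hmle : (kap + ee) * min (b + ee) beta ≤ kap * b + (η : ℝ) := by
      have h5 : (kap + ee) * min (b + ee) beta ≤ (kap + ee) * (b + ee) :=
        mul_le_mul_of_nonneg_left (min_le_left _ _) (by positivity)
      linarith only [h5, he2, mul_le_mul_of_nonneg_left
        (show b + ee ≤ beta + 1 by linarith only [hbbeta, hbeta, he1]) he0.le]
    calc ENNReal.ofReal ((kap + ee) * min (b + ee) beta)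
        ≤ ENNReal.ofReal (kap * b + (η : ℝ)) := ENNReal.ofReal_le_ofReal hmle
      _ ≤ ENNReal.ofReal (kap * b) + ENNReal.ofReal (η : ℝ) := ENNReal.ofReal_add_le
      _ = ENNReal.ofReal (kap * b) + (η : ℝ≥0∞) := by rw [ENNReal.ofReal_coe_nnreal]
  -- KEY PART (b)
  have keyB : ∀ p₁ ∈ ball pb t, ∀ p₂ ∈ ball pb t, ∀ x ∈ S p₁ ∩ ball xb τ,
      EMetric.infEdist x (S p₂) ≤
        ENNReal.ofReal (m * L * (1 - L * m)⁻¹ * ‖p₁ - p₂‖) := by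
    intro p₁ hp₁ p₂ hp₂ x hx
    obtain ⟨hxS, hxU⟩ := hx
    have hxτ : dist x xb < τ := mem_ball.mp hxU
    have hp₁t : dist p₁ pb < t := mem_ball.mp hp₁
    have hp₂t : dist p₂ pb < t := mem_ball.mp hp₂
    have h0 : (0 : Y) ∈ F (x, p₁) + G x := by rw [hS] at hxS; exact hxS
    obtain ⟨y0, hy0, z0, hz0, h0yz⟩ := hstab x
      (mem_ball.mpr (by linarith : dist x xb < δ0))
      p₁ (mem_ball.mpr (by linarith : dist p₁ pb < δ0)) 0
      ⟨h0, by simp only [add_neg_cancel, mem_ball, dist_self]; exact hδ0⟩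
    have hy0W : y0 ∈ W := by
      apply hW' y0
      have := mem_ball.mp hy0.2
      linarith
    have hlp := hlipF (x, p₁) (hUF' x p₁ (by linarith) (by linarith))
      (x, p₂) (hUF' x p₂ (by linarith) (by linarith)) ⟨hy0.1, hy0W⟩
    obtain ⟨y₂, hy₂F, e, he, hy₂e⟩ := Set.mem_add.mp hlp
    have hems : ‖e‖ ≤ L * ‖p₁ - p₂‖ := by
      have h := mem_closedBall_zero_iff.mp he
      simpa using h
    have hmem2 : y₂ + z0 ∈ F (x, p₂) + G x := Set.mem_add.mpr ⟨y₂, hy₂F, z0, hz0.1, rfl⟩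
    have hnorm2 : ‖y₂ + z0‖ ≤ L * ‖p₁ - p₂‖ := by
      have hz0y : z0 = -y0 := eq_neg_of_add_eq_zero_right h0yz.symm
      have h6 : y₂ + z0 = -e := by rw [hz0y, ← hy₂e]; abel
      rw [h6, norm_neg]; exact hems
    have hB2' : EMetric.infEdist 0 (F (x, p₂) + G x) ≤ ENNReal.ofReal (L * ‖p₁ - p₂‖) := by
      refine le_trans (EMetric.infEdist_le_edist_of_mem hmem2) ?_
      rw [edist_dist, dist_zero_left]
      exact ENNReal.ofReal_le_ofReal hnorm2
    calc EMetric.infEdist x (S p₂)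
        ≤ ENNReal.ofReal kap * EMetric.infEdist 0 (F (x, p₂) + G x) := keyA x hxU p₂ hp₂
      _ ≤ ENNReal.ofReal kap * ENNReal.ofReal (L * ‖p₁ - p₂‖) := by gcongr
      _ = ENNReal.ofReal (kap * (L * ‖p₁ - p₂‖)) := (ENNReal.ofReal_mul hkap_pos.le).symm
      _ = ENNReal.ofReal (m * L * (1 - L * m)⁻¹ * ‖p₁ - p₂‖) := by
          rw [hkap_def]; congr 1; ring
  refine ⟨⟨τ, hτ, t, ht, keyA⟩,
    ⟨ball pb t, ball_mem_nhds _ ht, ball xb τ, ball_mem_nhds _ hτ, keyB⟩, ?_⟩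
  -- KEY PART (c)
  intro lam hlam
  refine ⟨ball pb t, ball_mem_nhds _ ht, ball xb τ, ball_mem_nhds _ hτ, ?_⟩
  intro p hp q hq x hx
  by_cases hpq : p = q
  · subst hpq
    refine Set.mem_add.mpr ⟨x, hx.1, 0, ?_, add_zero x⟩
    simp
  · have hpq' : 0 < ‖p - q‖ := by
      rw [norm_pos_iff, sub_ne_zero]; exact hpq
    have hconst : m * L * (1 - L * m)⁻¹ < lam := by
      rw [div_eq_mul_inv] at hlam; exact hlam
    have hconst0 : 0 < m * L * (1 - L * m)⁻¹ := by positivity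
    have hlam0 : 0 < lam := lt_trans hconst0 hconst
    have hlt : EMetric.infEdist x (S q) < ENNReal.ofReal (lam * ‖p - q‖) := by
      refine lt_of_le_of_lt (keyB p hp q hq x hx) ?_
      rw [ENNReal.ofReal_lt_ofReal_iff (by positivity)]
      exact mul_lt_mul_of_pos_right hconst hpq'
    obtain ⟨u, huS, hud⟩ := EMetric.infEdist_lt_iff.mp hlt
    have hdu : dist x u < lam * ‖p - q‖ := edist_lt_ofReal.mp hud
    refine Set.mem_add.mpr ⟨u, huS, x - u, ?_, by abel⟩
    rw [mem_closedBall_zero_iff, ← dist_eq_norm]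
    exact hdu.le
end
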